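/- arXiv:1711.05527 — 2 statements merged into one kernel-verified Lean document; each statement's English description precedes it below -/
import Mathlib

section
/- Let T be any infinite, locally finite rooted tree. Then the function λ ↦ C(λ,T) is right continuous on (0, +∞). -/
open scoped Classical ENNReal
open Filter

/-- A rooted tree with vertex labels in `A`, modeled as a set of finite words over `A`
closed under taking initial segments. The root is the empty word `[]`, and the children
of a vertex `v` are the words `v ++ [a]` belonging to the tree. -/
structure RTree (A : Type*) where
  mem : Set (List A)
  root_mem : [] ∈ mem
  parent_mem : ∀ (v : List A) (a : A), v ++ [a] ∈ mem → v ∈ mem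

namespace RTree

variable {A : Type*}

/-- The tree is locally finite: every vertex has finitely many children. -/
def LocFin (T : RTree A) : Prop := ∀ v ∈ T.mem, {a : A | v ++ [a] ∈ T.mem}.Finite

/-- Number of children of a vertex. -/
noncomputable def numChildren (T : RTree A) (v : List A) : ℕ :=
  {a : A | v ++ [a] ∈ T.mem}.ncard

/-- Degree of a vertex (number of children, plus one for the parent except at the root). -/
noncomputable def degree (T : RTree A) (v : List A) : ℕ :=
  T.numChildren v + (if v = [] then 0 else 1)

/-- Number of vertices at generation `n`. -/
noncomputable def levelCard (T : RTree A) (n : ℕ) : ℕ :=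
  {v ∈ T.mem | v.length = n}.ncard

/-- The subtree of descendants of `y`, rooted at `y`. -/
def subtree (T : RTree A) (y : List A) : RTree A where
  mem := insert [] {l : List A | y ++ l ∈ T.mem}
  root_mem := Set.mem_insert _ _
  parent_mem := by
    intro v a hv
    rw [Set.mem_insert_iff] at hv
    rcases hv with h | h
    · exact absurd h (by simp)
    · exact Set.mem_insert_iff.mpr <| Or.inr <|
        T.parent_mem (y ++ v) a (by simpa [List.append_assoc] using h)

/-- One-step transition probabilities of the `λ`-biased random walk `RW_λ`:
from a non-root vertex with `k` children, move to the parent with probability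
`1/(1+kλ)` and to each child with probability `λ/(1+kλ)`; from the root, move
to each of its children with equal probability. -/
noncomputable def step (T : RTree A) (lam : ℝ) (x y : List A) : ℝ :=
  if x ∈ T.mem ∧ y ∈ T.mem then
    if ∃ a : A, y = x ++ [a] then
      if x = [] then 1 / (T.numChildren x : ℝ)
      else lam / (1 + (T.numChildren x : ℝ) * lam)
    else if x ≠ [] ∧ y = x.dropLast then 1 / (1 + (T.numChildren x : ℝ) * lam)
    else 0
  else 0

/-- Probability of a finite trajectory (product of one-step transition probabilities). -/
noncomputable def pathProb (T : RTree A) (lam : ℝ) : List (List A) → ℝ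
  | [] => 1
  | [_] => 1
  | x :: y :: r => T.step lam x y * pathProb T lam (y :: r)

/-- Probability that the walk started at the root satisfies the constraint `P i` at
every time `0 ≤ i ≤ M`. -/
noncomputable def cylProb (T : RTree A) (lam : ℝ) (M : ℕ) (P : ℕ → List A → Prop) : ℝ :=
  ∑' l : {l : List (List A) // l.length = M + 1 ∧ l.head? = some ([] : List A) ∧
      ∀ (i : ℕ) (h : i < l.length), P i (l.get ⟨i, h⟩)},
    T.pathProb lam l.1

/-- Probability that the walk started at the root never returns to the root
(the decreasing limit over `M` of the probabilities of no return up to time `M`). -/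
noncomputable def escProb (T : RTree A) (lam : ℝ) : ℝ :=
  ⨅ M : ℕ, T.cylProb lam M fun i v => i ≠ 0 → v ≠ []

/-- Probability that the walk started at the root moves to `y` at its first step and
never returns to the root. -/
noncomputable def escProbVia (T : RTree A) (lam : ℝ) (y : List A) : ℝ :=
  ⨅ M : ℕ, T.cylProb lam M fun i v => (i ≠ 0 → v ≠ []) ∧ (i = 1 → v = y)

/-- `RW_λ` is recurrent: started at the root, it returns to the root almost surely. -/
def Recurrent (T : RTree A) (lam : ℝ) : Prop := T.escProb lam = 0

/-- `RW_λ` is transient: started at the root, it fails to return with positive probability. -/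
def Transient (T : RTree A) (lam : ℝ) : Prop := 0 < T.escProb lam

/-- Effective conductance `C(λ,T) = λ·deg(o)·P(no return to the root)`. -/
noncomputable def conductance (T : RTree A) (lam : ℝ) : ℝ :=
  lam * (T.numChildren ([] : List A) : ℝ) * T.escProb lam

/-- Law of the limit walk: `phi T lam y` is the probability that the walk eventually
stays in the subtree above `y`, i.e. that the limit walk `ω_λ^∞` passes through `y`
(equivalently, `ω_λ^∞(i) = y.take i` for all `i ≤ y.length`). -/
noncomputable def phi (T : RTree A) (lam : ℝ) (y : List A) : ℝ :=
  ⨆ N : ℕ, ⨅ M : ℕ, T.cylProb lam (N + M) fun i v => N ≤ i → y <+: v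

/-- An infinite simple path from the root. -/
def IsRay (T : RTree A) (r : ℕ → List A) : Prop :=
  r 0 = [] ∧ ∀ n, r n ∈ T.mem ∧ ∃ a : A, r (n + 1) = r n ++ [a]

/-- An edge-cutset, each edge being recorded by its endpoint farther from the root:
every infinite simple path from the root uses one of these edges. -/
def IsECutset (T : RTree A) (c : Set (List A)) : Prop :=
  (∀ v ∈ c, v ∈ T.mem ∧ v ≠ []) ∧ ∀ r, T.IsRay r → ∃ n, r (n + 1) ∈ c

/-- A vertex-cutset: every infinite simple path from the root meets it. -/
def IsVCutset (T : RTree A) (c : Set (List A)) : Prop :=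
  (∀ v ∈ c, v ∈ T.mem) ∧ ∀ r, T.IsRay r → ∃ n, r n ∈ c

/-- The branching number `br(T) = sup {λ ≥ 1 : inf over cutsets c of Σ_{e∈c} λ^{-|e|} > 0}`. -/
noncomputable def br (T : RTree A) : ℝ :=
  sSup {lam : ℝ | 1 ≤ lam ∧
    0 < ⨅ (c : Set (List A)) (_ : T.IsECutset c),
      ∑' e : c, ENNReal.ofReal (lam⁻¹ ^ (e : List A).length)}

/-- The critical parameter `λ_c(T) = 1 / br(T)`. -/
noncomputable def lambdaC (T : RTree A) : ℝ := 1 / T.br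

/-- Spherically symmetric tree: the degree of a vertex depends only on its generation. -/
def SphSymm (T : RTree A) : Prop :=
  ∀ v ∈ T.mem, ∀ w ∈ T.mem, v.length = w.length → T.numChildren v = T.numChildren w

/-- Uniformly transient tree. -/
def UniformlyTransient (T : RTree A) : Prop :=
  ∀ lam : ℝ, T.lambdaC < lam → ∃ α > (0 : ℝ), ∀ v ∈ T.mem, α ≤ (T.subtree v).escProb lam

/-- Weakly uniformly transient tree. -/
def WeaklyUniformlyTransient (T : RTree A) : Prop :=
  ∃ c : ℕ → Set (List A),
    (∀ n, T.IsVCutset (c n) ∧ (c n).Finite) ∧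
    (Pairwise fun i j => Disjoint (c i) (c j)) ∧
    ∀ lam : ℝ, T.lambdaC < lam → ∃ α > (0 : ℝ), ∀ n, ∀ v ∈ c n, α ≤ (T.subtree v).escProb lam

/-- Vertices of the periodic tree `T^{∞,F}` obtained by repeatedly grafting a copy of
the finite tree `F` at every leaf: a word belongs to it iff it is a concatenation of
root-to-leaf words of `F` followed by a word of `F`. -/
inductive GraftMem (F : RTree A) : List A → Prop
  | base (v : List A) (hv : v ∈ F.mem) : GraftMem F v
  | graft (v w : List A) (hv : v ∈ F.mem) (hne : v ≠ []) (hleaf : F.numChildren v = 0)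
      (hw : GraftMem F w) : GraftMem F (v ++ w)

/-- The periodic tree `T^{∞,F}`. -/
def periodicTree (F : RTree A) : RTree A where
  mem := {l | GraftMem F l}
  root_mem := GraftMem.base [] F.root_mem
  parent_mem := by
    have H : ∀ l, GraftMem F l → ∀ (v : List A) (a : A), l = v ++ [a] → GraftMem F v := by
      intro l hl
      induction hl with
      | base v hv =>
          intro u a h
          subst h
          exact GraftMem.base u (F.parent_mem u a hv)
      | graft v w hv hne hleaf hw ih =>
          intro u a h
          rcases w.eq_nil_or_concat' with hwnil | ⟨w', b, hww⟩
          · subst hwnil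
            rw [List.append_nil] at h
            subst h
            exact GraftMem.base u (F.parent_mem u a hv)
          · subst hww
            rw [← List.append_assoc] at h
            have h2 := congrArg List.dropLast h
            simp only [List.dropLast_concat] at h2
            subst h2
            exact GraftMem.graft v w' hv hne hleaf (ih w' b rfl)
    exact fun v a hva => H (v ++ [a]) hva v a rfl

end RTree

/-- The class `A_m` of infinite, locally finite, spherically symmetric rooted trees
all of whose vertices have degree at most `m`. -/
def MemAm (m : ℕ) (T : RTree ℕ) : Prop :=
  T.mem.Infinite ∧ T.LocFin ∧ T.SphSymm ∧ ∀ v ∈ T.mem, T.degree v ≤ m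

/-- The set `F_m` of effective-conductance functions of trees in `A_m`. -/
def Fm (m : ℕ) : Set (ℝ → ℝ) :=
  {f | ContinuousOn f (Set.Icc 0 1) ∧
    ∃ T : RTree ℕ, MemAm m T ∧ ∀ lam ∈ Set.Ioc (0 : ℝ) 1, f lam = T.conductance lam}

namespace SAW

/-- Nearest-neighbour adjacency on `ℤ²`. -/
def Adj (x y : ℤ × ℤ) : Prop :=
  (x.1 = y.1 ∧ (x.2 = y.2 + 1 ∨ x.2 + 1 = y.2)) ∨
  (x.2 = y.2 ∧ (x.1 = y.1 + 1 ∨ x.1 + 1 = y.1))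

/-- `l` is the list of successive positions, after the origin, of a self-avoiding
walk starting at the origin and staying in the region `S`. -/
def SAWIn (S : Set (ℤ × ℤ)) (l : List (ℤ × ℤ)) : Prop :=
  List.Chain' Adj ((0, 0) :: l) ∧ ((0, 0) :: l).Nodup ∧ ∀ p ∈ l, p ∈ S

/-- The self-avoiding tree of the region `S`: its vertices are the finite
self-avoiding walks in `S` starting at the origin, two walks being adjacent when
one is a one-step extension of the other. -/
def sawTree (S : Set (ℤ × ℤ)) : RTree (ℤ × ℤ) where
  mem := {l | SAWIn S l}
  root_mem := by exact ⟨List.isChain_singleton _, List.nodup_singleton _, by simp⟩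
  parent_mem := by
    intro v a hv
    obtain ⟨h1, h2, h3⟩ := hv
    have hpre : ((0, 0) :: v) <+: ((0, 0) :: (v ++ [a])) := ⟨[a], by simp⟩
    refine ⟨?_, h2.sublist hpre.sublist, fun p hp => h3 p (by simp [hp])⟩
    have h1' : (((0, 0) :: v) ++ [a]).Chain' Adj := by simpa using h1
    exact (List.isChain_append.mp h1').1

/-- The upper half-plane `ℍ = ℤ × ℤ_{≥0}`. -/
def HH : Set (ℤ × ℤ) := {z | 0 ≤ z.2}

/-- The quadrant `ℚ = ℤ_{≥0} × ℤ_{≥0}`. -/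
def QQ : Set (ℤ × ℤ) := {z | 0 ≤ z.1 ∧ 0 ≤ z.2}

/-- Number of self-avoiding walks of length `n` in `ℤ²` starting at the origin. -/
noncomputable def cSAW (n : ℕ) : ℕ :=
  {l : List (ℤ × ℤ) | l.length = n ∧ SAWIn Set.univ l}.ncard

/-- The connective constant `μ = lim cₙ^{1/n}` of `ℤ²`; by Fekete's subadditive lemma
the limit exists and equals the infimum over `n ≥ 1` of `cₙ^{1/n}`. -/
noncomputable def mu : ℝ := ⨅ n : ℕ, (cSAW (n + 1) : ℝ) ^ (((n : ℝ) + 1)⁻¹)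

/-- Endpoint in `ℤ²` of the finite self-avoiding walk recorded by `l`. -/
def endpt (l : List (ℤ × ℤ)) : ℤ × ℤ := l.getLast?.getD (0, 0)

/-- `l` is a bridge of the horizontal strip `{z : 0 ≤ Im z ≤ ℓ}`: a self-avoiding
walk of the strip starting at the origin with `γ₁(0) < γ₁(i) ≤ γ₁(n)` for `1 ≤ i ≤ n`. -/
def IsStripBridge (width : ℕ) (l : List (ℤ × ℤ)) : Prop :=
  SAWIn {z : ℤ × ℤ | 0 ≤ z.2 ∧ z.2 ≤ (width : ℤ)} l ∧
  ∀ p ∈ l, 0 < p.1 ∧ p.1 ≤ (endpt l).1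

/-- `p^{(ℓ)}_n`, the number of `n`-step bridges of the strip of width `ℓ`. -/
noncomputable def stripBridgeCount (width n : ℕ) : ℕ :=
  {l : List (ℤ × ℤ) | l.length = n ∧ IsStripBridge width l}.ncard

end SAW

namespace CRC
open RTree

variable {A : Type*}

/-- children of `v` as a Finset -/
noncomputable def cFin (T : RTree A) (hlf : T.LocFin) (v : List A) : Finset A :=
  if h : v ∈ T.mem then (hlf v h).toFinset else ∅

lemma mem_cFin {T : RTree A} {hlf : T.LocFin} {v : List A} {a : A} :
    a ∈ cFin T hlf v ↔ v ∈ T.mem ∧ v ++ [a] ∈ T.mem := by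
  unfold cFin
  split_ifs with h
  · simp [Set.Finite.mem_toFinset, h]
  · simp [h]

lemma card_cFin {T : RTree A} (hlf : T.LocFin) {v : List A} (hv : v ∈ T.mem) :
    (cFin T hlf v).card = T.numChildren v := by
  unfold cFin numChildren
  rw [dif_pos hv, Set.ncard_eq_toFinset_card _ (hlf v hv)]

/-- neighbors of `v` (candidate support of `step`) -/
noncomputable def nbrF (T : RTree A) (hlf : T.LocFin) (v : List A) : Finset (List A) :=
  insert v.dropLast ((cFin T hlf v).image (fun a => v ++ [a]))

lemma step_eq_zero_of_not_mem_nbrF {T : RTree A} {hlf : T.LocFin} {lam : ℝ} {x y : List A}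
    (h : y ∉ nbrF T hlf x) : T.step lam x y = 0 := by
  unfold step
  split_ifs with h1 h2 h3 h4
  · exact absurd (Finset.mem_insert.mpr (Or.inr (Finset.mem_image.mpr
      ⟨Classical.choose h2, mem_cFin.mpr ⟨h1.1, by rw [← Classical.choose_spec h2]; exact h1.2⟩,
        (Classical.choose_spec h2).symm⟩))) h
  · exact absurd (Finset.mem_insert.mpr (Or.inr (Finset.mem_image.mpr
      ⟨Classical.choose h2, mem_cFin.mpr ⟨h1.1, by rw [← Classical.choose_spec h2]; exact h1.2⟩,
        (Classical.choose_spec h2).symm⟩))) h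
  · exact absurd (Finset.mem_insert.mpr (Or.inl h4.2)) h
  · rfl
  · rfl

lemma step_eq_zero_of_not_mem {T : RTree A} {lam : ℝ} {x y : List A}
    (h : x ∉ T.mem) : T.step lam x y = 0 := by
  unfold step
  rw [if_neg (fun hc => h hc.1)]

lemma one_add_mul_pos {k : ℕ} {lam : ℝ} (hlam : 0 < lam) : (0:ℝ) < 1 + (k:ℝ) * lam := by
  positivity

lemma step_nonneg {T : RTree A} {lam : ℝ} (hlam : 0 < lam) (x y : List A) :
    0 ≤ T.step lam x y := by
  unfold step
  have := one_add_mul_pos (k := T.numChildren x) hlam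
  split_ifs <;> positivity

end CRC
namespace CRC
open RTree

variable {A : Type*}

lemma summable_step_mul (T : RTree A) (hlf : T.LocFin) (lam : ℝ) (v : List A) (f : List A → ℝ) :
    Summable (fun y => T.step lam v y * f y) :=
  summable_of_ne_finset_zero (s := nbrF T hlf v) fun y hy => by
    rw [step_eq_zero_of_not_mem_nbrF hy, zero_mul]

lemma dropLast_not_append {v : List A} (hne : v ≠ []) (a : A) : v.dropLast ≠ v ++ [a] := by
  intro h
  have := congrArg List.length h
  rw [List.length_dropLast, List.length_append] at this
  have h1 : 1 ≤ v.length := List.length_pos_iff.mpr hne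
  omega

lemma parent_mem_of_ne {T : RTree A} {v : List A} (hv : v ∈ T.mem) (hne : v ≠ []) :
    v.dropLast ∈ T.mem := by
  refine T.parent_mem v.dropLast (v.getLast hne) ?_
  rw [List.dropLast_append_getLast hne]
  exact hv

lemma step_parent {T : RTree A} {lam : ℝ} {v : List A} (hv : v ∈ T.mem) (hne : v ≠ []) :
    T.step lam v v.dropLast = 1 / (1 + (T.numChildren v : ℝ) * lam) := by
  unfold step
  rw [if_pos ⟨hv, parent_mem_of_ne hv hne⟩,
    if_neg (fun ⟨a, ha⟩ => dropLast_not_append hne a ha), if_pos ⟨hne, rfl⟩]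

lemma step_child {T : RTree A} {lam : ℝ} {v : List A} {a : A} (hv : v ∈ T.mem)
    (hc : v ++ [a] ∈ T.mem) (hne : v ≠ []) :
    T.step lam v (v ++ [a]) = lam / (1 + (T.numChildren v : ℝ) * lam) := by
  unfold step
  rw [if_pos ⟨hv, hc⟩, if_pos ⟨a, rfl⟩, if_neg hne]

lemma step_child_root {T : RTree A} {lam : ℝ} {a : A} (hc : [a] ∈ T.mem) :
    T.step lam [] [a] = 1 / (T.numChildren ([] : List A) : ℝ) := by
  unfold step
  rw [if_pos ⟨T.root_mem, hc⟩, if_pos ⟨a, rfl⟩, if_pos rfl]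

lemma step_root_root {T : RTree A} {lam : ℝ} : T.step lam [] [] = 0 := by
  unfold step
  rw [if_pos ⟨T.root_mem, T.root_mem⟩, if_neg, if_neg]
  · simp
  · rintro ⟨a, ha⟩
    exact absurd (congrArg List.length ha) (by simp)

lemma tsum_step_mul (T : RTree A) (hlf : T.LocFin) {lam : ℝ} (hlam : 0 < lam)
    {v : List A} (hv : v ∈ T.mem) (hne : v ≠ []) (f : List A → ℝ) :
    ∑' y, T.step lam v y * f y
      = (f v.dropLast + lam * ∑ a ∈ cFin T hlf v, f (v ++ [a]))
          / (1 + (T.numChildren v : ℝ) * lam) := by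
  have hden := one_add_mul_pos (k := T.numChildren v) hlam
  have hden' : (1 + (T.numChildren v : ℝ) * lam) ≠ 0 := ne_of_gt hden
  rw [tsum_eq_sum (s := nbrF T hlf v) (fun y hy => by
    rw [step_eq_zero_of_not_mem_nbrF hy, zero_mul])]
  unfold nbrF
  rw [Finset.sum_insert (by
    rw [Finset.mem_image]
    rintro ⟨a, _, ha⟩
    exact dropLast_not_append hne a ha.symm)]
  rw [Finset.sum_image (fun a _ b _ h => by simpa using h)]
  rw [step_parent hv hne]
  rw [Finset.sum_congr rfl (fun a ha => by
    rw [step_child hv (mem_cFin.mp ha).2 hne])]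
  rw [show ∀ S : Finset A, ∑ a ∈ S, lam / (1 + (T.numChildren v : ℝ) * lam) * f (v ++ [a])
      = lam / (1 + (T.numChildren v : ℝ) * lam) * ∑ a ∈ S, f (v ++ [a])
    from fun S => (Finset.mul_sum _ _ _).symm]
  field_simp

lemma tsum_step_mul_root (T : RTree A) (hlf : T.LocFin) (lam : ℝ) (f : List A → ℝ) :
    ∑' y, T.step lam [] y * f y
      = (1 / (T.numChildren ([] : List A) : ℝ)) * ∑ a ∈ cFin T hlf [], f [a] := by
  rw [tsum_eq_sum (s := nbrF T hlf []) (fun y hy => by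
    rw [step_eq_zero_of_not_mem_nbrF hy, zero_mul])]
  unfold nbrF
  rw [show (List.dropLast ([] : List A)) = [] from rfl]
  rw [Finset.sum_insert (by
    rw [Finset.mem_image]
    rintro ⟨a, _, ha⟩
    exact absurd (congrArg List.length ha) (by simp))]
  rw [step_root_root, zero_mul, zero_add]
  rw [Finset.sum_image (fun a _ b _ h => by simpa using h)]
  rw [Finset.mul_sum]
  refine Finset.sum_congr rfl (fun a ha => ?_)
  rw [show ([] : List A) ++ [a] = [a] from rfl, step_child_root (by simpa using (mem_cFin.mp ha).2)]

lemma sum_step_eq_one (T : RTree A) (hlf : T.LocFin) {lam : ℝ} (hlam : 0 < lam)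
    {v : List A} (hv : v ∈ T.mem) (hne : v ≠ []) :
    ∑' y, T.step lam v y = 1 := by
  have := tsum_step_mul T hlf hlam hv hne (fun _ => 1)
  simp only [mul_one] at this
  rw [this, Finset.sum_const, card_cFin hlf hv, nsmul_eq_mul, mul_one]
  have hden := one_add_mul_pos (k := T.numChildren v) hlam
  field_simp

lemma sum_step_le_one (T : RTree A) (hlf : T.LocFin) {lam : ℝ} (hlam : 0 < lam)
    (v : List A) : ∑' y, T.step lam v y ≤ 1 := by
  by_cases hv : v ∈ T.mem
  · by_cases hne : v = []
    · subst hne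
      have := tsum_step_mul_root T hlf lam (fun _ => 1)
      simp only [mul_one] at this
      rw [this, Finset.sum_const, card_cFin hlf hv, nsmul_eq_mul, mul_one]
      rcases Nat.eq_zero_or_pos (T.numChildren ([] : List A)) with h0 | h0
      · simp [h0]
      · rw [one_div, inv_mul_cancel₀ (by positivity)]
    · exact le_of_eq (sum_step_eq_one T hlf hlam hv hne)
  · simp [step_eq_zero_of_not_mem (lam := lam) hv]

end CRC
namespace CRC
open RTree

variable {A : Type*}

lemma summable_step (T : RTree A) (hlf : T.LocFin) (lam : ℝ) (v : List A) :
    Summable (fun y => T.step lam v y) :=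
  summable_of_ne_finset_zero (s := nbrF T hlf v) fun y hy =>
    step_eq_zero_of_not_mem_nbrF hy

/-- survival probability: `u lam N v` = P_v(walk stays off the root for times 0..N) -/
noncomputable def u (T : RTree A) (lam : ℝ) : ℕ → List A → ℝ
  | 0, v => if v = [] then 0 else 1
  | N+1, v => if v = [] then 0 else ∑' y, T.step lam v y * u T lam N y

lemma u_zero (T : RTree A) (lam : ℝ) (v : List A) :
    u T lam 0 v = if v = [] then 0 else 1 := rfl

lemma u_succ (T : RTree A) (lam : ℝ) (N : ℕ) (v : List A) :
    u T lam (N+1) v = if v = [] then 0 else ∑' y, T.step lam v y * u T lam N y := rfl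

lemma u_nonneg (T : RTree A) {lam : ℝ} (hlam : 0 < lam) :
    ∀ N v, 0 ≤ u T lam N v := by
  intro N
  induction N with
  | zero => intro v; rw [u_zero]; split_ifs <;> norm_num
  | succ N ih =>
      intro v
      rw [u_succ]
      split_ifs with h
      · exact le_refl _
      · exact tsum_nonneg fun y => mul_nonneg (step_nonneg hlam v y) (ih y)

lemma u_le_one (T : RTree A) (hlf : T.LocFin) {lam : ℝ} (hlam : 0 < lam) :
    ∀ N v, u T lam N v ≤ 1 := by
  intro N
  induction N with
  | zero => intro v; rw [u_zero]; split_ifs <;> norm_num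
  | succ N ih =>
      intro v
      rw [u_succ]
      split_ifs with h
      · norm_num
      · calc ∑' y, T.step lam v y * u T lam N y
            ≤ ∑' y, T.step lam v y := by
              refine Summable.tsum_le_tsum (fun y => ?_) (summable_step_mul T hlf lam v _)
                (summable_step T hlf lam v)
              exact mul_le_of_le_one_right (step_nonneg hlam v y) (ih y)
          _ ≤ 1 := sum_step_le_one T hlf hlam v

lemma u_succ_le (T : RTree A) (hlf : T.LocFin) {lam : ℝ} (hlam : 0 < lam) :
    ∀ N v, u T lam (N+1) v ≤ u T lam N v := by
  intro N
  induction N with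
  | zero =>
      intro v
      rw [u_succ, u_zero]
      split_ifs with h
      · norm_num
      · calc ∑' y, T.step lam v y * u T lam 0 y
            ≤ ∑' y, T.step lam v y := by
              refine Summable.tsum_le_tsum (fun y => ?_) (summable_step_mul T hlf lam v _)
                (summable_step T hlf lam v)
              exact mul_le_of_le_one_right (step_nonneg hlam v y) (u_le_one T hlf hlam 0 y)
          _ ≤ 1 := sum_step_le_one T hlf hlam v
  | succ N ih =>
      intro v
      rw [u_succ, u_succ]
      split_ifs with h
      · exact le_refl _
      · refine Summable.tsum_le_tsum (fun y => ?_) (summable_step_mul T hlf lam v _)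
          (summable_step_mul T hlf lam v _)
        exact mul_le_mul_of_nonneg_left (ih y) (step_nonneg hlam v y)

lemma u_mono_time (T : RTree A) (hlf : T.LocFin) {lam : ℝ} (hlam : 0 < lam)
    {M N : ℕ} (h : M ≤ N) (v : List A) : u T lam N v ≤ u T lam M v := by
  induction N with
  | zero => rw [Nat.le_zero.mp h]
  | succ N ih =>
      rcases Nat.lt_or_ge M (N+1) with h' | h'
      · exact le_trans (u_succ_le T hlf hlam N v) (ih (Nat.lt_succ_iff.mp h'))
      · rw [le_antisymm h h']

/-- `e lam w t y` = P_y(first hitting time of `w` equals `t`) -/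
noncomputable def e (T : RTree A) (lam : ℝ) (w : List A) : ℕ → List A → ℝ
  | 0, y => if y = w then 1 else 0
  | t+1, y => if y = w then 0 else ∑' z, T.step lam y z * e T lam w t z

lemma e_zero (T : RTree A) (lam : ℝ) (w y : List A) :
    e T lam w 0 y = if y = w then 1 else 0 := rfl

lemma e_succ (T : RTree A) (lam : ℝ) (w : List A) (t : ℕ) (y : List A) :
    e T lam w (t+1) y = if y = w then 0 else ∑' z, T.step lam y z * e T lam w t z := rfl

lemma e_nonneg (T : RTree A) {lam : ℝ} (hlam : 0 < lam) (w : List A) :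
    ∀ t y, 0 ≤ e T lam w t y := by
  intro t
  induction t with
  | zero => intro y; rw [e_zero]; split_ifs <;> norm_num
  | succ t ih =>
      intro y
      rw [e_succ]
      split_ifs with h
      · exact le_refl _
      · exact tsum_nonneg fun z => mul_nonneg (step_nonneg hlam y z) (ih z)

lemma eSum_le_one (T : RTree A) (hlf : T.LocFin) {lam : ℝ} (hlam : 0 < lam) (w : List A) :
    ∀ N y, ∑ t ∈ Finset.range (N+1), e T lam w t y ≤ 1 := by
  intro N
  induction N with
  | zero =>
      intro y
      rw [Finset.sum_range_one, e_zero]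
      split_ifs <;> norm_num
  | succ N ih =>
      intro y
      rw [Finset.sum_range_succ']
      by_cases hy : y = w
      · subst hy
        simp [e_succ, e_zero]
      · simp only [e_succ, e_zero, if_neg hy, add_zero]
        have hswap : ∑ t ∈ Finset.range (N+1), ∑' z, T.step lam y z * e T lam w t z
            = ∑' z, ∑ t ∈ Finset.range (N+1), T.step lam y z * e T lam w t z :=
          (Summable.tsum_finsetSum (fun t _ => summable_step_mul T hlf lam y _)).symm
        rw [hswap]
        calc ∑' z, ∑ t ∈ Finset.range (N+1), T.step lam y z * e T lam w t z
            = ∑' z, T.step lam y z * ∑ t ∈ Finset.range (N+1), e T lam w t z := by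
              refine tsum_congr fun z => ?_
              rw [Finset.mul_sum]
          _ ≤ ∑' z, T.step lam y z := by
              refine Summable.tsum_le_tsum (fun z => ?_)
                (summable_step_mul T hlf lam y _) (summable_step T hlf lam y)
              exact mul_le_of_le_one_right (step_nonneg hlam y z) (ih z)
          _ ≤ 1 := sum_step_le_one T hlf hlam y

end CRC
namespace CRC
open RTree

variable {A : Type*}

lemma step_ne_zero_cases {T : RTree A} {lam : ℝ} {x z : List A} (h : T.step lam x z ≠ 0) :
    x ∈ T.mem ∧ z ∈ T.mem ∧ ((∃ a, z = x ++ [a]) ∨ (x ≠ [] ∧ z = x.dropLast)) := by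
  unfold step at h
  split_ifs at h with h1 h2 h3 h4
  · exact ⟨h1.1, h1.2, Or.inl h2⟩
  · exact ⟨h1.1, h1.2, Or.inl h2⟩
  · exact ⟨h1.1, h1.2, Or.inr h4⟩
  · exact absurd rfl h
  · exact absurd rfl h

lemma prefix_dropLast {v y : List A} (h : v <+: y) (hne : v ≠ y) : v <+: y.dropLast := by
  obtain ⟨t, rfl⟩ := h
  have ht : t ≠ [] := fun h' => hne (by simp [h'])
  rw [List.dropLast_append, if_neg (by simpa using ht)]
  exact ⟨t.dropLast, rfl⟩

lemma ne_nil_of_prefix {v y : List A} (h : v <+: y) (hne : v ≠ []) : y ≠ [] := by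
  rintro rfl
  exact hne (List.prefix_nil.mp h)

lemma u_identity (T : RTree A) (hlf : T.LocFin) {lam : ℝ} (hlam : 0 < lam)
    {v₀ : List A} (hv₀ : v₀ ∈ T.mem) (hne₀ : v₀ ≠ []) :
    ∀ N y, (y = v₀.dropLast ∨ (y ∈ T.mem ∧ v₀ <+: y)) →
      u T lam N y
        = (∑ t ∈ Finset.range (N+1), e T lam v₀.dropLast t y * u T lam (N - t) v₀.dropLast)
          + (1 - ∑ t ∈ Finset.range (N+1), e T lam v₀.dropLast t y) := by
  set w := v₀.dropLast with hw
  have hwcase : ∀ N, u T lam N w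
      = (∑ t ∈ Finset.range (N+1), e T lam w t w * u T lam (N - t) w)
        + (1 - ∑ t ∈ Finset.range (N+1), e T lam w t w) := by
    intro N
    have h1 : ∑ t ∈ Finset.range (N+1), e T lam w t w * u T lam (N - t) w
        = u T lam N w := by
      rw [Finset.sum_eq_single_of_mem 0 (Finset.mem_range.mpr (Nat.succ_pos N))]
      · rw [e_zero, if_pos rfl, one_mul, Nat.sub_zero]
      · intro t _ ht
        obtain ⟨s, rfl⟩ := Nat.exists_eq_succ_of_ne_zero ht
        rw [e_succ, if_pos rfl, zero_mul]
    have h2 : ∑ t ∈ Finset.range (N+1), e T lam w t w = 1 := by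
      rw [Finset.sum_eq_single_of_mem 0 (Finset.mem_range.mpr (Nat.succ_pos N))]
      · rw [e_zero, if_pos rfl]
      · intro t _ ht
        obtain ⟨s, rfl⟩ := Nat.exists_eq_succ_of_ne_zero ht
        rw [e_succ, if_pos rfl]
    rw [h1, h2, sub_self, add_zero]
  intro N
  induction N with
  | zero =>
      rintro y (rfl | ⟨hym, hpre⟩)
      · exact hwcase 0
      · by_cases hyw : y = w
        · rw [hyw]; exact hwcase 0
        · have hyne : y ≠ [] := ne_nil_of_prefix hpre hne₀
          rw [u_zero, if_neg hyne, Finset.sum_range_one, Finset.sum_range_one,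
            e_zero, if_neg hyw]
          ring
  | succ N ih =>
      rintro y (rfl | ⟨hym, hpre⟩)
      · exact hwcase (N+1)
      · by_cases hyw : y = w
        · rw [hyw]; exact hwcase (N+1)
        · have hyne : y ≠ [] := ne_nil_of_prefix hpre hne₀
          have hpt : ∀ z, T.step lam y z * u T lam N z = T.step lam y z *
              ((∑ t ∈ Finset.range (N+1), e T lam w t z * u T lam (N - t) w)
                + (1 - ∑ t ∈ Finset.range (N+1), e T lam w t z)) := by
            intro z
            by_cases hz : T.step lam y z = 0
            · rw [hz, zero_mul, zero_mul]
            · obtain ⟨hym', hzm, hcase⟩ := step_ne_zero_cases hz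
              have hzok : z = w ∨ (z ∈ T.mem ∧ v₀ <+: z) := by
                rcases hcase with ⟨a, rfl⟩ | ⟨hyne', rfl⟩
                · exact Or.inr ⟨hzm, hpre.trans (List.prefix_append y [a])⟩
                · by_cases hyv : y = v₀
                  · subst hyv; exact Or.inl rfl
                  · exact Or.inr ⟨hzm, prefix_dropLast hpre (fun h => hyv h.symm)⟩
              rw [ih z hzok]
          rw [u_succ, if_neg hyne, tsum_congr hpt]
          have hexp : ∀ z, T.step lam y z *
              ((∑ t ∈ Finset.range (N+1), e T lam w t z * u T lam (N - t) w)
                + (1 - ∑ t ∈ Finset.range (N+1), e T lam w t z))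
              = (T.step lam y z * ∑ t ∈ Finset.range (N+1), e T lam w t z * u T lam (N - t) w
                  + T.step lam y z)
                - T.step lam y z * ∑ t ∈ Finset.range (N+1), e T lam w t z := by
            intro z; ring
          rw [tsum_congr hexp]
          have hsum1 : Summable (fun z => T.step lam y z *
              ∑ t ∈ Finset.range (N+1), e T lam w t z * u T lam (N - t) w) :=
            summable_step_mul T hlf lam y _
          have hsum2 : Summable (fun z => T.step lam y z) := summable_step T hlf lam y
          have hsum3 : Summable (fun z => T.step lam y z *
              ∑ t ∈ Finset.range (N+1), e T lam w t z) := summable_step_mul T hlf lam y _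
          rw [Summable.tsum_sub (hsum1.add hsum2) hsum3, Summable.tsum_add hsum1 hsum2]
          have hC : ∑' z, T.step lam y z *
              ∑ t ∈ Finset.range (N+1), e T lam w t z * u T lam (N - t) w
              = ∑ t ∈ Finset.range (N+1), e T lam w (t+1) y * u T lam (N - t) w := by
            rw [tsum_congr (fun z => Finset.mul_sum (Finset.range (N+1))
              (fun t => e T lam w t z * u T lam (N - t) w) (T.step lam y z))]
            rw [Summable.tsum_finsetSum (fun t _ => summable_step_mul T hlf lam y _)]
            refine Finset.sum_congr rfl fun t _ => ?_
            rw [tsum_congr (fun z => (mul_assoc (T.step lam y z) (e T lam w t z)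
              (u T lam (N - t) w)).symm)]
            rw [tsum_mul_right, e_succ, if_neg hyw]
          have hD : ∑' z, T.step lam y z * ∑ t ∈ Finset.range (N+1), e T lam w t z
              = ∑ t ∈ Finset.range (N+1), e T lam w (t+1) y := by
            rw [tsum_congr (fun z => Finset.mul_sum (Finset.range (N+1))
              (fun t => e T lam w t z) (T.step lam y z))]
            rw [Summable.tsum_finsetSum (fun t _ => summable_step_mul T hlf lam y _)]
            refine Finset.sum_congr rfl fun t _ => ?_
            rw [e_succ, if_neg hyw]
          rw [hC, hD, sum_step_eq_one T hlf hlam hym hyne]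
          rw [Finset.sum_range_succ' (fun t => e T lam w t y * u T lam (N + 1 - t) w) (N+1)]
          rw [Finset.sum_range_succ' (fun t => e T lam w t y) (N+1)]
          rw [e_zero, if_neg hyw, zero_mul, add_zero, add_zero]
          have : ∀ t, N + 1 - (t + 1) = N - t := fun t => Nat.succ_sub_succ N t
          simp only [this]
          ring

lemma u_parent_le (T : RTree A) (hlf : T.LocFin) {lam : ℝ} (hlam : 0 < lam)
    {v : List A} (hv : v ∈ T.mem) (hne : v ≠ []) (N : ℕ) :
    u T lam N v.dropLast ≤ u T lam N v := by
  have hid := u_identity T hlf hlam hv hne N v (Or.inr ⟨hv, List.prefix_refl v⟩)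
  set w := v.dropLast with hw
  set D := ∑ t ∈ Finset.range (N+1), e T lam w t v with hD
  have hDnn : 0 ≤ D := Finset.sum_nonneg fun t _ => e_nonneg T hlam w t v
  have hD1 : D ≤ 1 := eSum_le_one T hlf hlam w N v
  have h1 : D * u T lam N w ≤ ∑ t ∈ Finset.range (N+1), e T lam w t v * u T lam (N - t) w := by
    rw [hD, Finset.sum_mul]
    refine Finset.sum_le_sum fun t _ => ?_
    exact mul_le_mul_of_nonneg_left (u_mono_time T hlf hlam (Nat.sub_le N t) w)
      (e_nonneg T hlam w t v)
  have h2 : (1 - D) * u T lam N w ≤ 1 - D :=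
    mul_le_of_le_one_right (by linarith) (u_le_one T hlf hlam N w)
  calc u T lam N w = D * u T lam N w + (1 - D) * u T lam N w := by ring
    _ ≤ (∑ t ∈ Finset.range (N+1), e T lam w t v * u T lam (N - t) w) + (1 - D) :=
        add_le_add h1 h2
    _ = u T lam N v := hid.symm

lemma u_mono_lam (T : RTree A) (hlf : T.LocFin) {lam lam' : ℝ}
    (h0 : 0 < lam) (h1 : lam ≤ lam') :
    ∀ N v, u T lam N v ≤ u T lam' N v := by
  have h0' : 0 < lam' := lt_of_lt_of_le h0 h1
  intro N
  induction N with
  | zero => intro v; rw [u_zero, u_zero]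
  | succ N ih =>
      intro v
      by_cases hv : v ∈ T.mem
      · by_cases hne : v = []
        · subst hne; rw [u_succ, if_pos rfl, u_succ, if_pos rfl]
        · rw [u_succ, if_neg hne, u_succ, if_neg hne,
            tsum_step_mul T hlf h0 hv hne (u T lam N),
            tsum_step_mul T hlf h0' hv hne (u T lam' N)]
          set k := (T.numChildren v : ℝ) with hk
          set Aq := u T lam N v.dropLast with hAq
          set Aq' := u T lam' N v.dropLast with hAq'
          set S := ∑ a ∈ cFin T hlf v, u T lam N (v ++ [a]) with hS
          set S' := ∑ a ∈ cFin T hlf v, u T lam' N (v ++ [a]) with hS'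
          have hkA : k * Aq ≤ S := by
            have heach : ∀ a ∈ cFin T hlf v, Aq ≤ u T lam N (v ++ [a]) := by
              intro a ha
              have hca : v ++ [a] ∈ T.mem := (mem_cFin.mp ha).2
              have h₁ := u_parent_le T hlf h0 hca (by simp) N
              rw [List.dropLast_concat] at h₁
              exact le_trans (u_parent_le T hlf h0 hv hne N) h₁
            calc k * Aq = ∑ _a ∈ cFin T hlf v, Aq := by
                  rw [Finset.sum_const, nsmul_eq_mul, card_cFin hlf hv]
              _ ≤ S := Finset.sum_le_sum heach
          have hA : Aq ≤ Aq' := ih _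
          have hSS : S ≤ S' := Finset.sum_le_sum fun a _ => ih _
          have hAnn : 0 ≤ Aq := u_nonneg T h0 N _
          have hSnn : 0 ≤ S := Finset.sum_nonneg fun a _ => u_nonneg T h0 N _
          have hknn : (0:ℝ) ≤ k := by rw [hk]; positivity
          have hd : (0:ℝ) < 1 + k * lam := by positivity
          have hd' : (0:ℝ) < 1 + k * lam' := by positivity
          calc (Aq + lam * S) / (1 + k * lam)
              ≤ (Aq + lam' * S) / (1 + k * lam') := by
                rw [div_le_div_iff₀ hd hd']
                nlinarith [mul_nonneg (sub_nonneg.mpr h1) (sub_nonneg.mpr hkA)]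
            _ ≤ (Aq' + lam' * S') / (1 + k * lam') := by
                exact (div_le_div_iff_of_pos_right hd').mpr
                  (add_le_add hA (mul_le_mul_of_nonneg_left hSS (le_of_lt h0')))
      · rw [u_succ, u_succ]
        split_ifs with h
        · exact le_refl _
        · have hz : ∀ (mu : ℝ), ∑' y, T.step mu v y * u T mu N y = 0 := fun mu => by
            rw [tsum_congr (fun y => by rw [step_eq_zero_of_not_mem hv, zero_mul]),
              tsum_zero]
          rw [hz lam, hz lam']

end CRC
namespace CRC
open RTree Filter Topology

variable {A : Type*}

lemma u_continuousAt (T : RTree A) (hlf : T.LocFin) {lam : ℝ} (hlam : 0 < lam) :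
    ∀ N v, ContinuousAt (fun x => u T x N v) lam := by
  intro N
  induction N with
  | zero =>
      intro v
      exact (continuousAt_const :
          ContinuousAt (fun _ : ℝ => if v = [] then (0:ℝ) else 1) lam).congr
        (Filter.Eventually.of_forall fun x => rfl)
  | succ N ih =>
      intro v
      by_cases hne : v = []
      · subst hne
        refine (continuousAt_const : ContinuousAt (fun _ : ℝ => (0:ℝ)) lam).congr
          (Filter.Eventually.of_forall fun x => ?_)
        exact (if_pos rfl).symm
      · by_cases hv : v ∈ T.mem
        · have hev : (fun x : ℝ => (u T x N v.dropLast
              + x * ∑ a ∈ cFin T hlf v, u T x N (v ++ [a]))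
              / (1 + (T.numChildren v : ℝ) * x)) =ᶠ[𝓝 lam] (fun x => u T x (N+1) v) := by
            filter_upwards [isOpen_Ioi.mem_nhds (Set.mem_Ioi.mpr hlam)] with x hx
            rw [u_succ, if_neg hne, tsum_step_mul T hlf (Set.mem_Ioi.mp hx) hv hne (u T x N)]
          refine ContinuousAt.congr ?_ hev
          have hsum : ContinuousAt
              (fun x : ℝ => ∑ a ∈ cFin T hlf v, u T x N (v ++ [a])) lam :=
            tendsto_finset_sum _ fun a _ => ih (v ++ [a])
          refine ContinuousAt.div ((ih _).add (continuousAt_id.mul hsum))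
            (continuousAt_const.add (continuousAt_const.mul continuousAt_id)) ?_
          have := one_add_mul_pos (k := T.numChildren v) hlam
          exact ne_of_gt this
        · refine (continuousAt_const : ContinuousAt (fun _ : ℝ => (0:ℝ)) lam).congr
            (Filter.Eventually.of_forall fun x => ?_)
          exact (by rw [u_succ, if_neg hne,
            tsum_congr (fun y => by rw [step_eq_zero_of_not_mem hv, zero_mul]), tsum_zero] :
              u T x (N+1) v = 0).symm

end CRC
namespace CRC
open RTree

variable {A : Type*}

noncomputable def pathsFrom (T : RTree A) (hlf : T.LocFin) : ℕ → List A → Finset (List (List A))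
  | 0, v => {[v]}
  | n+1, v => (nbrF T hlf v).biUnion (fun y => (pathsFrom T hlf n y).image (List.cons v))

lemma pathProb_cons (T : RTree A) (lam : ℝ) (x y : List A) (r : List (List A)) :
    T.pathProb lam (x :: y :: r) = T.step lam x y * T.pathProb lam (y :: r) := rfl

lemma pathProb_single (T : RTree A) (lam : ℝ) (x : List A) :
    T.pathProb lam [x] = 1 := rfl

lemma pathsFrom_shape (T : RTree A) (hlf : T.LocFin) :
    ∀ n v l, l ∈ pathsFrom T hlf n v → l.length = n + 1 ∧ l.head? = some v := by
  intro n
  induction n with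
  | zero =>
      intro v l hl
      rw [show pathsFrom T hlf 0 v = {[v]} from rfl, Finset.mem_singleton] at hl
      subst hl
      exact ⟨rfl, rfl⟩
  | succ n ih =>
      intro v l hl
      rw [show pathsFrom T hlf (n+1) v
          = (nbrF T hlf v).biUnion (fun y => (pathsFrom T hlf n y).image (List.cons v))
          from rfl] at hl
      rw [Finset.mem_biUnion] at hl
      obtain ⟨y, _, hl⟩ := hl
      rw [Finset.mem_image] at hl
      obtain ⟨l', hl', rfl⟩ := hl
      have := (ih y l' hl').1
      constructor
      · simp [this]
      · rfl

lemma mem_pathsFrom_of_ne_zero (T : RTree A) (hlf : T.LocFin) {lam : ℝ} :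
    ∀ n (v : List A) (l : List (List A)), l.length = n + 1 → l.head? = some v →
      T.pathProb lam l ≠ 0 → l ∈ pathsFrom T hlf n v := by
  intro n
  induction n with
  | zero =>
      intro v l hlen hhead _
      obtain ⟨a, rfl⟩ := List.length_eq_one_iff.mp hlen
      have : a = v := by simpa using hhead
      subst this
      rw [show pathsFrom T hlf 0 a = {[a]} from rfl]
      exact Finset.mem_singleton_self _
  | succ n ih =>
      intro v l hlen hhead hp
      match l, hlen with
      | x :: y :: r, hlen =>
        have hx : x = v := by simpa using hhead
        subst hx
        rw [pathProb_cons] at hp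
        have h1 : T.step lam x y ≠ 0 := fun h => hp (by rw [h, zero_mul])
        have h2 : T.pathProb lam (y :: r) ≠ 0 := fun h => hp (by rw [h, mul_zero])
        have hy : y ∈ nbrF T hlf x := by
          by_contra hc
          exact h1 (step_eq_zero_of_not_mem_nbrF hc)
        have hmem : (y :: r) ∈ pathsFrom T hlf n y :=
          ih y (y :: r) (by simpa using hlen) rfl h2
        rw [show pathsFrom T hlf (n+1) x
            = (nbrF T hlf x).biUnion (fun z => (pathsFrom T hlf n z).image (List.cons x))
            from rfl, Finset.mem_biUnion]
        exact ⟨y, hy, Finset.mem_image.mpr ⟨y :: r, hmem, rfl⟩⟩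

noncomputable def cyl (T : RTree A) (lam : ℝ) (n : ℕ) (v : List A)
    (Q : ℕ → List A → Prop) : ℝ :=
  ∑' l : {l : List (List A) // l.length = n + 1 ∧ l.head? = some v ∧
      ∀ (i : ℕ) (h : i < l.length), Q i (l.get ⟨i, h⟩)}, T.pathProb lam l.1

lemma cylProb_eq_cyl (T : RTree A) (lam : ℝ) (M : ℕ) (P : ℕ → List A → Prop) :
    T.cylProb lam M P = cyl T lam M [] P := rfl

lemma cyl_congr (T : RTree A) (lam : ℝ) (n : ℕ) (v : List A)
    {Q Q' : ℕ → List A → Prop} (h : ∀ i z, Q i z ↔ Q' i z) :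
    cyl T lam n v Q = cyl T lam n v Q' := by
  have : Q = Q' := funext fun i => funext fun z => propext (h i z)
  rw [this]

lemma cyl_eq_sum (T : RTree A) (hlf : T.LocFin) (lam : ℝ) (n : ℕ) (v : List A)
    (Q : ℕ → List A → Prop) :
    cyl T lam n v Q = ∑ l ∈ pathsFrom T hlf n v,
      if (l.length = n + 1 ∧ l.head? = some v ∧
          ∀ (i : ℕ) (h : i < l.length), Q i (l.get ⟨i, h⟩))
        then T.pathProb lam l else 0 := by
  have h1 : cyl T lam n v Q = ∑' l : List (List A),
      Set.indicator {l : List (List A) | l.length = n + 1 ∧ l.head? = some v ∧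
        ∀ (i : ℕ) (h : i < l.length), Q i (l.get ⟨i, h⟩)} (fun l => T.pathProb lam l) l :=
    tsum_subtype _ _
  rw [h1, tsum_eq_sum (s := pathsFrom T hlf n v) ?_]
  · refine Finset.sum_congr rfl fun l hl => ?_
    rw [Set.indicator_apply]
    simp only [Set.mem_setOf_eq]
  · intro l hl
    rw [Set.indicator_apply]
    split_ifs with hc
    · by_contra hp
      exact hl (mem_pathsFrom_of_ne_zero T hlf n v l hc.1 hc.2.1 hp)
    · rfl

lemma forall_get_cons_iff {x : List A} {l : List (List A)} {Q : ℕ → List A → Prop}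
    (hQ0 : Q 0 x) :
    (∀ (i : ℕ) (h : i < (x :: l).length), Q i ((x :: l).get ⟨i, h⟩))
      ↔ (∀ (i : ℕ) (h : i < l.length), Q (i+1) (l.get ⟨i, h⟩)) := by
  constructor
  · intro h i hi
    have := h (i+1) (by simpa using Nat.succ_lt_succ hi)
    simpa using this
  · intro h i hi
    match i with
    | 0 => simpa using hQ0
    | (j+1) =>
        have := h j (by simpa using Nat.lt_of_succ_lt_succ hi)
        simpa using this

lemma cyl_succ (T : RTree A) (hlf : T.LocFin) (lam : ℝ) (n : ℕ) (v : List A)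
    (Q : ℕ → List A → Prop) (hQ0 : Q 0 v) :
    cyl T lam (n+1) v Q = ∑' y, T.step lam v y * cyl T lam n y (fun i z => Q (i+1) z) := by
  rw [tsum_eq_sum (s := nbrF T hlf v) (fun y hy => by
    rw [step_eq_zero_of_not_mem_nbrF hy, zero_mul])]
  rw [cyl_eq_sum T hlf]
  rw [show pathsFrom T hlf (n+1) v
      = (nbrF T hlf v).biUnion (fun y => (pathsFrom T hlf n y).image (List.cons v))
      from rfl]
  rw [Finset.sum_biUnion ?_]
  · refine Finset.sum_congr rfl fun y hy => ?_
    rw [Finset.sum_image (fun a _ b _ h => by simpa using h)]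
    rw [cyl_eq_sum T hlf, Finset.mul_sum]
    refine Finset.sum_congr rfl fun l hl => ?_
    obtain ⟨hlen, hhead⟩ := pathsFrom_shape T hlf n y l hl
    match l, hlen with
    | z :: r, hlen =>
      have hz : z = y := by simpa using hhead
      subst hz
      have hiff : ((v :: z :: r).length = n + 1 + 1 ∧ (v :: z :: r).head? = some v ∧
            ∀ (i : ℕ) (h : i < (v :: z :: r).length), Q i ((v :: z :: r).get ⟨i, h⟩))
          ↔ ((z :: r).length = n + 1 ∧ (z :: r).head? = some z ∧
            ∀ (i : ℕ) (h : i < (z :: r).length), Q (i+1) ((z :: r).get ⟨i, h⟩)) := by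
        constructor
        · rintro ⟨h1, _, h3⟩
          exact ⟨by simpa using h1, rfl, (forall_get_cons_iff hQ0).mp h3⟩
        · rintro ⟨h1, _, h3⟩
          exact ⟨by simpa using h1, rfl, (forall_get_cons_iff hQ0).mpr h3⟩
      rw [if_congr hiff rfl rfl, mul_ite, mul_zero]
      exact if_congr Iff.rfl (pathProb_cons T lam v z r) rfl
  · intro y₁ h₁ y₂ h₂ hne
    refine Finset.disjoint_left.mpr fun l hl₁ hl₂ => ?_
    obtain ⟨l₁, hm₁, rfl⟩ := Finset.mem_image.mp hl₁
    obtain ⟨l₂, hm₂, heq⟩ := Finset.mem_image.mp hl₂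
    have : l₂ = l₁ := by injection heq
    subst this
    have e₁ := (pathsFrom_shape T hlf n y₁ l₂ hm₁).2
    have e₂ := (pathsFrom_shape T hlf n y₂ l₂ hm₂).2
    rw [e₁] at e₂
    exact hne (by injection e₂)

lemma cyl_noret_eq_u (T : RTree A) (hlf : T.LocFin) (lam : ℝ) :
    ∀ n (y : List A), cyl T lam n y (fun _ z => z ≠ []) = u T lam n y := by
  intro n
  induction n with
  | zero =>
      intro y
      rw [cyl_eq_sum T hlf, show pathsFrom T hlf 0 y = {[y]} from rfl,
        Finset.sum_singleton]
      by_cases hy : y = []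
      · rw [if_neg, u_zero, if_pos hy]
        rintro ⟨-, -, hall⟩
        exact hall 0 (by simp) (by simpa using hy)
      · have hcond : ∀ (i : ℕ) (h : i < [y].length), [y].get ⟨i, h⟩ ≠ [] := by
          intro i h
          have hi : i = 0 := by simp at h; omega
          subst hi
          simpa using hy
        rw [if_pos ⟨rfl, rfl, hcond⟩, u_zero, if_neg hy]
        exact pathProb_single T lam y
  | succ n ih =>
      intro y
      by_cases hy : y = []
      · subst hy
        rw [u_succ, if_pos rfl, cyl_eq_sum T hlf]
        refine Finset.sum_eq_zero fun l hl => ?_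
        rw [if_neg]
        rintro ⟨hlen, hhead, hall⟩
        match l with
        | [] => simp at hhead
        | a :: r =>
            have ha : a = [] := by simpa using hhead
            exact hall 0 (by simp) (by simpa using ha)
      · rw [cyl_succ T hlf lam n y _ hy, u_succ, if_neg hy]
        refine tsum_congr fun z => ?_
        exact congrArg (T.step lam y z * ·) (ih z)

lemma cylProb_zero (T : RTree A) (hlf : T.LocFin) (lam : ℝ) :
    T.cylProb lam 0 (fun i v => i ≠ 0 → v ≠ []) = 1 := by
  rw [cylProb_eq_cyl, cyl_eq_sum T hlf, show pathsFrom T hlf 0 ([] : List A) = {[[]]} from rfl,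
    Finset.sum_singleton, if_pos ⟨rfl, rfl, fun i h => by
      have hi : i = 0 := by simp at h; omega
      subst hi
      exact fun h0 => absurd rfl h0⟩]
  exact pathProb_single T lam []

lemma cylProb_succ (T : RTree A) (hlf : T.LocFin) (lam : ℝ) (M : ℕ) :
    T.cylProb lam (M+1) (fun i v => i ≠ 0 → v ≠ [])
      = (1 / (T.numChildren ([] : List A) : ℝ)) * ∑ a ∈ cFin T hlf [], u T lam M [a] := by
  rw [cylProb_eq_cyl, cyl_succ T hlf lam M [] _ (fun h0 => absurd rfl h0)]
  have hstep : ∀ y, T.step lam [] y *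
      cyl T lam M y (fun i z => (fun i v => i ≠ 0 → v ≠ []) (i+1) z)
      = T.step lam [] y * u T lam M y := by
    intro y
    rw [cyl_congr T lam M y (Q := fun i z => (i+1) ≠ 0 → z ≠ []) (Q' := fun _ z => z ≠ [])
      (fun i z => ⟨fun h => h (Nat.succ_ne_zero i), fun h _ => h⟩), cyl_noret_eq_u T hlf lam M y]
  rw [tsum_congr hstep, tsum_step_mul_root T hlf lam (u T lam M)]

end CRC
namespace CRC
open RTree Filter Topology

variable {A : Type*}

lemma cylProb_nonneg (T : RTree A) (hlf : T.LocFin) {lam : ℝ} (hlam : 0 < lam) (M : ℕ) :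
    0 ≤ T.cylProb lam M (fun i v => i ≠ 0 → v ≠ []) := by
  cases M with
  | zero => rw [cylProb_zero T hlf]; norm_num
  | succ M =>
      rw [cylProb_succ T hlf]
      refine mul_nonneg (by positivity) (Finset.sum_nonneg fun a _ => u_nonneg T hlam M _)

lemma cylProb_mono_lam (T : RTree A) (hlf : T.LocFin) {lam lam' : ℝ}
    (h0 : 0 < lam) (h1 : lam ≤ lam') (M : ℕ) :
    T.cylProb lam M (fun i v => i ≠ 0 → v ≠ [])
      ≤ T.cylProb lam' M (fun i v => i ≠ 0 → v ≠ []) := by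
  cases M with
  | zero => rw [cylProb_zero T hlf, cylProb_zero T hlf]
  | succ M =>
      rw [cylProb_succ T hlf, cylProb_succ T hlf]
      refine mul_le_mul_of_nonneg_left ?_ (by positivity)
      exact Finset.sum_le_sum fun a _ => u_mono_lam T hlf h0 h1 M _

lemma cylProb_continuousAt (T : RTree A) (hlf : T.LocFin) {lam : ℝ} (hlam : 0 < lam) (M : ℕ) :
    ContinuousAt (fun x => T.cylProb x M (fun i v => i ≠ 0 → v ≠ [])) lam := by
  cases M with
  | zero =>
      refine (continuousAt_const : ContinuousAt (fun _ : ℝ => (1:ℝ)) lam).congr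
        (Filter.Eventually.of_forall fun x => ?_)
      exact (cylProb_zero T hlf x).symm
  | succ M =>
      have : (fun x => T.cylProb x (M+1) (fun i v => i ≠ 0 → v ≠ []))
          = fun x => (1 / (T.numChildren ([] : List A) : ℝ))
              * ∑ a ∈ cFin T hlf [], u T x M [a] :=
        funext fun x => cylProb_succ T hlf x M
      rw [this]
      exact continuousAt_const.mul (tendsto_finset_sum _ fun a _ => u_continuousAt T hlf hlam M [a])

lemma escProb_bddBelow (T : RTree A) (hlf : T.LocFin) {lam : ℝ} (hlam : 0 < lam) :
    BddBelow (Set.range fun M => T.cylProb lam M (fun i v => i ≠ 0 → v ≠ [])) := by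
  refine ⟨0, fun x hx => ?_⟩
  obtain ⟨M, rfl⟩ := hx
  exact cylProb_nonneg T hlf hlam M

lemma escProb_mono (T : RTree A) (hlf : T.LocFin) {lam lam' : ℝ}
    (h0 : 0 < lam) (h1 : lam ≤ lam') : T.escProb lam ≤ T.escProb lam' := by
  unfold RTree.escProb
  exact ciInf_mono (escProb_bddBelow T hlf h0) (fun M => cylProb_mono_lam T hlf h0 h1 M)

lemma escProb_continuousWithinAt (T : RTree A) (hlf : T.LocFin) {lam : ℝ} (hlam : 0 < lam) :
    ContinuousWithinAt (fun x => T.escProb x) (Set.Ici lam) lam := by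
  rw [ContinuousWithinAt, Metric.tendsto_nhdsWithin_nhds]
  intro ε hε
  have hlt : T.escProb lam < T.escProb lam + ε / 2 := by linarith
  obtain ⟨M, hM⟩ := exists_lt_of_ciInf_lt (by exact hlt)
  obtain ⟨δ, hδ, hδ'⟩ := Metric.continuousAt_iff.mp (cylProb_continuousAt T hlf hlam M)
    (ε/2) (by linarith)
  refine ⟨δ, hδ, fun x hx hdist => ?_⟩
  have hxlam : lam ≤ x := hx
  have hx0 : 0 < x := lt_of_lt_of_le hlam hxlam
  have hlow : T.escProb lam ≤ T.escProb x := escProb_mono T hlf hlam hxlam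
  have hup : T.escProb x ≤ T.cylProb x M (fun i v => i ≠ 0 → v ≠ []) :=
    ciInf_le (escProb_bddBelow T hlf hx0) M
  have hd := hδ' hdist
  rw [Real.dist_eq] at hd
  have := abs_lt.mp hd
  rw [Real.dist_eq, abs_lt]
  constructor <;> [linarith; linarith]

end CRC

/-- For any infinite, locally finite rooted tree `T`, the function
`λ ↦ C(λ,T)` is right continuous on `(0, +∞)`. -/
theorem conductance_right_continuous (A : Type) (T : RTree A)
    (hinf : T.mem.Infinite) (hlf : T.LocFin)
    (lam : ℝ) (hlam : 0 < lam) :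
    ContinuousWithinAt (fun x => T.conductance x) (Set.Ici lam) lam := by
  have hF := CRC.escProb_continuousWithinAt T hlf hlam
  have : (fun x => T.conductance x)
      = fun x => x * (T.numChildren ([] : List A) : ℝ) * T.escProb x :=
    funext fun x => rfl
  rw [this]
  exact (continuousWithinAt_id.mul continuousWithinAt_const).mul hF
end

section
/- Let T be an infinite, locally finite rooted tree that is uniformly transient. Then λ ↦ C(λ,T) is left continuous on (λ_c(T), +∞). -/
open scoped Classical ENNReal
open Filter

section AuxBasics

variable {A : Type*}

namespace RTree

lemma mem_of_append_mem (T : RTree A) (w v : List A) (h : v ++ w ∈ T.mem) : v ∈ T.mem := by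
  induction w using List.reverseRecOn with
  | nil => simpa using h
  | append_singleton w a ih =>
      rw [← List.append_assoc] at h
      exact ih (T.parent_mem (v ++ w) a h)

/-- The set of labels of children of `x`. -/
def childSet (T : RTree A) (x : List A) : Set A := {a | x ++ [a] ∈ T.mem}

lemma childSet_finite (T : RTree A) (hlf : T.LocFin) (x : List A) : (T.childSet x).Finite := by
  by_cases hx : x ∈ T.mem
  · exact hlf x hx
  · have : T.childSet x = ∅ := by
      ext a
      simp only [childSet, Set.mem_setOf_eq, Set.mem_empty_iff_false, iff_false]
      exact fun h => hx (T.parent_mem x a h)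
    rw [this]; exact Set.finite_empty

/-- Children of `x` as a `Finset`. -/
noncomputable def childF (T : RTree A) (hlf : T.LocFin) (x : List A) : Finset (List A) :=
  (T.childSet_finite hlf x).toFinset.image (fun a => x ++ [a])

lemma mem_childF (T : RTree A) (hlf : T.LocFin) {x y : List A} :
    y ∈ T.childF hlf x ↔ (∃ a : A, y = x ++ [a]) ∧ y ∈ T.mem := by
  simp only [childF, Finset.mem_image, Set.Finite.mem_toFinset]
  constructor
  · rintro ⟨a, ha, rfl⟩; exact ⟨⟨a, rfl⟩, ha⟩
  · rintro ⟨⟨a, rfl⟩, hy⟩; exact ⟨a, hy, rfl⟩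

lemma card_childF (T : RTree A) (hlf : T.LocFin) (x : List A) :
    (T.childF hlf x).card = T.numChildren x := by
  rw [childF, Finset.card_image_of_injective _ (fun a b hab => by simpa using hab)]
  rw [numChildren]
  exact (Set.ncard_eq_toFinset_card _ (T.childSet_finite hlf x)).symm

lemma mem_of_mem_childF (T : RTree A) (hlf : T.LocFin) {x y : List A}
    (h : y ∈ T.childF hlf x) : x ∈ T.mem := by
  obtain ⟨⟨a, rfl⟩, hy⟩ := (T.mem_childF hlf).1 h
  exact T.parent_mem x a hy

lemma length_of_mem_childF (T : RTree A) (hlf : T.LocFin) {x y : List A}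
    (h : y ∈ T.childF hlf x) : y.length = x.length + 1 := by
  obtain ⟨⟨a, rfl⟩, _⟩ := (T.mem_childF hlf).1 h
  simp

lemma dropLast_of_mem_childF (T : RTree A) (hlf : T.LocFin) {x y : List A}
    (h : y ∈ T.childF hlf x) : y.dropLast = x := by
  obtain ⟨⟨a, rfl⟩, _⟩ := (T.mem_childF hlf).1 h
  simp

lemma ne_nil_of_mem_childF (T : RTree A) (hlf : T.LocFin) {x y : List A}
    (h : y ∈ T.childF hlf x) : y ≠ [] := by
  obtain ⟨⟨a, rfl⟩, _⟩ := (T.mem_childF hlf).1 h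
  simp

/-- The neighbours of `x` (children, and the parent if `x` is not the root). -/
noncomputable def nbrF (T : RTree A) (hlf : T.LocFin) (x : List A) : Finset (List A) :=
  T.childF hlf x ∪ (if x = [] then ∅ else {x.dropLast})

lemma childF_subset_nbrF (T : RTree A) (hlf : T.LocFin) (x : List A) :
    T.childF hlf x ⊆ T.nbrF hlf x := Finset.subset_union_left

lemma dropLast_mem_nbrF (T : RTree A) (hlf : T.LocFin) {x : List A} (hx : x ≠ []) :
    x.dropLast ∈ T.nbrF hlf x := by
  simp [nbrF, hx]

lemma nbrF_nil (T : RTree A) (hlf : T.LocFin) : T.nbrF hlf [] = T.childF hlf [] := by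
  simp [nbrF]

lemma one_add_mul_pos {k : ℕ} {lam : ℝ} (hlam : 0 ≤ lam) : (0:ℝ) < 1 + (k:ℝ) * lam := by
  have : (0:ℝ) ≤ (k:ℝ) * lam := mul_nonneg (by positivity) hlam
  linarith

lemma step_nonneg (T : RTree A) {lam : ℝ} (hlam : 0 ≤ lam) (x y : List A) :
    0 ≤ T.step lam x y := by
  unfold step
  split_ifs with h1 h2 h3 h4
  · positivity
  · have := one_add_mul_pos (k := T.numChildren x) hlam
    positivity
  · have := one_add_mul_pos (k := T.numChildren x) hlam
    positivity
  · exact le_rfl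
  · exact le_rfl

lemma step_eq_zero_of_not_mem_left (T : RTree A) (lam : ℝ) {x : List A} (hx : x ∉ T.mem)
    (y : List A) : T.step lam x y = 0 := by
  unfold step
  rw [if_neg (by tauto)]

lemma step_ne_zero (T : RTree A) (hlf : T.LocFin) {lam : ℝ} {x y : List A}
    (h : T.step lam x y ≠ 0) : x ∈ T.mem ∧ y ∈ T.mem ∧ y ∈ T.nbrF hlf x := by
  unfold step at h
  split_ifs at h with h1 h2 h3 h4
  · refine ⟨h1.1, h1.2, ?_⟩
    exact T.childF_subset_nbrF hlf _ ((T.mem_childF hlf).2 ⟨h2, h1.2⟩)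
  · refine ⟨h1.1, h1.2, ?_⟩
    exact T.childF_subset_nbrF hlf _ ((T.mem_childF hlf).2 ⟨h2, h1.2⟩)
  · refine ⟨h1.1, h1.2, ?_⟩
    rw [h4.2]
    exact T.dropLast_mem_nbrF hlf h4.1
  · exact absurd rfl h
  · exact absurd rfl h

lemma step_child (T : RTree A) (hlf : T.LocFin) (lam : ℝ) {x y : List A}
    (hx : x ≠ []) (hy : y ∈ T.childF hlf x) :
    T.step lam x y = lam / (1 + (T.numChildren x : ℝ) * lam) := by
  obtain ⟨he, hym⟩ := (T.mem_childF hlf).1 hy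
  have hxm : x ∈ T.mem := T.mem_of_mem_childF hlf hy
  unfold step
  rw [if_pos ⟨hxm, hym⟩, if_pos he, if_neg hx]

lemma step_child_root (T : RTree A) (hlf : T.LocFin) (lam : ℝ) {y : List A}
    (hy : y ∈ T.childF hlf []) :
    T.step lam [] y = 1 / (T.numChildren ([] : List A) : ℝ) := by
  obtain ⟨he, hym⟩ := (T.mem_childF hlf).1 hy
  have hxm : ([] : List A) ∈ T.mem := T.root_mem
  unfold step
  rw [if_pos ⟨hxm, hym⟩, if_pos he, if_pos rfl]

lemma step_parent (T : RTree A) (lam : ℝ) {x : List A} (hx : x ≠ []) (hxm : x ∈ T.mem) :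
    T.step lam x x.dropLast = 1 / (1 + (T.numChildren x : ℝ) * lam) := by
  have hpm : x.dropLast ∈ T.mem := by
    obtain ⟨w, a, rfl⟩ := x.eq_nil_or_concat'.resolve_left hx
    rw [List.dropLast_concat]
    exact T.parent_mem w a hxm
  have hne : ¬ ∃ a : A, x.dropLast = x ++ [a] := by
    rintro ⟨a, ha⟩
    have h1 := congrArg List.length ha
    rw [List.length_dropLast, List.length_append, List.length_singleton] at h1
    have hlen : x.length ≠ 0 := fun h' => hx (List.length_eq_zero_iff.1 h')
    omega
  unfold step
  rw [if_pos ⟨hxm, hpm⟩, if_neg hne, if_pos ⟨hx, rfl⟩]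

lemma dropLast_not_mem_childF (T : RTree A) (hlf : T.LocFin) (x : List A) :
    x.dropLast ∉ T.childF hlf x := by
  intro h
  have := T.length_of_mem_childF hlf h
  have hx : x ≠ [] := by
    rintro rfl; simp at this
  have hlen : x.length ≠ 0 := fun h' => hx (List.length_eq_zero_iff.1 h')
  rw [List.length_dropLast] at this
  omega

lemma sum_step_children (T : RTree A) (hlf : T.LocFin) (lam : ℝ) {x : List A} (hx : x ≠ []) :
    ∑ y ∈ T.childF hlf x, T.step lam x y
      = (T.numChildren x : ℝ) * (lam / (1 + (T.numChildren x : ℝ) * lam)) := by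
  rw [Finset.sum_congr rfl (fun y hy => T.step_child hlf lam hx hy)]
  rw [Finset.sum_const, T.card_childF hlf, nsmul_eq_mul]

lemma sum_step_children_root (T : RTree A) (hlf : T.LocFin) (lam : ℝ) :
    ∑ y ∈ T.childF hlf [], T.step lam [] y
      = if T.numChildren ([] : List A) = 0 then 0 else 1 := by
  rw [Finset.sum_congr rfl (fun y hy => T.step_child_root hlf lam hy)]
  rw [Finset.sum_const, T.card_childF hlf, nsmul_eq_mul]
  by_cases h : T.numChildren ([] : List A) = 0
  · simp [h]
  · rw [if_neg h, mul_one_div, div_self (by exact_mod_cast h)]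

lemma sum_step_nbr (T : RTree A) (hlf : T.LocFin) {lam : ℝ} (hlam : 0 < lam)
    {x : List A} (hxm : x ∈ T.mem) (hx : x ≠ []) :
    ∑ y ∈ T.nbrF hlf x, T.step lam x y = 1 := by
  have hd : x.dropLast ∉ T.childF hlf x := T.dropLast_not_mem_childF hlf x
  have hpos := one_add_mul_pos (k := T.numChildren x) hlam.le
  rw [nbrF, if_neg hx, Finset.sum_union (by simp [Finset.disjoint_singleton_right, hd]),
    Finset.sum_singleton, T.sum_step_children hlf lam hx, T.step_parent lam hx hxm]
  field_simp
  ring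

lemma sum_step_nbr_le_one (T : RTree A) (hlf : T.LocFin) {lam : ℝ} (hlam : 0 < lam)
    (x : List A) : ∑ y ∈ T.nbrF hlf x, T.step lam x y ≤ 1 := by
  by_cases hxm : x ∈ T.mem
  · by_cases hx : x = []
    · subst hx
      rw [nbrF_nil, sum_step_children_root]
      split_ifs <;> norm_num
    · exact le_of_eq (T.sum_step_nbr hlf hlam hxm hx)
  · rw [Finset.sum_congr rfl (fun y _ => T.step_eq_zero_of_not_mem_left lam hxm y)]
    simp

lemma step_le_one (T : RTree A) (hlf : T.LocFin) {lam : ℝ} (hlam : 0 < lam) (x y : List A) :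
    T.step lam x y ≤ 1 := by
  by_cases h : T.step lam x y = 0
  · rw [h]; norm_num
  · obtain ⟨_, _, hn⟩ := T.step_ne_zero hlf h
    calc T.step lam x y ≤ ∑ z ∈ T.nbrF hlf x, T.step lam x z :=
          Finset.single_le_sum (fun z _ => T.step_nonneg hlam.le x z) hn
    _ ≤ 1 := T.sum_step_nbr_le_one hlf hlam x

lemma step_continuousOn (T : RTree A) (x y : List A) :
    ContinuousOn (fun lam => T.step lam x y) (Set.Ioi (0:ℝ)) := by
  unfold step
  by_cases h1 : x ∈ T.mem ∧ y ∈ T.mem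
  · simp only [if_pos h1]
    by_cases h2 : ∃ a : A, y = x ++ [a]
    · simp only [if_pos h2]
      by_cases h3 : x = []
      · simp only [if_pos h3]; exact continuousOn_const
      · simp only [if_neg h3]
        apply ContinuousOn.div continuousOn_id
        · exact (continuousOn_const.add (continuousOn_const.mul continuousOn_id))
        · intro lam hlam
          exact (one_add_mul_pos (k := T.numChildren x) (le_of_lt hlam)).ne'
    · simp only [if_neg h2]
      by_cases h4 : x ≠ [] ∧ y = x.dropLast
      · simp only [if_pos h4]
        apply ContinuousOn.div continuousOn_const
        · exact (continuousOn_const.add (continuousOn_const.mul continuousOn_id))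
        · intro lam hlam
          exact (one_add_mul_pos (k := T.numChildren x) (le_of_lt hlam)).ne'
      · simp only [if_neg h4]; exact continuousOn_const
  · simp only [if_neg h1]; exact continuousOn_const

end RTree

end AuxBasics

section AuxW

variable {A : Type*}

namespace RTree

/-- Iterates of the substochastic transition kernel, with absorption data `B`:
at a vertex `x` with `B x = some c` the iteration is stopped with value `c`;
initial data `f0`. -/
noncomputable def Wit (T : RTree A) (hlf : T.LocFin) (lam : ℝ) (B : List A → Option ℝ)
    (f0 : List A → ℝ) : ℕ → List A → ℝ
  | 0, x => (B x).getD (f0 x)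
  | (t+1), x =>
      match hx : B x with
      | some c => c
      | none => ∑ y ∈ T.nbrF hlf x, T.step lam x y * Wit T hlf lam B f0 t y

variable (T : RTree A) (hlf : T.LocFin) {lam : ℝ} (B : List A → Option ℝ)
  (f0 : List A → ℝ)

lemma Wit_zero (x : List A) : Wit T hlf lam B f0 0 x = (B x).getD (f0 x) := rfl

lemma Wit_zero_live {x : List A} (h : B x = none) : Wit T hlf lam B f0 0 x = f0 x := by
  rw [Wit_zero, h, Option.getD_none]

lemma Wit_succ_live {x : List A} (h : B x = none) (t : ℕ) :
    Wit T hlf lam B f0 (t+1) x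
      = ∑ y ∈ T.nbrF hlf x, T.step lam x y * Wit T hlf lam B f0 t y := by
  conv_lhs => rw [Wit]
  split
  · rename_i c hc; rw [h] at hc; exact absurd hc (by simp)
  · rfl

lemma Wit_absorbed {x : List A} {c : ℝ} (h : B x = some c) (t : ℕ) :
    Wit T hlf lam B f0 t x = c := by
  cases t with
  | zero => rw [Wit_zero, h, Option.getD_some]
  | succ t =>
      conv_lhs => rw [Wit]
      split
      · rename_i c' hc; rw [h] at hc; injection hc with hc; exact hc.symm ▸ rfl
      · rename_i hc; rw [h] at hc; exact absurd hc (by simp)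

lemma Wit_nonneg (hlam : 0 ≤ lam) (hB : ∀ x c, B x = some c → 0 ≤ c)
    (hf : ∀ x, 0 ≤ f0 x) : ∀ t x, 0 ≤ Wit T hlf lam B f0 t x := by
  intro t
  induction t with
  | zero =>
      intro x
      rw [Wit_zero]
      cases h : B x with
      | none => simpa using hf x
      | some c => simpa using hB x c h
  | succ t ih =>
      intro x
      cases h : B x with
      | some c => rw [Wit_absorbed T hlf B f0 h]; exact hB x c h
      | none =>
          rw [Wit_succ_live T hlf B f0 h]
          exact Finset.sum_nonneg fun y _ =>
            mul_nonneg (T.step_nonneg hlam x y) (ih y)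

lemma Wit_le_one (hlam : 0 < lam) (hB : ∀ x c, B x = some c → c ≤ 1)
    (hf : ∀ x, f0 x ≤ 1) (hB0 : ∀ x c, B x = some c → 0 ≤ c) (hf0 : ∀ x, 0 ≤ f0 x) :
    ∀ t x, Wit T hlf lam B f0 t x ≤ 1 := by
  intro t
  induction t with
  | zero =>
      intro x
      rw [Wit_zero]
      cases h : B x with
      | none => simpa using hf x
      | some c => simpa using hB x c h
  | succ t ih =>
      intro x
      cases h : B x with
      | some c => rw [Wit_absorbed T hlf B f0 h]; exact hB x c h
      | none =>
          rw [Wit_succ_live T hlf B f0 h]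
          calc ∑ y ∈ T.nbrF hlf x, T.step lam x y * Wit T hlf lam B f0 t y
              ≤ ∑ y ∈ T.nbrF hlf x, T.step lam x y := by
                refine Finset.sum_le_sum fun y _ => ?_
                exact mul_le_of_le_one_right (T.step_nonneg hlam.le x y) (ih y)
            _ ≤ 1 := T.sum_step_nbr_le_one hlf hlam x

lemma Wit_mono_f0 (hlam : 0 ≤ lam) {g0 : List A → ℝ} (h : ∀ x, f0 x ≤ g0 x) :
    ∀ t x, Wit T hlf lam B f0 t x ≤ Wit T hlf lam B g0 t x := by
  intro t
  induction t with
  | zero =>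
      intro x
      rw [Wit_zero, Wit_zero]
      cases hx : B x with
      | none => simpa using h x
      | some c => simp
  | succ t ih =>
      intro x
      cases hx : B x with
      | some c => rw [Wit_absorbed T hlf B f0 hx, Wit_absorbed T hlf B g0 hx]
      | none =>
          rw [Wit_succ_live T hlf B f0 hx, Wit_succ_live T hlf B g0 hx]
          exact Finset.sum_le_sum fun y _ =>
            mul_le_mul_of_nonneg_left (ih y) (T.step_nonneg hlam x y)

lemma Wit_add (s t : ℕ) (x : List A) :
    Wit T hlf lam B f0 (s + t) x
      = Wit T hlf lam B (fun y => Wit T hlf lam B f0 t y) s x := by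
  induction s generalizing x with
  | zero =>
      rw [Nat.zero_add, Wit_zero]
      cases h : B x with
      | none => simp
      | some c => rw [Wit_absorbed T hlf B f0 h]; simp
  | succ s ih =>
      have : s + 1 + t = (s + t) + 1 := by omega
      rw [this]
      cases h : B x with
      | some c => rw [Wit_absorbed T hlf B f0 h, Wit_absorbed T hlf B _ h]
      | none =>
          rw [Wit_succ_live T hlf B f0 h, Wit_succ_live T hlf B _ h]
          exact Finset.sum_congr rfl fun y _ => by rw [ih y]

lemma Wit_smul (hB0 : ∀ x c, B x = some c → c = 0) (r : ℝ) :
    ∀ t x, Wit T hlf lam B (fun y => r * f0 y) t x = r * Wit T hlf lam B f0 t x := by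
  intro t
  induction t with
  | zero =>
      intro x
      rw [Wit_zero, Wit_zero]
      cases h : B x with
      | none => simp
      | some c => rw [hB0 x c h]; simp
  | succ t ih =>
      intro x
      cases h : B x with
      | some c =>
          rw [Wit_absorbed T hlf B _ h, Wit_absorbed T hlf B f0 h, hB0 x c h, mul_zero]
      | none =>
          rw [Wit_succ_live T hlf B _ h, Wit_succ_live T hlf B f0 h, Finset.mul_sum]
          exact Finset.sum_congr rfl fun y _ => by rw [ih y]; ring

lemma Wit_antitone_one (hlam : 0 < lam) (hB : ∀ x c, B x = some c → 0 ≤ c ∧ c ≤ 1)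
    (x : List A) : Antitone fun t => Wit T hlf lam B (fun _ => 1) t x := by
  apply antitone_nat_of_succ_le
  intro t
  have h1 : (t + 1) = t + 1 := rfl
  calc Wit T hlf lam B (fun _ => 1) (t+1) x
      = Wit T hlf lam B (fun y => Wit T hlf lam B (fun _ => 1) 1 y) t x := by
        rw [← Wit_add]
    _ ≤ Wit T hlf lam B (fun _ => 1) t x := by
        refine Wit_mono_f0 T hlf B _ hlam.le (fun y => ?_) t x
        exact Wit_le_one T hlf B _ hlam (fun z c hc => (hB z c hc).2) (fun _ => le_rfl)
          (fun z c hc => (hB z c hc).1) (fun _ => zero_le_one) 1 y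

lemma Wit_monotone_zero (hlam : 0 ≤ lam) (hB : ∀ x c, B x = some c → 0 ≤ c)
    (x : List A) : Monotone fun t => Wit T hlf lam B (fun _ => 0) t x := by
  apply monotone_nat_of_le_succ
  intro t
  calc Wit T hlf lam B (fun _ => 0) t x
      ≤ Wit T hlf lam B (fun y => Wit T hlf lam B (fun _ => 0) 1 y) t x := by
        refine Wit_mono_f0 T hlf B _ hlam (fun y => ?_) t x
        exact Wit_nonneg T hlf B _ hlam hB (fun _ => le_rfl) 1 y
    _ = Wit T hlf lam B (fun _ => 0) (t+1) x := by rw [← Wit_add]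

lemma Wit_continuousOn (t : ℕ) (x : List A) :
    ContinuousOn (fun l => Wit T hlf l B f0 t x) (Set.Ioi (0:ℝ)) := by
  induction t generalizing x with
  | zero =>
      simp only [Wit_zero]
      exact continuousOn_const
  | succ t ih =>
      cases h : B x with
      | some c =>
          have : (fun l => Wit T hlf l B f0 (t+1) x) = fun _ => c := by
            funext l; exact Wit_absorbed T hlf B f0 h (t+1)
          rw [this]; exact continuousOn_const
      | none =>
          have : (fun l => Wit T hlf l B f0 (t+1) x)
              = fun l => ∑ y ∈ T.nbrF hlf x, T.step l x y * Wit T hlf l B f0 t y := by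
            funext l; exact Wit_succ_live T hlf B f0 h t
          rw [this]
          exact continuousOn_finset_sum _ fun y _ => (T.step_continuousOn x y).mul (ih y)

end RTree

end AuxW

section AuxLimits

variable {A : Type*}

lemma ciSup_one_sub {f : ℕ → ℝ} (hf : Antitone f) (hb : BddBelow (Set.range f)) :
    (⨆ t, (1 - f t)) = 1 - ⨅ t, f t := by
  have h1 : Filter.Tendsto f Filter.atTop (nhds (⨅ t, f t)) := tendsto_atTop_ciInf hf hb
  have h2 : Filter.Tendsto (fun t => 1 - f t) Filter.atTop (nhds (1 - ⨅ t, f t)) :=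
    tendsto_const_nhds.sub h1
  have hmono : Monotone fun t => 1 - f t := fun a b hab => by
    have := hf hab; simp only; linarith
  have hbdd : BddAbove (Set.range fun t => 1 - f t) := by
    obtain ⟨m, hm⟩ := hb
    refine ⟨1 - m, ?_⟩
    rintro _ ⟨t, rfl⟩
    have := hm ⟨t, rfl⟩
    simp only; linarith
  exact tendsto_nhds_unique (tendsto_atTop_ciSup hmono hbdd) h2

lemma iInf_sum_of_antitone {β : Type*} (s : Finset β) (f : β → ℕ → ℝ)
    (hf : ∀ b ∈ s, Antitone (f b)) (hb : ∀ b ∈ s, BddBelow (Set.range (f b))) :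
    ⨅ t, ∑ b ∈ s, f b t = ∑ b ∈ s, ⨅ t, f b t := by
  have h1 : Filter.Tendsto (fun t => ∑ b ∈ s, f b t) Filter.atTop
      (nhds (∑ b ∈ s, ⨅ t, f b t)) :=
    tendsto_finset_sum _ fun b hb' => tendsto_atTop_ciInf (hf b hb') (hb b hb')
  have h2 : Antitone fun t => ∑ b ∈ s, f b t := fun u v huv =>
    Finset.sum_le_sum fun b hb' => hf b hb' huv
  have h3 : BddBelow (Set.range fun t => ∑ b ∈ s, f b t) := by
    refine ⟨∑ b ∈ s, ⨅ t, f b t, ?_⟩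
    rintro _ ⟨t, rfl⟩
    exact Finset.sum_le_sum fun b hb' => ciInf_le (hb b hb') t
  exact tendsto_nhds_unique (tendsto_atTop_ciInf h2 h3) h1

namespace RTree

/-- Absorption data: hit `Tgt` (value 1) before hitting `K` (value 0). -/
noncomputable def hitB (Tgt K : Set (List A)) : List A → Option ℝ := fun y =>
  if y ∈ Tgt then some 1 else if y ∈ K then some 0 else none

/-- Absorption data for survival: killed on `K`. -/
noncomputable def surB (K : Set (List A)) : List A → Option ℝ := fun y =>
  if y ∈ K then some 0 else none

lemma hitB_tgt {Tgt K : Set (List A)} {y : List A} (h : y ∈ Tgt) : hitB Tgt K y = some 1 :=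
  if_pos h

lemma hitB_kill {Tgt K : Set (List A)} {y : List A} (h1 : y ∉ Tgt) (h2 : y ∈ K) :
    hitB Tgt K y = some 0 := by rw [hitB, if_neg h1, if_pos h2]

lemma hitB_live {Tgt K : Set (List A)} {y : List A} (h1 : y ∉ Tgt) (h2 : y ∉ K) :
    hitB Tgt K y = none := by rw [hitB, if_neg h1, if_neg h2]

lemma hitB_bounds {Tgt K : Set (List A)} :
    ∀ x c, hitB Tgt K x = some c → 0 ≤ c ∧ c ≤ 1 := by
  intro x c h
  rw [hitB] at h
  split_ifs at h with h1 h2 <;> injection h with h <;> subst h <;> norm_num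

lemma surB_kill {K : Set (List A)} {y : List A} (h : y ∈ K) : surB K y = some 0 := if_pos h

lemma surB_live {K : Set (List A)} {y : List A} (h : y ∉ K) : surB K y = none := if_neg h

lemma surB_bounds {K : Set (List A)} : ∀ x c, surB K x = some c → 0 ≤ c ∧ c ≤ 1 := by
  intro x c h
  rw [surB] at h
  split_ifs at h <;> injection h with h <;> subst h <;> norm_num

lemma surB_eq_zero {K : Set (List A)} : ∀ (x : List A) (c : ℝ), surB K x = some c → c = 0 := by
  intro x c h
  rw [surB] at h
  by_cases h1 : x ∈ K
  · rw [if_pos h1] at h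
    exact (Option.some.inj h).symm
  · rw [if_neg h1] at h
    exact absurd h (by simp)

variable (T : RTree A) (hlf : T.LocFin)

/-- `P(hit Tgt within t steps, before entering K)`. -/
noncomputable def PHit (lam : ℝ) (Tgt K : Set (List A)) (t : ℕ) (x : List A) : ℝ :=
  Wit T hlf lam (hitB Tgt K) (fun _ => 0) t x

/-- `P(ever hit Tgt before entering K)`. -/
noncomputable def PHitSup (lam : ℝ) (Tgt K : Set (List A)) (x : List A) : ℝ :=
  ⨆ t, PHit T hlf lam Tgt K t x

/-- `P(avoid K for t steps)`. -/
noncomputable def PSur (lam : ℝ) (K : Set (List A)) (t : ℕ) (x : List A) : ℝ :=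
  Wit T hlf lam (surB K) (fun _ => 1) t x

/-- `P(avoid K forever)`. -/
noncomputable def PSurInf (lam : ℝ) (K : Set (List A)) (x : List A) : ℝ :=
  ⨅ t, PSur T hlf lam K t x

variable {lam : ℝ} {Tgt K : Set (List A)}

lemma PHit_nonneg (hlam : 0 ≤ lam) (t : ℕ) (x : List A) : 0 ≤ PHit T hlf lam Tgt K t x :=
  Wit_nonneg T hlf _ _ hlam (fun x c h => (hitB_bounds x c h).1) (fun _ => le_rfl) t x

lemma PHit_le_one (hlam : 0 < lam) (t : ℕ) (x : List A) : PHit T hlf lam Tgt K t x ≤ 1 :=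
  Wit_le_one T hlf _ _ hlam (fun x c h => (hitB_bounds x c h).2) (fun _ => zero_le_one)
    (fun x c h => (hitB_bounds x c h).1) (fun _ => le_rfl) t x

lemma PHit_monotone (hlam : 0 ≤ lam) (x : List A) :
    Monotone fun t => PHit T hlf lam Tgt K t x :=
  Wit_monotone_zero T hlf _ hlam (fun x c h => (hitB_bounds x c h).1) x

lemma PHit_bddAbove (hlam : 0 < lam) (x : List A) :
    BddAbove (Set.range fun t => PHit T hlf lam Tgt K t x) := by
  refine ⟨1, ?_⟩
  rintro _ ⟨t, rfl⟩
  exact PHit_le_one T hlf hlam t x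

lemma PHit_le_PHitSup (hlam : 0 < lam) (t : ℕ) (x : List A) :
    PHit T hlf lam Tgt K t x ≤ PHitSup T hlf lam Tgt K x :=
  le_ciSup (PHit_bddAbove T hlf hlam x) t

lemma PHitSup_le (b : ℝ) (h : ∀ t, PHit T hlf lam Tgt K t x ≤ b) :
    PHitSup T hlf lam Tgt K x ≤ b := ciSup_le h

lemma PHitSup_nonneg (hlam : 0 < lam) (x : List A) : 0 ≤ PHitSup T hlf lam Tgt K x :=
  le_trans (PHit_nonneg T hlf hlam.le 0 x) (PHit_le_PHitSup T hlf hlam 0 x)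

lemma PHitSup_le_one (hlam : 0 < lam) (x : List A) : PHitSup T hlf lam Tgt K x ≤ 1 :=
  PHitSup_le T hlf _ (fun t => PHit_le_one T hlf hlam t x)

lemma PHit_tgt {x : List A} (h : x ∈ Tgt) (t : ℕ) : PHit T hlf lam Tgt K t x = 1 :=
  Wit_absorbed T hlf _ _ (hitB_tgt h) t

lemma PHitSup_tgt {x : List A} (h : x ∈ Tgt) : PHitSup T hlf lam Tgt K x = 1 := by
  rw [PHitSup]
  simp only [PHit_tgt T hlf h]
  exact ciSup_const

lemma PHit_kill {x : List A} (h1 : x ∉ Tgt) (h2 : x ∈ K) (t : ℕ) :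
    PHit T hlf lam Tgt K t x = 0 :=
  Wit_absorbed T hlf _ _ (hitB_kill h1 h2) t

lemma PHitSup_kill {x : List A} (h1 : x ∉ Tgt) (h2 : x ∈ K) :
    PHitSup T hlf lam Tgt K x = 0 := by
  rw [PHitSup]
  simp only [PHit_kill T hlf h1 h2]
  exact ciSup_const

lemma PHit_succ_live {x : List A} (h1 : x ∉ Tgt) (h2 : x ∉ K) (t : ℕ) :
    PHit T hlf lam Tgt K (t+1) x
      = ∑ y ∈ T.nbrF hlf x, T.step lam x y * PHit T hlf lam Tgt K t y :=
  Wit_succ_live T hlf _ _ (hitB_live h1 h2) t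

lemma PHit_zero_live {x : List A} (h1 : x ∉ Tgt) (h2 : x ∉ K) :
    PHit T hlf lam Tgt K 0 x = 0 :=
  Wit_zero_live T hlf _ _ (hitB_live h1 h2)

lemma PHitSup_tendsto (hlam : 0 < lam) (x : List A) :
    Filter.Tendsto (fun t => PHit T hlf lam Tgt K t x) Filter.atTop
      (nhds (PHitSup T hlf lam Tgt K x)) :=
  tendsto_atTop_ciSup (PHit_monotone T hlf hlam.le x) (PHit_bddAbove T hlf hlam x)

lemma PHitSup_live (hlam : 0 < lam) {x : List A} (h1 : x ∉ Tgt) (h2 : x ∉ K) :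
    PHitSup T hlf lam Tgt K x
      = ∑ y ∈ T.nbrF hlf x, T.step lam x y * PHitSup T hlf lam Tgt K y := by
  have hb : Filter.Tendsto (fun t => PHit T hlf lam Tgt K (t+1) x) Filter.atTop
      (nhds (PHitSup T hlf lam Tgt K x)) :=
    (PHitSup_tendsto T hlf hlam x).comp (Filter.tendsto_add_atTop_nat 1)
  have hd : Filter.Tendsto
      (fun t => ∑ y ∈ T.nbrF hlf x, T.step lam x y * PHit T hlf lam Tgt K t y)
      Filter.atTop
      (nhds (∑ y ∈ T.nbrF hlf x, T.step lam x y * PHitSup T hlf lam Tgt K y)) :=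
    tendsto_finset_sum _ fun y _ => (PHitSup_tendsto T hlf hlam y).const_mul _
  refine tendsto_nhds_unique ?_ hd
  simpa only [PHit_succ_live T hlf h1 h2] using hb

lemma PSur_nonneg (hlam : 0 ≤ lam) (t : ℕ) (x : List A) : 0 ≤ PSur T hlf lam K t x :=
  Wit_nonneg T hlf _ _ hlam (fun x c h => (surB_bounds x c h).1) (fun _ => zero_le_one) t x

lemma PSur_le_one (hlam : 0 < lam) (t : ℕ) (x : List A) : PSur T hlf lam K t x ≤ 1 :=
  Wit_le_one T hlf _ _ hlam (fun x c h => (surB_bounds x c h).2) (fun _ => le_rfl)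
    (fun x c h => (surB_bounds x c h).1) (fun _ => zero_le_one) t x

lemma PSur_antitone (hlam : 0 < lam) (x : List A) :
    Antitone fun t => PSur T hlf lam K t x :=
  Wit_antitone_one T hlf _ hlam (fun x c h => surB_bounds x c h) x

lemma PSur_bddBelow (hlam : 0 ≤ lam) (x : List A) :
    BddBelow (Set.range fun t => PSur T hlf lam K t x) := by
  refine ⟨0, ?_⟩
  rintro _ ⟨t, rfl⟩
  exact PSur_nonneg T hlf hlam t x

lemma PSurInf_le_PSur (hlam : 0 ≤ lam) (t : ℕ) (x : List A) :
    PSurInf T hlf lam K x ≤ PSur T hlf lam K t x :=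
  ciInf_le (PSur_bddBelow T hlf hlam x) t

lemma PSurInf_nonneg (hlam : 0 ≤ lam) (x : List A) : 0 ≤ PSurInf T hlf lam K x :=
  le_ciInf fun t => PSur_nonneg T hlf hlam t x

lemma PSurInf_le_one (hlam : 0 < lam) (x : List A) : PSurInf T hlf lam K x ≤ 1 :=
  le_trans (PSurInf_le_PSur T hlf hlam.le 0 x) (PSur_le_one T hlf hlam 0 x)

lemma PSur_kill {x : List A} (h : x ∈ K) (t : ℕ) : PSur T hlf lam K t x = 0 :=
  Wit_absorbed T hlf _ _ (surB_kill h) t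

lemma PSurInf_kill {x : List A} (h : x ∈ K) : PSurInf T hlf lam K x = 0 := by
  rw [PSurInf]
  simp only [PSur_kill T hlf h]
  exact ciInf_const

lemma PSur_succ_live {x : List A} (h : x ∉ K) (t : ℕ) :
    PSur T hlf lam K (t+1) x
      = ∑ y ∈ T.nbrF hlf x, T.step lam x y * PSur T hlf lam K t y :=
  Wit_succ_live T hlf _ _ (surB_live h) t

lemma PSur_zero_live {x : List A} (h : x ∉ K) : PSur T hlf lam K 0 x = 1 :=
  Wit_zero_live T hlf _ _ (surB_live h)

lemma PSurInf_tendsto (hlam : 0 < lam) (x : List A) :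
    Filter.Tendsto (fun t => PSur T hlf lam K t x) Filter.atTop
      (nhds (PSurInf T hlf lam K x)) :=
  tendsto_atTop_ciInf (PSur_antitone T hlf hlam x) (PSur_bddBelow T hlf hlam.le x)

/-- Complement identity: hitting `K` (from anywhere, no kill elsewhere) is the complement
of surviving, on the tree. -/
lemma PHit_eq_one_sub_PSur (hlam : 0 < lam)
    (hroot : T.numChildren ([] : List A) ≠ 0) :
    ∀ t, ∀ x ∈ T.mem, PHit T hlf lam K ∅ t x = 1 - PSur T hlf lam K t x := by
  intro t
  induction t with
  | zero =>
      intro x hx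
      by_cases h : x ∈ K
      · rw [PHit_tgt T hlf h, PSur_kill T hlf h]; norm_num
      · rw [PHit_zero_live T hlf h (Set.notMem_empty x), PSur_zero_live T hlf h]
        norm_num
  | succ t ih =>
      intro x hx
      by_cases h : x ∈ K
      · rw [PHit_tgt T hlf h, PSur_kill T hlf h]; norm_num
      · rw [PHit_succ_live T hlf h (Set.notMem_empty x), PSur_succ_live T hlf h]
        have hsum : ∑ y ∈ T.nbrF hlf x, T.step lam x y = 1 := by
          by_cases hx0 : x = []
          · subst hx0
            rw [nbrF_nil, sum_step_children_root, if_neg hroot]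
          · exact T.sum_step_nbr hlf hlam hx hx0
        have : ∀ y ∈ T.nbrF hlf x,
            T.step lam x y * PHit T hlf lam K ∅ t y
              = T.step lam x y * 1 - T.step lam x y * PSur T hlf lam K t y := by
          intro y hy
          by_cases hz : T.step lam x y = 0
          · rw [hz]; ring
          · obtain ⟨_, hym, _⟩ := T.step_ne_zero hlf hz
            rw [ih y hym]; ring
        rw [Finset.sum_congr rfl this, Finset.sum_sub_distrib]
        simp only [mul_one]
        rw [hsum]

end RTree

end AuxLimits

section AuxMaster

variable {A : Type*}

lemma ciInf_const_mul_of_nonneg {c : ℝ} (hc : 0 ≤ c) {f : ℕ → ℝ} (hf : Antitone f)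
    (hb : BddBelow (Set.range f)) : ⨅ t, c * f t = c * ⨅ t, f t := by
  have h1 : Filter.Tendsto (fun t => c * f t) Filter.atTop (nhds (c * ⨅ t, f t)) :=
    (tendsto_atTop_ciInf hf hb).const_mul c
  have h2 : Antitone fun t => c * f t := fun u v huv =>
    mul_le_mul_of_nonneg_left (hf huv) hc
  have h3 : BddBelow (Set.range fun t => c * f t) := by
    obtain ⟨m, hm⟩ := hb
    refine ⟨c * m, ?_⟩
    rintro _ ⟨t, rfl⟩
    exact mul_le_mul_of_nonneg_left (hm ⟨t, rfl⟩) hc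
  exact tendsto_nhds_unique (tendsto_atTop_ciInf h2 h3) h1

namespace RTree

variable (T : RTree A) (hlf : T.LocFin)

lemma pathProb_nonneg {lam : ℝ} (hlam : 0 ≤ lam) : ∀ l, 0 ≤ T.pathProb lam l := by
  intro l
  induction l with
  | nil => exact zero_le_one
  | cons x tail ih =>
      cases tail with
      | nil => exact zero_le_one
      | cons y r =>
          have : T.pathProb lam (x :: y :: r) = T.step lam x y * T.pathProb lam (y :: r) := rfl
          rw [this]
          exact mul_nonneg (T.step_nonneg hlam x y) ih

lemma pathProb_cons (lam : ℝ) {l : List (List A)} {y : List A} (h : l.head? = some y)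
    (x : List A) : T.pathProb lam (x :: l) = T.step lam x y * T.pathProb lam l := by
  cases l with
  | nil => simp at h
  | cons z r =>
      have hz : z = y := by rw [List.head?_cons] at h; exact Option.some.inj h
      subst hz
      rfl

/-- The finite set of all length-`n` neighbour-paths starting at `x`. -/
noncomputable def pathFin (T : RTree A) (hlf : T.LocFin) : ℕ → List A → Finset (List (List A))
  | 0, x => {[x]}
  | (n+1), x => (T.nbrF hlf x).biUnion fun y => (pathFin T hlf n y).image (List.cons x)

lemma head?_of_mem_pathFin : ∀ (n : ℕ) (x : List A) (l : List (List A)),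
    l ∈ pathFin T hlf n x → l.head? = some x := by
  intro n
  induction n with
  | zero =>
      intro x l hl
      simp only [pathFin, Finset.mem_singleton] at hl
      subst hl; rfl
  | succ n ih =>
      intro x l hl
      simp only [pathFin, Finset.mem_biUnion, Finset.mem_image] at hl
      obtain ⟨y, _, l', _, rfl⟩ := hl
      rfl

lemma length_of_mem_pathFin : ∀ (n : ℕ) (x : List A) (l : List (List A)),
    l ∈ pathFin T hlf n x → l.length = n + 1 := by
  intro n
  induction n with
  | zero =>
      intro x l hl
      simp only [pathFin, Finset.mem_singleton] at hl
      subst hl; rfl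
  | succ n ih =>
      intro x l hl
      simp only [pathFin, Finset.mem_biUnion, Finset.mem_image] at hl
      obtain ⟨y, _, l', hl', rfl⟩ := hl
      simp [ih y l' hl']

lemma mem_pathFin_of_pathProb_ne_zero {lam : ℝ} :
    ∀ (n : ℕ) (x : List A) (l : List (List A)), l.length = n + 1 → l.head? = some x →
    T.pathProb lam l ≠ 0 → l ∈ pathFin T hlf n x := by
  intro n
  induction n with
  | zero =>
      intro x l hlen hhead _
      obtain ⟨v, rfl⟩ := List.length_eq_one_iff.1 hlen
      have : x = v := by symm; simpa using hhead
      subst this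
      simp [pathFin]
  | succ n ih =>
      intro x l hlen hhead hne
      cases l with
      | nil => simp at hlen
      | cons x' tail =>
          have hx : x = x' := by symm; simpa using hhead
          subst hx
          cases tail with
          | nil => simp at hlen
          | cons y r =>
              have hp : T.pathProb lam (x :: y :: r)
                  = T.step lam x y * T.pathProb lam (y :: r) := rfl
              rw [hp] at hne
              have hstep : T.step lam x y ≠ 0 := fun h => hne (by rw [h, zero_mul])
              have hrest : T.pathProb lam (y :: r) ≠ 0 := fun h => hne (by rw [h, mul_zero])
              have hnbr : y ∈ T.nbrF hlf x := (T.step_ne_zero hlf hstep).2.2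
              have hmem : (y :: r) ∈ pathFin T hlf n y := by
                refine ih y (y :: r) ?_ rfl hrest
                simpa using hlen
              simp only [pathFin, Finset.mem_biUnion, Finset.mem_image]
              exact ⟨y, hnbr, y :: r, hmem, rfl⟩

/-- Conversion of the cylinder tsum into a finite sum over neighbour-paths. -/
lemma tsum_paths_eq_sum (lam : ℝ) (n : ℕ) (x : List A) (C : ℕ → List A → Prop) :
    (∑' l : {l : List (List A) // l.length = n + 1 ∧ l.head? = some x ∧
        ∀ (i : ℕ) (h : i < l.length), C i (l.get ⟨i, h⟩)}, T.pathProb lam l.1)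
      = ∑ l ∈ pathFin T hlf n x,
          Set.indicator {l' : List (List A) | ∀ (i : ℕ) (h : i < l'.length),
            C i (l'.get ⟨i, h⟩)} (T.pathProb lam) l := by
  refine Eq.trans (tsum_subtype {l : List (List A) | l.length = n + 1 ∧ l.head? = some x ∧
      ∀ (i : ℕ) (h : i < l.length), C i (l.get ⟨i, h⟩)} (T.pathProb lam)) ?_
  rw [tsum_eq_sum (s := pathFin T hlf n x) ?_]
  · refine Finset.sum_congr rfl fun l hl => ?_
    by_cases hC : l ∈ {l' : List (List A) | ∀ (i : ℕ) (h : i < l'.length),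
        C i (l'.get ⟨i, h⟩)}
    · rw [Set.indicator_of_mem hC]
      rw [Set.indicator_of_mem]
      exact ⟨length_of_mem_pathFin T hlf n x l hl, head?_of_mem_pathFin T hlf n x l hl, hC⟩
    · rw [Set.indicator_of_notMem hC]
      rw [Set.indicator_of_notMem]
      intro hm
      exact hC hm.2.2
  · intro l hl
    by_cases hm : l ∈ {l : List (List A) | l.length = n + 1 ∧ l.head? = some x ∧
        ∀ (i : ℕ) (h : i < l.length), C i (l.get ⟨i, h⟩)}
    · rw [Set.indicator_of_mem hm]
      by_contra hne
      exact hl (mem_pathFin_of_pathProb_ne_zero T hlf n x l hm.1 hm.2.1 hne)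
    · exact Set.indicator_of_notMem hm _

/-- Splitting off the first step of a finite path sum. -/
lemma sum_paths_succ (lam : ℝ) (n : ℕ) (x : List A) (C : ℕ → List A → Prop) (hC0 : C 0 x) :
    (∑ l ∈ pathFin T hlf (n+1) x,
        Set.indicator {l' : List (List A) | ∀ (i : ℕ) (h : i < l'.length),
          C i (l'.get ⟨i, h⟩)} (T.pathProb lam) l)
      = ∑ y ∈ T.nbrF hlf x, T.step lam x y *
          ∑ l ∈ pathFin T hlf n y,
            Set.indicator {l' : List (List A) | ∀ (i : ℕ) (h : i < l'.length),
              C (i+1) (l'.get ⟨i, h⟩)} (T.pathProb lam) l := by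
  have hdisj : ∀ y ∈ T.nbrF hlf x, ∀ z ∈ T.nbrF hlf x, y ≠ z →
      Disjoint ((pathFin T hlf n y).image (List.cons x))
        ((pathFin T hlf n z).image (List.cons x)) := by
    intro y _ z _ hyz
    rw [Finset.disjoint_left]
    intro l hly hlz
    rw [Finset.mem_image] at hly hlz
    obtain ⟨ly, hly1, rfl⟩ := hly
    obtain ⟨lz, hlz1, hlz2⟩ := hlz
    have h1 := head?_of_mem_pathFin T hlf n y ly hly1
    have h2 := head?_of_mem_pathFin T hlf n z lz hlz1
    have heq : lz = ly := by injection hlz2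
    subst heq
    rw [h1] at h2
    exact hyz (Option.some.inj h2)
  rw [show pathFin T hlf (n+1) x
      = (T.nbrF hlf x).biUnion fun y => (pathFin T hlf n y).image (List.cons x) from rfl]
  rw [Finset.sum_biUnion hdisj]
  refine Finset.sum_congr rfl fun y hy => ?_
  rw [Finset.sum_image (fun a _ b _ hab => by injection hab), Finset.mul_sum]
  refine Finset.sum_congr rfl fun l hl => ?_
  have hhead := head?_of_mem_pathFin T hlf n y l hl
  by_cases hm : l ∈ {l' : List (List A) | ∀ (i : ℕ) (h : i < l'.length),
      C (i+1) (l'.get ⟨i, h⟩)}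
  · have hm2 : (x :: l) ∈ {l' : List (List A) | ∀ (i : ℕ) (h : i < l'.length),
        C i (l'.get ⟨i, h⟩)} := by
      intro i h
      cases i with
      | zero => simpa using hC0
      | succ j =>
          have hj : j < l.length := by simpa using h
          have := hm j hj
          simpa using this
    rw [Set.indicator_of_mem hm2, Set.indicator_of_mem hm]
    exact T.pathProb_cons lam hhead x
  · have hm2 : (x :: l) ∉ {l' : List (List A) | ∀ (i : ℕ) (h : i < l'.length),
        C i (l'.get ⟨i, h⟩)} := by
      intro hc
      apply hm
      intro i h
      have h' : i + 1 < (x :: l).length := by simpa using Nat.succ_lt_succ h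
      have := hc (i+1) h'
      simpa using this
    rw [Set.indicator_of_notMem hm2, Set.indicator_of_notMem hm, mul_zero]

lemma get_zero_of_head? {l : List (List A)} {y : List A} (h : l.head? = some y)
    (hh : 0 < l.length) : l.get ⟨0, hh⟩ = y := by
  cases l with
  | nil => simp at h
  | cons z r =>
      have hz : z = y := by rw [List.head?_cons] at h; exact Option.some.inj h
      simp [hz]

/-- Identification of the survival path sums with the `PSur` recursion. -/
lemma sum_paths_eq_PSur {lam : ℝ} (hlam : 0 < lam) :
    ∀ (n : ℕ) (x : List A), x ≠ [] →
    (∑ l ∈ pathFin T hlf n x,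
        Set.indicator {l' : List (List A) | ∀ (i : ℕ) (h : i < l'.length),
          l'.get ⟨i, h⟩ ≠ ([] : List A)} (T.pathProb lam) l)
      = PSur T hlf lam {[]} n x := by
  intro n
  induction n with
  | zero =>
      intro x hx
      rw [show pathFin T hlf 0 x = {[x]} from rfl, Finset.sum_singleton]
      rw [Set.indicator_of_mem]
      · rw [PSur_zero_live T hlf (by simpa using hx)]
        rfl
      · intro i h
        have hi : i = 0 := by simp at h; omega
        subst hi
        simpa using hx
  | succ n ih =>
      intro x hx
      have hs := sum_paths_succ T hlf lam n x (fun _ v => v ≠ ([] : List A)) hx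
      rw [hs, PSur_succ_live T hlf (by simpa using hx)]
      refine Finset.sum_congr rfl fun y hy => ?_
      have hset : {l' : List (List A) | ∀ (i : ℕ) (h : i < l'.length),
          (fun (_ : ℕ) (v : List A) => v ≠ ([] : List A)) (i+1) (l'.get ⟨i, h⟩)}
          = {l' : List (List A) | ∀ (i : ℕ) (h : i < l'.length),
              l'.get ⟨i, h⟩ ≠ ([] : List A)} := rfl
      rw [hset]
      by_cases hynil : y = []
      · subst hynil
        have hzero : (∑ l ∈ pathFin T hlf n ([] : List A),
            Set.indicator {l' : List (List A) | ∀ (i : ℕ) (h : i < l'.length),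
              l'.get ⟨i, h⟩ ≠ ([] : List A)} (T.pathProb lam) l) = 0 := by
          refine Finset.sum_eq_zero fun l hl => ?_
          refine Set.indicator_of_notMem ?_ _
          intro hall
          have hlen := length_of_mem_pathFin T hlf n _ l hl
          have hpos : 0 < l.length := by omega
          have := hall 0 hpos
          rw [get_zero_of_head? (head?_of_mem_pathFin T hlf n _ l hl) hpos] at this
          exact this rfl
        rw [hzero, PSur_kill T hlf (Set.mem_singleton _)]
      · rw [ih y hynil]

include hlf in
lemma cylProb_zero_eq (lam : ℝ) :
    T.cylProb lam 0 (fun i v => i ≠ 0 → v ≠ []) = 1 := by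
  have h1 : T.cylProb lam 0 (fun i v => i ≠ 0 → v ≠ []) = _ :=
    tsum_paths_eq_sum T hlf lam 0 ([] : List A) (fun i v => i ≠ 0 → v ≠ ([] : List A))
  rw [h1]
  rw [show pathFin T hlf 0 ([] : List A) = {[([] : List A)]} from rfl, Finset.sum_singleton]
  rw [Set.indicator_of_mem]
  · rfl
  · intro i h
    have hi : i = 0 := by simp at h; omega
    subst hi
    intro hne
    exact absurd rfl hne

/-- The no-return cylinder probabilities equal the killed-at-root recursion. -/
lemma cylProb_succ_eq {lam : ℝ} (hlam : 0 < lam) (M : ℕ) :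
    T.cylProb lam (M+1) (fun i v => i ≠ 0 → v ≠ [])
      = ∑ y ∈ T.nbrF hlf [], T.step lam [] y * PSur T hlf lam {[]} M y := by
  have h1 : T.cylProb lam (M+1) (fun i v => i ≠ 0 → v ≠ []) = _ :=
    tsum_paths_eq_sum T hlf lam (M+1) ([] : List A) (fun i v => i ≠ 0 → v ≠ ([] : List A))
  have h2 := sum_paths_succ T hlf lam M ([] : List A)
    (fun i v => i ≠ 0 → v ≠ ([] : List A)) (by simp)
  rw [h1, h2]
  refine Finset.sum_congr rfl fun y hy => ?_
  congr 1
  have hset : {l' : List (List A) | ∀ (i : ℕ) (h : i < l'.length),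
      (fun i v => i ≠ 0 → v ≠ ([] : List A)) (i+1) (l'.get ⟨i, h⟩)}
      = {l' : List (List A) | ∀ (i : ℕ) (h : i < l'.length),
          l'.get ⟨i, h⟩ ≠ ([] : List A)} := by
    ext l'
    constructor
    · intro h i hi; exact h i hi (Nat.succ_ne_zero i)
    · intro h i hi _; exact h i hi
  rw [hset]
  by_cases hynil : y = []
  · subst hynil
    rw [PSur_kill T hlf (Set.mem_singleton _)]
    refine Finset.sum_eq_zero fun l hl => ?_
    refine Set.indicator_of_notMem ?_ _
    intro hall
    have hlen := length_of_mem_pathFin T hlf M _ l hl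
    have hpos : 0 < l.length := by omega
    have := hall 0 hpos
    rw [get_zero_of_head? (head?_of_mem_pathFin T hlf M _ l hl) hpos] at this
    exact this rfl
  · exact sum_paths_eq_PSur T hlf hlam M y hynil

include hlf in
lemma cylProb_nonneg {lam : ℝ} (hlam : 0 ≤ lam) (M : ℕ) (P : ℕ → List A → Prop) :
    0 ≤ T.cylProb lam M P := by
  have h1 : T.cylProb lam M P = _ := tsum_paths_eq_sum T hlf lam M ([] : List A) P
  rw [h1]
  refine Finset.sum_nonneg fun l _ => ?_
  exact Set.indicator_nonneg (fun l' _ => T.pathProb_nonneg hlam l') l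

/-- The escape probability as a one-step sum of killed survival infima. -/
lemma escProb_eq {lam : ℝ} (hlam : 0 < lam) :
    T.escProb lam = ∑ y ∈ T.nbrF hlf [], T.step lam [] y * PSurInf T hlf lam {[]} y := by
  have hg : ∀ M, T.cylProb lam (M+1) (fun i v => i ≠ 0 → v ≠ [])
      = ∑ y ∈ T.nbrF hlf [], T.step lam [] y * PSur T hlf lam {[]} M y :=
    fun M => cylProb_succ_eq T hlf hlam M
  have hgle : ∀ M, (∑ y ∈ T.nbrF hlf [], T.step lam [] y * PSur T hlf lam {[]} M y) ≤ 1 := by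
    intro M
    calc (∑ y ∈ T.nbrF hlf [], T.step lam [] y * PSur T hlf lam {[]} M y)
        ≤ ∑ y ∈ T.nbrF hlf [], T.step lam [] y := by
          refine Finset.sum_le_sum fun y _ => ?_
          exact mul_le_of_le_one_right (T.step_nonneg hlam.le _ y) (PSur_le_one T hlf hlam M y)
      _ ≤ 1 := T.sum_step_nbr_le_one hlf hlam []
  have hbdd : BddBelow (Set.range fun M => T.cylProb lam M (fun i v => i ≠ 0 → v ≠ [])) := by
    refine ⟨0, ?_⟩
    rintro _ ⟨M, rfl⟩
    exact cylProb_nonneg T hlf hlam.le M _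
  have hbdd2 : BddBelow (Set.range fun M =>
      ∑ y ∈ T.nbrF hlf [], T.step lam [] y * PSur T hlf lam {[]} M y) := by
    refine ⟨0, ?_⟩
    rintro _ ⟨M, rfl⟩
    exact Finset.sum_nonneg fun y _ =>
      mul_nonneg (T.step_nonneg hlam.le _ y) (PSur_nonneg T hlf hlam.le M y)
  have hmain : T.escProb lam
      = ⨅ M, ∑ y ∈ T.nbrF hlf [], T.step lam [] y * PSur T hlf lam {[]} M y := by
    apply le_antisymm
    · refine le_ciInf fun M => ?_
      calc T.escProb lam ≤ T.cylProb lam (M+1) (fun i v => i ≠ 0 → v ≠ []) :=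
            ciInf_le hbdd (M+1)
        _ = _ := hg M
    · refine le_ciInf fun M => ?_
      cases M with
      | zero =>
          rw [cylProb_zero_eq T hlf lam]
          calc (⨅ M, ∑ y ∈ T.nbrF hlf [], T.step lam [] y * PSur T hlf lam {[]} M y)
              ≤ ∑ y ∈ T.nbrF hlf [], T.step lam [] y * PSur T hlf lam {[]} 0 y :=
                ciInf_le hbdd2 0
            _ ≤ 1 := hgle 0
      | succ M =>
          rw [hg M]
          exact ciInf_le hbdd2 M
  rw [hmain]
  have hbb : ∀ y ∈ T.nbrF hlf [],
      BddBelow (Set.range fun t => T.step lam [] y * PSur T hlf lam {[]} t y) := by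
    intro y _
    refine ⟨0, ?_⟩
    rintro _ ⟨t, rfl⟩
    exact mul_nonneg (T.step_nonneg hlam.le _ y) (PSur_nonneg T hlf hlam.le t y)
  refine Eq.trans (iInf_sum_of_antitone (T.nbrF hlf [])
      (fun y t => T.step lam [] y * PSur T hlf lam {[]} t y)
      (fun y _ => fun u v huv => mul_le_mul_of_nonneg_left
        (PSur_antitone T hlf hlam y huv) (T.step_nonneg hlam.le _ y)) hbb) ?_
  refine Finset.sum_congr rfl fun y _ => ?_
  exact ciInf_const_mul_of_nonneg (T.step_nonneg hlam.le _ y)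
    (PSur_antitone T hlf hlam y) (PSur_bddBelow T hlf hlam.le y)

end RTree

end AuxMaster

section AuxSubtree

variable {A : Type*}

namespace RTree

lemma mem_subtree_iff (T : RTree A) (v : List A) {x : List A} (hx : x ≠ []) :
    x ∈ (T.subtree v).mem ↔ v ++ x ∈ T.mem := by
  simp [subtree, hx]

lemma mem_subtree_iff' (T : RTree A) {v : List A} (hv : v ∈ T.mem) (x : List A) :
    x ∈ (T.subtree v).mem ↔ v ++ x ∈ T.mem := by
  by_cases hx : x = []
  · subst hx; simp [subtree, hv]
  · exact mem_subtree_iff T v hx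

lemma subtree_childSet (T : RTree A) (v x : List A) :
    (T.subtree v).childSet x = T.childSet (v ++ x) := by
  ext a
  simp [childSet, subtree, List.append_assoc]

lemma subtree_locFin (T : RTree A) (hlf : T.LocFin) (v : List A) : (T.subtree v).LocFin := by
  intro x hx
  have h := T.childSet_finite hlf (v ++ x)
  rw [show {a : A | x ++ [a] ∈ (T.subtree v).mem} = (T.subtree v).childSet x from rfl,
    subtree_childSet] at *
  exact h

lemma subtree_numChildren (T : RTree A) (v x : List A) :
    (T.subtree v).numChildren x = T.numChildren (v ++ x) := by
  have h := subtree_childSet T v x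
  rw [numChildren, numChildren]
  rw [show {a : A | x ++ [a] ∈ (T.subtree v).mem} = (T.subtree v).childSet x from rfl, h]
  rfl

lemma append_eq_self_iff (v x : List A) : v ++ x = v ↔ x = [] := by
  constructor
  · intro h
    have h2 : v ++ x = v ++ [] := by rw [h, List.append_nil]
    exact List.append_right_injective v h2
  · rintro rfl; simp

lemma subtree_step (T : RTree A) {v : List A} (hv : v ∈ T.mem) (lam : ℝ)
    {x : List A} (hx : x ≠ []) (y : List A) :
    (T.subtree v).step lam x y = T.step lam (v ++ x) (v ++ y) := by
  have hmem := mem_subtree_iff' T hv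
  have hchild : (∃ a : A, y = x ++ [a]) ↔ ∃ a : A, v ++ y = (v ++ x) ++ [a] := by
    constructor
    · rintro ⟨a, rfl⟩; exact ⟨a, by rw [List.append_assoc]⟩
    · rintro ⟨a, ha⟩
      rw [List.append_assoc] at ha
      exact ⟨a, List.append_right_injective v ha⟩
  have hvx : v ++ x ≠ [] := by simp [hx]
  have hpar : y = x.dropLast ↔ v ++ y = (v ++ x).dropLast := by
    rw [List.dropLast_append_of_ne_nil hx]
    constructor
    · rintro rfl; rfl
    · intro h; exact List.append_right_injective v h
  have hnum := subtree_numChildren T v x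
  simp only [step, hnum]
  by_cases h1 : v ++ x ∈ T.mem ∧ v ++ y ∈ T.mem
  · rw [if_pos ⟨(hmem x).2 h1.1, (hmem y).2 h1.2⟩, if_pos h1]
    by_cases h2 : ∃ a : A, y = x ++ [a]
    · rw [if_pos h2, if_pos (hchild.1 h2), if_neg hx, if_neg hvx]
    · rw [if_neg h2, if_neg (fun hc => h2 (hchild.2 hc))]
      by_cases h3 : y = x.dropLast
      · rw [if_pos ⟨hx, h3⟩, if_pos ⟨hvx, hpar.1 h3⟩]
      · rw [if_neg (fun hc => h3 hc.2), if_neg (fun hc : (v ++ x ≠ [] ∧ _) => h3 (hpar.2 hc.2))]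
  · rw [if_neg (fun hc : (x ∈ (T.subtree v).mem ∧ y ∈ (T.subtree v).mem) =>
      h1 ⟨(hmem x).1 hc.1, (hmem y).1 hc.2⟩), if_neg h1]

lemma subtree_childF (T : RTree A) (hlf : T.LocFin) (v x : List A) :
    ((T.subtree v).childF (subtree_locFin T hlf v) x).image (v ++ ·)
      = T.childF hlf (v ++ x) := by
  ext z
  simp only [childF, Finset.mem_image, Set.Finite.mem_toFinset]
  constructor
  · rintro ⟨y, ⟨a, ha, rfl⟩, rfl⟩
    have : a ∈ (T.subtree v).childSet x := ha
    rw [subtree_childSet] at this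
    exact ⟨a, this, by rw [List.append_assoc]⟩
  · rintro ⟨a, ha, rfl⟩
    refine ⟨x ++ [a], ⟨a, ?_, rfl⟩, by rw [List.append_assoc]⟩
    show a ∈ (T.subtree v).childSet x
    rw [subtree_childSet]
    exact ha

lemma subtree_nbrF (T : RTree A) (hlf : T.LocFin) (v : List A) {x : List A} (hx : x ≠ []) :
    ((T.subtree v).nbrF (subtree_locFin T hlf v) x).image (v ++ ·)
      = T.nbrF hlf (v ++ x) := by
  have hvx : v ++ x ≠ [] := by simp [hx]
  rw [nbrF, nbrF, if_neg hx, if_neg hvx, Finset.image_union, subtree_childF T hlf]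
  congr 1
  rw [Finset.image_singleton, List.dropLast_append_of_ne_nil hx]

lemma subtree_PSur (T : RTree A) (hlf : T.LocFin) {v : List A} (hv : v ∈ T.mem)
    {lam : ℝ} :
    ∀ (t : ℕ) {x : List A}, x ≠ [] →
      PSur (T.subtree v) (subtree_locFin T hlf v) lam {[]} t x
        = PSur T hlf lam {v} t (v ++ x) := by
  intro t
  induction t with
  | zero =>
      intro x hx
      rw [PSur_zero_live _ _ (by simpa using hx), PSur_zero_live]
      rw [Set.mem_singleton_iff, append_eq_self_iff]
      exact hx
  | succ t ih =>
      intro x hx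
      have hvx : v ++ x ∉ ({v} : Set (List A)) := by
        rw [Set.mem_singleton_iff, append_eq_self_iff]; exact hx
      rw [PSur_succ_live _ _ (by simpa using hx), PSur_succ_live _ _ hvx]
      rw [← subtree_nbrF T hlf v hx,
        Finset.sum_image (fun a _ b _ hab => List.append_right_injective v hab)]
      refine Finset.sum_congr rfl fun y hy => ?_
      rw [subtree_step T hv lam hx y]
      congr 1
      by_cases hynil : y = []
      · subst hynil
        rw [PSur_kill (T.subtree v) (subtree_locFin T hlf v) (Set.mem_singleton _),
          PSur_kill T hlf (show v ++ [] ∈ ({v} : Set (List A)) by simp)]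
      · exact ih hynil

lemma subtree_PSurInf (T : RTree A) (hlf : T.LocFin) {v : List A} (hv : v ∈ T.mem)
    {lam : ℝ} {x : List A} (hx : x ≠ []) :
    PSurInf (T.subtree v) (subtree_locFin T hlf v) lam {[]} x
      = PSurInf T hlf lam {v} (v ++ x) := by
  rw [PSurInf, PSurInf]
  exact iInf_congr fun t => subtree_PSur T hlf hv t hx

/-- The escape probability of the subtree at `v`, in terms of survival probabilities
of the walk on `T` killed at `v`. -/
lemma escProb_subtree_eq (T : RTree A) (hlf : T.LocFin) {v : List A} (hv : v ∈ T.mem)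
    {lam : ℝ} (hlam : 0 < lam) :
    (T.subtree v).escProb lam
      = ∑ y ∈ T.childF hlf v, (1 / (T.numChildren v : ℝ)) * PSurInf T hlf lam {v} y := by
  rw [escProb_eq (T.subtree v) (subtree_locFin T hlf v) hlam]
  rw [nbrF_nil]
  have himg : ((T.subtree v).childF (subtree_locFin T hlf v) []).image (v ++ ·)
      = T.childF hlf v := by
    rw [subtree_childF, List.append_nil]
  rw [← himg, Finset.sum_image (fun a _ b _ hab => List.append_right_injective v hab)]
  refine Finset.sum_congr rfl fun y hy => ?_
  have hynil : y ≠ [] := ne_nil_of_mem_childF _ _ hy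
  rw [step_child_root _ _ lam hy, subtree_PSurInf T hlf hv hynil]
  rw [show (T.subtree v).numChildren [] = T.numChildren v from by
    have := subtree_numChildren T v []
    rwa [List.append_nil] at this]

end RTree

end AuxSubtree

section AuxChain

variable {A : Type*}

namespace RTree

variable (T : RTree A) (hlf : T.LocFin)

include hlf in
/-- An infinite tree has at least one child at the root. -/
lemma root_child_ne_zero (hinf : T.mem.Infinite) : T.numChildren ([] : List A) ≠ 0 := by
  intro h0
  have hfin := T.childSet_finite hlf []
  have hempty : T.childSet [] = ∅ := by
    have : (T.childSet []).ncard = 0 := h0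
    exact (Set.ncard_eq_zero hfin).1 this
  have hsub : T.mem ⊆ {[]} := by
    intro x hx
    by_contra hne
    have hxne : x ≠ [] := by simpa using hne
    obtain ⟨a, x', rfl⟩ : ∃ (a : A) (x' : List A), x = [a] ++ x' := by
      cases x with
      | nil => exact absurd rfl hxne
      | cons a x' => exact ⟨a, x', rfl⟩
    have hmem : ([a] : List A) ∈ T.mem := T.mem_of_append_mem x' [a] hx
    have ha : a ∈ T.childSet [] := by simpa [childSet] using hmem
    rw [hempty] at ha
    exact ha
  exact hinf (Set.Finite.subset (Set.finite_singleton _) hsub)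

include hlf in
/-- A positive subtree escape probability forces at least one child. -/
lemma one_le_numChildren_of_escPos {lam : ℝ} (hlam : 0 < lam) {v : List A} (hv : v ∈ T.mem)
    (hesc : 0 < (T.subtree v).escProb lam) : 1 ≤ T.numChildren v := by
  by_contra h
  have h0 : T.numChildren v = 0 := by omega
  have hempty : T.childF hlf v = ∅ := by
    rw [← Finset.card_eq_zero, card_childF]
    exact h0
  rw [escProb_subtree_eq T hlf hv hlam, hempty, Finset.sum_empty] at hesc
  exact lt_irrefl 0 hesc

include hlf in
include hlf in
include hlf in
include hlf in
lemma escProb_subtree_le_one {lam : ℝ} (hlam : 0 < lam) {v : List A} (hv : v ∈ T.mem)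
    (hk : 1 ≤ T.numChildren v) : (T.subtree v).escProb lam ≤ 1 := by
  rw [escProb_subtree_eq T hlf hv hlam]
  have hkR : (0:ℝ) < (T.numChildren v : ℝ) := by exact_mod_cast hk
  calc (∑ y ∈ T.childF hlf v, (1 / (T.numChildren v : ℝ)) * PSurInf T hlf lam {v} y)
      ≤ ∑ y ∈ T.childF hlf v, (1 / (T.numChildren v : ℝ)) * 1 := by
        refine Finset.sum_le_sum fun y _ => ?_
        exact mul_le_mul_of_nonneg_left (PSurInf_le_one T hlf hlam y) (by positivity)
    _ = 1 := by
        rw [Finset.sum_const, card_childF, nsmul_eq_mul]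
        field_simp

include hlf in
include hlf in
include hlf in
include hlf in
lemma escProb_subtree_nonneg {lam : ℝ} (hlam : 0 < lam) {v : List A} (hv : v ∈ T.mem) :
    0 ≤ (T.subtree v).escProb lam := by
  rw [escProb_subtree_eq T hlf hv hlam]
  refine Finset.sum_nonneg fun y _ => ?_
  exact mul_nonneg (by positivity) (PSurInf_nonneg T hlf hlam.le y)

/-- Complement identity at the level of limits. -/
lemma PHitSup_eq_one_sub_PSurInf {lam : ℝ} (hlam : 0 < lam)
    (hroot : T.numChildren ([] : List A) ≠ 0) {K : Set (List A)} {y : List A}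
    (hy : y ∈ T.mem) :
    PHitSup T hlf lam K ∅ y = 1 - PSurInf T hlf lam K y := by
  rw [PHitSup]
  have h1 : ∀ t, PHit T hlf lam K ∅ t y = 1 - PSur T hlf lam K t y :=
    fun t => PHit_eq_one_sub_PSur T hlf hlam hroot t y hy
  calc (⨆ t, PHit T hlf lam K ∅ t y) = ⨆ t, (1 - PSur T hlf lam K t y) := iSup_congr h1
    _ = 1 - ⨅ t, PSur T hlf lam K t y :=
        ciSup_one_sub (PSur_antitone T hlf hlam y) (PSur_bddBelow T hlf hlam.le y)

lemma prefix_dropLast {v y : List A} (h : v <+: y) (hne : v ≠ y) : v <+: y.dropLast := by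
  obtain ⟨r, rfl⟩ := h
  have hr : r ≠ [] := by rintro rfl; simp at hne
  rw [List.dropLast_append_of_ne_nil hr]
  exact ⟨r.dropLast, rfl⟩

lemma prefix_of_mem_nbrF {v y z : List A} (hlf : T.LocFin) (h : v <+: y) (hne : v ≠ y)
    (hz : z ∈ T.nbrF hlf y) : v <+: z := by
  rw [nbrF, Finset.mem_union] at hz
  rcases hz with hz | hz
  · obtain ⟨⟨a, rfl⟩, _⟩ := (T.mem_childF hlf).1 hz
    exact h.trans (y.prefix_append [a])
  · by_cases hy : y = []
    · subst hy; simp at hz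
    · rw [if_neg hy, Finset.mem_singleton] at hz
      subst hz
      exact prefix_dropLast h hne

/-- The strong-Markov chain inequality: to hit `w` from below `v`, first hit `v`. -/
lemma hit_chain_le {lam : ℝ} (hlam : 0 < lam) {v w : List A} (hw : ¬ v <+: w) :
    ∀ (t : ℕ) {y : List A}, v <+: y →
      PHit T hlf lam {w} ∅ t y
        ≤ PHitSup T hlf lam {v} ∅ y * PHitSup T hlf lam {w} ∅ v := by
  intro t
  induction t with
  | zero =>
      intro y hy
      by_cases hyv : y = v
      · subst hyv
        rw [PHitSup_tgt T hlf (Set.mem_singleton _), one_mul]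
        exact PHit_le_PHitSup T hlf hlam 0 y
      · have hyw : y ∉ ({w} : Set (List A)) := by
          rw [Set.mem_singleton_iff]
          rintro rfl
          exact hw hy
        rw [PHit_zero_live T hlf hyw (Set.notMem_empty _)]
        exact mul_nonneg (PHitSup_nonneg T hlf hlam y) (PHitSup_nonneg T hlf hlam v)
  | succ t ih =>
      intro y hy
      by_cases hyv : y = v
      · subst hyv
        rw [PHitSup_tgt T hlf (Set.mem_singleton _), one_mul]
        exact PHit_le_PHitSup T hlf hlam (t+1) y
      · have hyw : y ∉ ({w} : Set (List A)) := by
          rw [Set.mem_singleton_iff]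
          rintro rfl
          exact hw hy
        rw [PHit_succ_live T hlf hyw (Set.notMem_empty _)]
        have hyv' : y ∉ ({v} : Set (List A)) := by simpa using hyv
        calc (∑ z ∈ T.nbrF hlf y, T.step lam y z * PHit T hlf lam {w} ∅ t z)
            ≤ ∑ z ∈ T.nbrF hlf y, T.step lam y z *
                (PHitSup T hlf lam {v} ∅ z * PHitSup T hlf lam {w} ∅ v) := by
              refine Finset.sum_le_sum fun z hz => ?_
              refine mul_le_mul_of_nonneg_left ?_ (T.step_nonneg hlam.le y z)
              exact ih (prefix_of_mem_nbrF T hlf hy (Ne.symm hyv) hz)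
          _ = (∑ z ∈ T.nbrF hlf y, T.step lam y z * PHitSup T hlf lam {v} ∅ z) *
                PHitSup T hlf lam {w} ∅ v := by
              rw [Finset.sum_mul]
              exact Finset.sum_congr rfl fun z _ => by ring
          _ = PHitSup T hlf lam {v} ∅ y * PHitSup T hlf lam {w} ∅ v := by
              rw [← PHitSup_live T hlf hlam hyv' (Set.notMem_empty _)]

lemma hitSup_chain_le {lam : ℝ} (hlam : 0 < lam) {v w y : List A} (hw : ¬ v <+: w)
    (hy : v <+: y) :
    PHitSup T hlf lam {w} ∅ y
      ≤ PHitSup T hlf lam {v} ∅ y * PHitSup T hlf lam {w} ∅ v :=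
  ciSup_le fun t => hit_chain_le T hlf hlam hw t hy

set_option maxHeartbeats 1000000 in
/-- The parent-hitting probability bound, from the uniform subtree escape bound. -/
lemma hitPar_le {lam : ℝ} (hlam : 0 < lam) (hroot : T.numChildren ([] : List A) ≠ 0)
    {α : ℝ} (hα0 : 0 < α) {x : List A} (hx : x ∈ T.mem) (hxne : x ≠ [])
    (hesc : α ≤ (T.subtree x).escProb lam) :
    PHitSup T hlf lam {x.dropLast} ∅ x ≤ 1 - (lam / (1 + lam)) * α := by
  set k : ℕ := T.numChildren x with hk
  have hk1 : 1 ≤ k := one_le_numChildren_of_escPos T hlf hlam hx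
    (lt_of_lt_of_le hα0 hesc)
  have hkR : (1:ℝ) ≤ (k:ℝ) := by exact_mod_cast hk1
  set E : ℝ := (T.subtree x).escProb lam with hE
  have hE0 : 0 ≤ E := escProb_subtree_nonneg T hlf hlam hx
  have hE1 : E ≤ 1 := escProb_subtree_le_one T hlf hlam hx hk1
  have hEα : α ≤ E := hesc
  set g : ℝ := PHitSup T hlf lam {x.dropLast} ∅ x with hg
  have hg0 : 0 ≤ g := PHitSup_nonneg T hlf hlam x
  have hpos : (0:ℝ) < 1 + (k:ℝ) * lam := one_add_mul_pos hlam.le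
  -- children sum of hit-x probabilities
  have hnu : ∀ c ∈ T.childF hlf x, PHitSup T hlf lam {x} ∅ c
      = 1 - PSurInf T hlf lam {x} c := by
    intro c hc
    exact PHitSup_eq_one_sub_PSurInf T hlf hlam hroot ((T.mem_childF hlf).1 hc).2
  have hsumnu : ∑ c ∈ T.childF hlf x, PSurInf T hlf lam {x} c = (k:ℝ) * E := by
    have h1 : E = ∑ c ∈ T.childF hlf x, (1 / (k:ℝ)) * PSurInf T hlf lam {x} c :=
      escProb_subtree_eq T hlf hx hlam
    rw [← Finset.mul_sum] at h1
    have hkne : (k:ℝ) ≠ 0 := by positivity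
    field_simp at h1
    linarith [h1]
  -- harmonicity at x and the chain bound
  have hxpar : x ∉ ({x.dropLast} : Set (List A)) := by
    rw [Set.mem_singleton_iff]
    intro hc
    have := congrArg List.length hc
    rw [List.length_dropLast] at this
    have : x.length ≠ 0 := fun h => hxne (List.length_eq_zero_iff.1 h)
    omega
  have hharm := PHitSup_live T hlf hlam hxpar (Set.notMem_empty x)
  have hnbr : T.nbrF hlf x = T.childF hlf x ∪ {x.dropLast} := by
    rw [nbrF, if_neg hxne]
  have hdisj : x.dropLast ∉ T.childF hlf x := T.dropLast_not_mem_childF hlf x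
  have hsplit : g = (∑ c ∈ T.childF hlf x, T.step lam x c *
      PHitSup T hlf lam {x.dropLast} ∅ c)
      + T.step lam x x.dropLast * PHitSup T hlf lam {x.dropLast} ∅ x.dropLast := by
    rw [hg, hharm, hnbr, Finset.sum_union (by simp [Finset.disjoint_singleton_right, hdisj]),
      Finset.sum_singleton]
  have htgt : PHitSup T hlf lam {x.dropLast} ∅ x.dropLast = 1 :=
    PHitSup_tgt T hlf (Set.mem_singleton _)
  have hchain : ∀ c ∈ T.childF hlf x, PHitSup T hlf lam {x.dropLast} ∅ c
      ≤ PHitSup T hlf lam {x} ∅ c * g := by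
    intro c hc
    refine hitSup_chain_le T hlf hlam ?_ ?_
    · intro hpre
      have h1 := hpre.length_le
      rw [List.length_dropLast] at h1
      have : x.length ≠ 0 := fun h => hxne (List.length_eq_zero_iff.1 h)
      omega
    · obtain ⟨⟨a, rfl⟩, _⟩ := (T.mem_childF hlf).1 hc
      exact x.prefix_append [a]
  -- putting it together
  have hstepc : ∀ c ∈ T.childF hlf x, T.step lam x c = lam / (1 + (k:ℝ) * lam) :=
    fun c hc => T.step_child hlf lam hxne hc
  have hsteppar : T.step lam x x.dropLast = 1 / (1 + (k:ℝ) * lam) :=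
    T.step_parent lam hxne hx
  have hmain : g ≤ 1 / (1 + (k:ℝ) * lam)
      + (lam / (1 + (k:ℝ) * lam)) * ((k:ℝ) * (1 - E)) * g := by
    have hsum : (∑ c ∈ T.childF hlf x, T.step lam x c *
        PHitSup T hlf lam {x.dropLast} ∅ c)
        ≤ (lam / (1 + (k:ℝ) * lam)) * ((k:ℝ) * (1 - E)) * g := by
      calc (∑ c ∈ T.childF hlf x, T.step lam x c * PHitSup T hlf lam {x.dropLast} ∅ c)
          ≤ ∑ c ∈ T.childF hlf x, (lam / (1 + (k:ℝ) * lam)) *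
              ((1 - PSurInf T hlf lam {x} c) * g) := by
            refine Finset.sum_le_sum fun c hc => ?_
            rw [hstepc c hc]
            refine mul_le_mul_of_nonneg_left ?_ (by positivity)
            calc PHitSup T hlf lam {x.dropLast} ∅ c
                ≤ PHitSup T hlf lam {x} ∅ c * g := hchain c hc
              _ = (1 - PSurInf T hlf lam {x} c) * g := by rw [hnu c hc]
        _ = (lam / (1 + (k:ℝ) * lam)) * (((k:ℝ) - (k:ℝ) * E) * g) := by
            rw [← Finset.mul_sum]
            congr 1
            rw [← Finset.sum_mul]
            congr 1
            rw [Finset.sum_sub_distrib, hsumnu, Finset.sum_const, card_childF, ← hk]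
            simp [mul_comm]
        _ = (lam / (1 + (k:ℝ) * lam)) * ((k:ℝ) * (1 - E)) * g := by ring
    calc g = (∑ c ∈ T.childF hlf x, T.step lam x c *
          PHitSup T hlf lam {x.dropLast} ∅ c) + 1 / (1 + (k:ℝ) * lam) := by
          rw [hsplit, htgt, hsteppar, mul_one]
      _ ≤ (lam / (1 + (k:ℝ) * lam)) * ((k:ℝ) * (1 - E)) * g + 1 / (1 + (k:ℝ) * lam) := by
          linarith [hsum]
      _ = 1 / (1 + (k:ℝ) * lam) + (lam / (1 + (k:ℝ) * lam)) * ((k:ℝ) * (1 - E)) * g := by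
          ring
  -- solve the linear inequality
  have hden : (0:ℝ) < 1 + (k:ℝ) * lam * E := by
    have : 0 ≤ (k:ℝ) * lam * E := by positivity
    linarith
  have hgle : g ≤ 1 / (1 + (k:ℝ) * lam * E) := by
    have h4 : g * (1 + (k:ℝ) * lam)
        ≤ (1 / (1 + (k:ℝ) * lam) + (lam / (1 + (k:ℝ) * lam)) * ((k:ℝ) * (1 - E)) * g)
          * (1 + (k:ℝ) * lam) := mul_le_mul_of_nonneg_right hmain hpos.le
    have h5 : (1 / (1 + (k:ℝ) * lam) + (lam / (1 + (k:ℝ) * lam)) * ((k:ℝ) * (1 - E)) * g)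
        * (1 + (k:ℝ) * lam) = 1 + lam * ((k:ℝ) * (1 - E)) * g := by
      first
      | (field_simp; ring)
      | field_simp
    have h7 := h4
    rw [h5] at h7
    have h6 : g * (1 + (k:ℝ) * lam * E) ≤ 1 := by nlinarith [h7]
    rw [le_div_iff₀ hden]
    exact h6
  -- final comparison
  have hfinal : 1 / (1 + (k:ℝ) * lam * E) ≤ 1 - (lam / (1 + lam)) * α := by
    have h1 : lam * E ≤ (k:ℝ) * lam * E := by
      nlinarith [mul_nonneg (mul_nonneg (sub_nonneg.2 hkR) hlam.le) hE0]
    have hd2 : (0:ℝ) < 1 + lam * E := by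
      have : 0 ≤ lam * E := mul_nonneg hlam.le hE0
      linarith
    have h2 : 1 / (1 + (k:ℝ) * lam * E) ≤ 1 / (1 + lam * E) := by
      apply one_div_le_one_div_of_le hd2
      linarith
    have h3 : 1 / (1 + lam * E) = 1 - (lam * E) / (1 + lam * E) := by
      field_simp; ring
    have h4 : (lam / (1 + lam)) * α ≤ (lam * E) / (1 + lam * E) := by
      rw [div_mul_eq_mul_div, div_le_div_iff₀ (by positivity) hd2]
      have hα1 : α ≤ 1 := le_trans hEα hE1
      have f1 : lam * α ≤ lam * E := mul_le_mul_of_nonneg_left hEα hlam.le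
      have f2 : α * E ≤ E := by nlinarith [hE0, hα1]
      have f3 : lam * lam * (α * E) ≤ lam * lam * E :=
        mul_le_mul_of_nonneg_left f2 (mul_nonneg hlam.le hlam.le)
      nlinarith [f1, f3]
    linarith
  calc g ≤ 1 / (1 + (k:ℝ) * lam * E) := hgle
    _ ≤ 1 - (lam / (1 + lam)) * α := hfinal

/-- Ancestor-product bound for the probability of ever hitting the root. -/
lemma hitRoot_le_pow {lam : ℝ} (hlam : 0 < lam) (hroot : T.numChildren ([] : List A) ≠ 0)
    {α : ℝ} (hα0 : 0 < α) (hα : ∀ v ∈ T.mem, α ≤ (T.subtree v).escProb lam) :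
    ∀ (x : List A), x ∈ T.mem →
      PHitSup T hlf lam {([] : List A)} ∅ x ≤ (1 - (lam / (1 + lam)) * α) ^ x.length := by
  have hb0 : 0 ≤ 1 - (lam / (1 + lam)) * α := by
    have hle : (lam / (1 + lam)) * α ≤ 1 := by
      have h1 : lam / (1 + lam) ≤ 1 := by
        rw [div_le_one (by linarith)]
        linarith
      have hα1 : α ≤ 1 := by
        refine le_trans (hα [] T.root_mem) ?_
        refine escProb_subtree_le_one T hlf hlam T.root_mem ?_
        omega
      nlinarith
    linarith
  intro x
  induction x using List.reverseRecOn with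
  | nil =>
      intro _
      rw [List.length_nil, pow_zero]
      exact PHitSup_le_one T hlf hlam []
  | append_singleton w a ih =>
      intro hx
      have hw : w ∈ T.mem := T.parent_mem w a hx
      have hxne : w ++ [a] ≠ [] := by simp
      have hdrop : (w ++ [a]).dropLast = w := by simp
      have hpar : PHitSup T hlf lam {(w ++ [a]).dropLast} ∅ (w ++ [a])
          ≤ 1 - (lam / (1 + lam)) * α :=
        hitPar_le T hlf hlam hroot hα0 hx hxne (hα (w ++ [a]) hx)
      by_cases hwnil : w = []
      · subst hwnil
        rw [show ([] : List A) ++ [a] = [a] from rfl] at *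
        rw [show ([a] : List A).length = 1 from rfl, pow_one]
        rw [hdrop] at hpar
        exact hpar
      · have hchain : PHitSup T hlf lam {([] : List A)} ∅ (w ++ [a])
            ≤ PHitSup T hlf lam {w} ∅ (w ++ [a]) * PHitSup T hlf lam {([] : List A)} ∅ w := by
          refine hitSup_chain_le T hlf hlam ?_ (w.prefix_append [a])
          intro hpre
          exact hwnil (List.prefix_nil.mp hpre)
        calc PHitSup T hlf lam {([] : List A)} ∅ (w ++ [a])
            ≤ PHitSup T hlf lam {w} ∅ (w ++ [a])
              * PHitSup T hlf lam {([] : List A)} ∅ w := hchain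
          _ ≤ (1 - (lam / (1 + lam)) * α) * (1 - (lam / (1 + lam)) * α) ^ w.length := by
              refine mul_le_mul ?_ (ih hw) (PHitSup_nonneg T hlf hlam w) hb0
              rw [hdrop] at hpar
              exact hpar
          _ = (1 - (lam / (1 + lam)) * α) ^ (w ++ [a]).length := by
              rw [List.length_append, List.length_singleton, pow_succ]
              ring
end RTree

end AuxChain

section AuxBall

variable {A : Type*}

namespace RTree

variable (T : RTree A) (hlf : T.LocFin)

include hlf in
lemma sum_step_nbr_one {lam : ℝ} (hlam : 0 < lam) (hroot : T.numChildren ([] : List A) ≠ 0)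
    {y : List A} (hy : y ∈ T.mem) : ∑ z ∈ T.nbrF hlf y, T.step lam y z = 1 := by
  by_cases hynil : y = []
  · subst hynil
    rw [nbrF_nil, sum_step_children_root, if_neg hroot]
  · exact T.sum_step_nbr hlf hlam hy hynil

include hlf in
lemma sum_step_children_ge {lam : ℝ} (hlam : 0 < lam)
    (hroot : T.numChildren ([] : List A) ≠ 0)
    (hnl : ∀ v ∈ T.mem, 1 ≤ T.numChildren v) {y : List A} (hy : y ∈ T.mem) :
    lam / (1 + lam) ≤ ∑ z ∈ T.childF hlf y, T.step lam y z := by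
  have hc01 : lam / (1 + lam) ≤ 1 := by
    rw [div_le_one (by linarith)]
    linarith
  by_cases hynil : y = []
  · subst hynil
    rw [sum_step_children_root, if_neg hroot]
    exact hc01
  · rw [sum_step_children T hlf lam hynil]
    set k := T.numChildren y with hk
    have hk1 : 1 ≤ k := hnl y hy
    have hkR : (1:ℝ) ≤ (k:ℝ) := by exact_mod_cast hk1
    have hpos : (0:ℝ) < 1 + (k:ℝ) * lam := one_add_mul_pos hlam.le
    have h0 : (k:ℝ) * (lam / (1 + (k:ℝ)*lam)) = ((k:ℝ) * lam) / (1 + (k:ℝ)*lam) := by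
      ring
    rw [h0, div_le_div_iff₀ (by linarith) hpos]
    have h5 : lam ≤ (k:ℝ) * lam := by nlinarith
    nlinarith [h5]

/-- The triple identity: hit level `L` before `u`, hit `u` before level `L`,
or survive both. -/
lemma ball_triple {lam : ℝ} (hlam : 0 < lam) (hroot : T.numChildren ([] : List A) ≠ 0)
    {L : ℕ} {u : List A} (hu : u.length < L) :
    ∀ (t : ℕ), ∀ y ∈ T.mem,
      PHit T hlf lam {z : List A | L ≤ z.length} {u} t y
        + PHit T hlf lam {u} {z : List A | L ≤ z.length} t y
        + PSur T hlf lam ({u} ∪ {z : List A | L ≤ z.length}) t y = 1 := by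
  have evalTgt : ∀ (t : ℕ) {y : List A}, L ≤ y.length →
      PHit T hlf lam {z : List A | L ≤ z.length} {u} t y
        + PHit T hlf lam {u} {z : List A | L ≤ z.length} t y
        + PSur T hlf lam ({u} ∪ {z : List A | L ≤ z.length}) t y = 1 := by
    intro t y hyL
    have hyu : y ∉ ({u} : Set (List A)) := by
      rw [Set.mem_singleton_iff]
      rintro rfl
      omega
    rw [PHit_tgt T hlf (show y ∈ {z : List A | L ≤ z.length} from hyL),
      PHit_kill T hlf hyu (show y ∈ {z : List A | L ≤ z.length} from hyL),
      PSur_kill T hlf (Set.mem_union_right _ hyL)]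
    ring
  have evalU : ∀ (t : ℕ),
      PHit T hlf lam {z : List A | L ≤ z.length} {u} t u
        + PHit T hlf lam {u} {z : List A | L ≤ z.length} t u
        + PSur T hlf lam ({u} ∪ {z : List A | L ≤ z.length}) t u = 1 := by
    intro t
    have huL : u ∉ {z : List A | L ≤ z.length} := by
      simp only [Set.mem_setOf_eq]
      omega
    rw [PHit_kill T hlf huL (Set.mem_singleton _), PHit_tgt T hlf (Set.mem_singleton _),
      PSur_kill T hlf (Set.mem_union_left _ (Set.mem_singleton _))]
    ring
  intro t
  induction t with
  | zero =>
      intro y hy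
      by_cases h1 : L ≤ y.length
      · exact evalTgt 0 h1
      · by_cases h2 : y = u
        · subst h2; exact evalU 0
        · have hnt : y ∉ {z : List A | L ≤ z.length} := h1
          have hnu : y ∉ ({u} : Set (List A)) := by simpa using h2
          rw [PHit_zero_live T hlf hnt hnu, PHit_zero_live T hlf hnu hnt,
            PSur_zero_live T hlf (by
              rw [Set.mem_union]
              push_neg
              exact ⟨hnu, hnt⟩)]
          ring
  | succ t ih =>
      intro y hy
      by_cases h1 : L ≤ y.length
      · exact evalTgt (t+1) h1
      · by_cases h2 : y = u
        · subst h2; exact evalU (t+1)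
        · have hnt : y ∉ {z : List A | L ≤ z.length} := h1
          have hnu : y ∉ ({u} : Set (List A)) := by simpa using h2
          rw [PHit_succ_live T hlf hnt hnu, PHit_succ_live T hlf hnu hnt,
            PSur_succ_live T hlf (by
              rw [Set.mem_union]
              push_neg
              exact ⟨hnu, hnt⟩)]
          have hterm : ∀ z ∈ T.nbrF hlf y,
              T.step lam y z * PHit T hlf lam {z' : List A | L ≤ z'.length} {u} t z
                + T.step lam y z * PHit T hlf lam {u} {z' : List A | L ≤ z'.length} t z
                + T.step lam y z *
                    PSur T hlf lam ({u} ∪ {z' : List A | L ≤ z'.length}) t z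
                = T.step lam y z := by
            intro z _
            by_cases hz : T.step lam y z = 0
            · rw [hz]; ring
            · obtain ⟨_, hzm, _⟩ := T.step_ne_zero hlf hz
              have h5 := ih z hzm
              linear_combination (T.step lam y z) * h5
          calc (∑ z ∈ T.nbrF hlf y, T.step lam y z *
                  PHit T hlf lam {z' : List A | L ≤ z'.length} {u} t z)
                + (∑ z ∈ T.nbrF hlf y, T.step lam y z *
                  PHit T hlf lam {u} {z' : List A | L ≤ z'.length} t z)
                + (∑ z ∈ T.nbrF hlf y, T.step lam y z *
                  PSur T hlf lam ({u} ∪ {z' : List A | L ≤ z'.length}) t z)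
              = ∑ z ∈ T.nbrF hlf y, (T.step lam y z *
                  PHit T hlf lam {z' : List A | L ≤ z'.length} {u} t z
                + T.step lam y z * PHit T hlf lam {u} {z' : List A | L ≤ z'.length} t z
                + T.step lam y z *
                    PSur T hlf lam ({u} ∪ {z' : List A | L ≤ z'.length}) t z) := by
                rw [Finset.sum_add_distrib, Finset.sum_add_distrib]
            _ = ∑ z ∈ T.nbrF hlf y, T.step lam y z := Finset.sum_congr rfl hterm
            _ = 1 := sum_step_nbr_one T hlf hlam hroot hy

include hlf in
lemma PSur_not_mem {lam : ℝ} {K : Set (List A)} {y : List A} (hy : y ∉ T.mem)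
    (t : ℕ) : PSur T hlf lam K (t+1) y ≤ 0 := by
  by_cases hk : y ∈ K
  · rw [PSur_kill T hlf hk]
  · rw [PSur_succ_live T hlf hk]
    refine le_of_eq (Finset.sum_eq_zero fun z _ => ?_)
    rw [T.step_eq_zero_of_not_mem_left lam hy z, zero_mul]

/-- Quantitative absorption bound inside the ball. -/
lemma mass_le {lam : ℝ} (hlam : 0 < lam) (hroot : T.numChildren ([] : List A) ≠ 0)
    (hnl : ∀ v ∈ T.mem, 1 ≤ T.numChildren v) {L : ℕ} {u : List A} :
    ∀ (t : ℕ) (y : List A), y ∈ T.mem → y ∉ ({u} : Set (List A)) → y.length < L →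
      L ≤ t + y.length →
      PSur T hlf lam ({u} ∪ {z : List A | L ≤ z.length}) t y
        ≤ 1 - (lam / (1 + lam)) ^ (L - y.length) := by
  have hc0 : 0 < lam / (1 + lam) := by positivity
  have hc01 : lam / (1 + lam) ≤ 1 := by
    rw [div_le_one (by linarith)]
    linarith
  intro t
  induction t with
  | zero =>
      intro y _ _ h1 h2
      omega
  | succ t ih =>
      intro y hy hyu h1 h2
      have hlive : y ∉ ({u} : Set (List A)) ∪ {z : List A | L ≤ z.length} := by
        rw [Set.mem_union]
        push_neg
        exact ⟨hyu, by simpa using h1⟩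
      rw [PSur_succ_live T hlf hlive]
      have hchild : ∀ z ∈ T.childF hlf y,
          PSur T hlf lam ({u} ∪ {z' : List A | L ≤ z'.length}) t z
            ≤ 1 - (lam / (1 + lam)) ^ (L - (y.length + 1)) := by
        intro z hz
        have hzlen : z.length = y.length + 1 := T.length_of_mem_childF hlf hz
        have hzm : z ∈ T.mem := ((T.mem_childF hlf).1 hz).2
        by_cases hzt : L ≤ z.length
        · rw [PSur_kill T hlf (Set.mem_union_right _ hzt)]
          have hLz : L = y.length + 1 := by omega
          rw [hLz]
          simp
        · by_cases hzu : z = u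
          · rw [PSur_kill T hlf (Set.mem_union_left _ (by rw [hzu]; exact rfl))]
            have : (lam / (1+lam)) ^ (L - (y.length + 1)) ≤ 1 :=
              pow_le_one₀ hc0.le hc01
            linarith
          · have h6 := ih z hzm (by simpa using hzu) (by omega) (by omega)
            rw [hzlen] at h6
            exact h6
      have hsplit : T.nbrF hlf y = T.childF hlf y ∪ (if y = [] then ∅ else {y.dropLast}) :=
        rfl
      have hdisj : Disjoint (T.childF hlf y) (if y = [] then ∅ else {y.dropLast}) := by
        by_cases hynil : y = []
        · simp [hynil]
        · rw [if_neg hynil]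
          simp [Finset.disjoint_singleton_right, T.dropLast_not_mem_childF hlf y]
      rw [hsplit, Finset.sum_union hdisj]
      have hS1 : (∑ z ∈ T.childF hlf y, T.step lam y z *
          PSur T hlf lam ({u} ∪ {z' : List A | L ≤ z'.length}) t z)
          ≤ ∑ z ∈ T.childF hlf y, T.step lam y z *
              (1 - (lam / (1 + lam)) ^ (L - (y.length + 1))) := by
        refine Finset.sum_le_sum fun z hz => ?_
        exact mul_le_mul_of_nonneg_left (hchild z hz) (T.step_nonneg hlam.le y z)
      have hS2 : (∑ z ∈ (if y = [] then (∅ : Finset (List A)) else {y.dropLast}),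
          T.step lam y z *
            PSur T hlf lam ({u} ∪ {z' : List A | L ≤ z'.length}) t z)
          ≤ ∑ z ∈ (if y = [] then (∅ : Finset (List A)) else {y.dropLast}),
              T.step lam y z := by
        refine Finset.sum_le_sum fun z hz => ?_
        exact mul_le_of_le_one_right (T.step_nonneg hlam.le y z)
          (PSur_le_one T hlf hlam t z)
      have hsum1 : (∑ z ∈ T.childF hlf y, T.step lam y z) +
          (∑ z ∈ (if y = [] then (∅ : Finset (List A)) else {y.dropLast}),
            T.step lam y z) = 1 := by
        rw [← Finset.sum_union hdisj, ← hsplit]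
        exact sum_step_nbr_one T hlf hlam hroot hy
      have hge := sum_step_children_ge T hlf hlam hroot hnl hy
      have hpow : (lam / (1 + lam)) * (lam / (1+lam)) ^ (L - (y.length + 1))
          = (lam / (1+lam)) ^ (L - y.length) := by
        rw [← pow_succ']
        congr 1
        omega
      have hpw0 : 0 ≤ (lam / (1+lam)) ^ (L - (y.length + 1)) := by positivity
      calc (∑ z ∈ T.childF hlf y, T.step lam y z *
              PSur T hlf lam ({u} ∪ {z' : List A | L ≤ z'.length}) t z)
            + (∑ z ∈ (if y = [] then (∅ : Finset (List A)) else {y.dropLast}),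
              T.step lam y z *
                PSur T hlf lam ({u} ∪ {z' : List A | L ≤ z'.length}) t z)
          ≤ (∑ z ∈ T.childF hlf y, T.step lam y z *
              (1 - (lam / (1 + lam)) ^ (L - (y.length + 1))))
            + (∑ z ∈ (if y = [] then (∅ : Finset (List A)) else {y.dropLast}),
              T.step lam y z) := add_le_add hS1 hS2
        _ = (∑ z ∈ T.childF hlf y, T.step lam y z)
            + (∑ z ∈ (if y = [] then (∅ : Finset (List A)) else {y.dropLast}),
              T.step lam y z)
            - (∑ z ∈ T.childF hlf y, T.step lam y z)
              * (lam / (1 + lam)) ^ (L - (y.length + 1)) := by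
            rw [Finset.sum_mul]
            have : ∀ z ∈ T.childF hlf y, T.step lam y z *
                (1 - (lam / (1 + lam)) ^ (L - (y.length + 1)))
                = T.step lam y z - T.step lam y z *
                    (lam / (1 + lam)) ^ (L - (y.length + 1)) := fun z _ => by ring
            rw [Finset.sum_congr rfl this, Finset.sum_sub_distrib]
            ring
        _ ≤ 1 - (lam / (1+lam)) * (lam / (1+lam)) ^ (L - (y.length + 1)) := by
            rw [hsum1]
            have := mul_le_mul_of_nonneg_right hge hpw0
            linarith
        _ = 1 - (lam / (1+lam)) ^ (L - y.length) := by rw [hpow]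

/-- The walk is absorbed almost surely in the ball. -/
lemma massInf_eq_zero {lam : ℝ} (hlam : 0 < lam)
    (hroot : T.numChildren ([] : List A) ≠ 0)
    (hnl : ∀ v ∈ T.mem, 1 ≤ T.numChildren v) {L : ℕ} (hL : 1 ≤ L) {u : List A}
    (y : List A) :
    PSurInf T hlf lam ({u} ∪ {z : List A | L ≤ z.length}) y = 0 := by
  set K2 : Set (List A) := {u} ∪ {z : List A | L ≤ z.length} with hK2
  have hc0 : 0 < lam / (1 + lam) := by positivity
  have hc01 : lam / (1 + lam) ≤ 1 := by
    rw [div_le_one (by linarith)]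
    linarith
  set b : ℝ := 1 - (lam / (1+lam)) ^ L with hb
  have hb0 : 0 ≤ b := by
    have : (lam / (1+lam)) ^ L ≤ 1 := pow_le_one₀ hc0.le hc01
    simp only [hb]
    linarith
  have hb1 : b < 1 := by
    have : 0 < (lam / (1+lam)) ^ L := by positivity
    simp only [hb]
    linarith
  have honestep : ∀ z : List A, PSur T hlf lam K2 L z ≤ b := by
    intro z
    by_cases hzk : z ∈ K2
    · rw [PSur_kill T hlf hzk]; exact hb0
    · by_cases hzm : z ∈ T.mem
      · have hzu : z ∉ ({u} : Set (List A)) := fun hc => hzk (Set.mem_union_left _ hc)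
        have hzlen : z.length < L := by
          by_contra hcon
          exact hzk (Set.mem_union_right _ (by simpa using hcon))
        have := mass_le T hlf hlam hroot hnl L z hzm hzu hzlen (by omega)
        have hmono : (lam / (1+lam)) ^ L ≤ (lam / (1+lam)) ^ (L - z.length) :=
          pow_le_pow_of_le_one hc0.le hc01 (by omega)
        simp only [hb]
        linarith
      · obtain ⟨L', hL'⟩ : ∃ L', L = L' + 1 := ⟨L - 1, by omega⟩
        rw [hL']
        calc PSur T hlf lam K2 (L'+1) z ≤ 0 := PSur_not_mem T hlf hzm L'
          _ ≤ b := hb0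
  have hclaim : ∀ (a : ℕ) (z : List A), PSur T hlf lam K2 (a * L) z ≤ b ^ a := by
    intro a
    induction a with
    | zero =>
        intro z
        rw [Nat.zero_mul, pow_zero]
        by_cases hzk : z ∈ K2
        · rw [PSur_kill T hlf hzk]; norm_num
        · rw [PSur_zero_live T hlf hzk]
    | succ a ih =>
        intro z
        have hmul : (a+1) * L = L + a * L := by ring
        rw [hmul]
        have h1 : PSur T hlf lam K2 (L + a * L) z
            = Wit T hlf lam (surB K2) (fun w => PSur T hlf lam K2 (a*L) w) L z :=
          Wit_add T hlf _ _ L (a*L) z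
        rw [h1]
        have h2 : Wit T hlf lam (surB K2) (fun w => PSur T hlf lam K2 (a*L) w) L z
            ≤ Wit T hlf lam (surB K2) (fun _ => b ^ a) L z := by
          refine Wit_mono_f0 T hlf _ _ hlam.le (fun w => ih w) L z
        have h3 : (fun _ : List A => b ^ a) = (fun w => b ^ a * (fun _ : List A => (1:ℝ)) w) := by
          funext w
          simp
        have h4 : Wit T hlf lam (surB K2) (fun _ : List A => b ^ a) L z
            = b ^ a * PSur T hlf lam K2 L z := by
          rw [h3]
          exact Wit_smul T hlf (surB K2) _ (fun x c hc => surB_eq_zero x c hc) (b ^ a) L z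
        calc Wit T hlf lam (surB K2) (fun w => PSur T hlf lam K2 (a*L) w) L z
            ≤ Wit T hlf lam (surB K2) (fun _ => b ^ a) L z := h2
          _ = b ^ a * PSur T hlf lam K2 L z := h4
          _ ≤ b ^ a * b := by
              exact mul_le_mul_of_nonneg_left (honestep z) (by positivity)
          _ = b ^ (a+1) := by rw [pow_succ]
  refine le_antisymm ?_ (PSurInf_nonneg T hlf hlam.le y)
  have htend : Filter.Tendsto (fun a : ℕ => b ^ a) Filter.atTop (nhds 0) :=
    tendsto_pow_atTop_nhds_zero_of_lt_one hb0 hb1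
  refine ge_of_tendsto htend (Filter.Eventually.of_forall fun a => ?_)
  calc PSurInf T hlf lam K2 y ≤ PSur T hlf lam K2 (a * L) y :=
        PSurInf_le_PSur T hlf hlam.le (a*L) y
    _ ≤ b ^ a := hclaim a y

/-- In the ball, the two hitting probabilities are complementary. -/
lemma ball_Gs_Hs {lam : ℝ} (hlam : 0 < lam) (hroot : T.numChildren ([] : List A) ≠ 0)
    (hnl : ∀ v ∈ T.mem, 1 ≤ T.numChildren v) {L : ℕ} (hL : 1 ≤ L) {u : List A}
    (hu : u.length < L) {y : List A} (hy : y ∈ T.mem) :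
    PHitSup T hlf lam {z : List A | L ≤ z.length} {u} y
      + PHitSup T hlf lam {u} {z : List A | L ≤ z.length} y = 1 := by
  have ha := PHitSup_tendsto T hlf (Tgt := {z : List A | L ≤ z.length}) (K := {u}) hlam y
  have hb := PHitSup_tendsto T hlf (Tgt := {u}) (K := {z : List A | L ≤ z.length}) hlam y
  have hm := PSurInf_tendsto T hlf (K := {u} ∪ {z : List A | L ≤ z.length}) hlam y
  rw [massInf_eq_zero T hlf hlam hroot hnl hL y] at hm
  have hsum : Filter.Tendsto (fun t =>
      PHit T hlf lam {z : List A | L ≤ z.length} {u} t y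
        + PHit T hlf lam {u} {z : List A | L ≤ z.length} t y
        + PSur T hlf lam ({u} ∪ {z : List A | L ≤ z.length}) t y) Filter.atTop
      (nhds (PHitSup T hlf lam {z : List A | L ≤ z.length} {u} y
        + PHitSup T hlf lam {u} {z : List A | L ≤ z.length} y + 0)) :=
    (ha.add hb).add hm
  have hconst : ∀ t, PHit T hlf lam {z : List A | L ≤ z.length} {u} t y
      + PHit T hlf lam {u} {z : List A | L ≤ z.length} t y
      + PSur T hlf lam ({u} ∪ {z : List A | L ≤ z.length}) t y = 1 :=
    fun t => ball_triple T hlf hlam hroot hu t y hy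
  have := tendsto_nhds_unique (by simpa only [hconst] using hsum :
    Filter.Tendsto (fun _ : ℕ => (1:ℝ)) Filter.atTop
      (nhds (PHitSup T hlf lam {z : List A | L ≤ z.length} {u} y
        + PHitSup T hlf lam {u} {z : List A | L ≤ z.length} y + 0)))
    tendsto_const_nhds
  linarith [this]

end RTree

end AuxBall

section AuxFF

variable {A : Type*}

namespace RTree

/-- The explicit conductance-type recursion. -/
noncomputable def FF (T : RTree A) (hlf : T.LocFin) (lam : ℝ) : ℕ → List A → ℝ
  | 0, _ => 1
  | (n+1), y =>
      lam * (∑ c ∈ T.childF hlf y, FF T hlf lam n c)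
        / (1 + lam * ∑ c ∈ T.childF hlf y, FF T hlf lam n c)

variable (T : RTree A) (hlf : T.LocFin)

lemma FF_zero (lam : ℝ) (y : List A) : FF T hlf lam 0 y = 1 := rfl

lemma FF_succ (lam : ℝ) (n : ℕ) (y : List A) :
    FF T hlf lam (n+1) y
      = lam * (∑ c ∈ T.childF hlf y, FF T hlf lam n c)
        / (1 + lam * ∑ c ∈ T.childF hlf y, FF T hlf lam n c) := rfl

lemma FF_nonneg {lam : ℝ} (hlam : 0 < lam) : ∀ (n : ℕ) (y : List A),
    0 ≤ FF T hlf lam n y := by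
  intro n
  induction n with
  | zero => intro y; rw [FF_zero]; norm_num
  | succ n ih =>
      intro y
      rw [FF_succ]
      have hS : 0 ≤ ∑ c ∈ T.childF hlf y, FF T hlf lam n c :=
        Finset.sum_nonneg fun c _ => ih c
      have h1 : 0 ≤ lam * ∑ c ∈ T.childF hlf y, FF T hlf lam n c :=
        mul_nonneg hlam.le hS
      have h2 : 0 < 1 + lam * ∑ c ∈ T.childF hlf y, FF T hlf lam n c := by linarith
      positivity

lemma FF_le_one {lam : ℝ} (hlam : 0 < lam) (n : ℕ) (y : List A) :
    FF T hlf lam n y ≤ 1 := by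
  cases n with
  | zero => rw [FF_zero]
  | succ n =>
      rw [FF_succ]
      have hS : 0 ≤ ∑ c ∈ T.childF hlf y, FF T hlf lam n c :=
        Finset.sum_nonneg fun c _ => FF_nonneg T hlf hlam n c
      have h1 : 0 ≤ lam * ∑ c ∈ T.childF hlf y, FF T hlf lam n c :=
        mul_nonneg hlam.le hS
      rw [div_le_one (by linarith)]
      linarith

lemma aux_div_mono {x y : ℝ} (hx : 0 ≤ x) (hxy : x ≤ y) : x / (1+x) ≤ y / (1+y) := by
  rw [div_le_div_iff₀ (by linarith) (by linarith)]
  nlinarith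

lemma FF_mono_lam {lam lam' : ℝ} (hlam : 0 < lam) (hll : lam ≤ lam') :
    ∀ (n : ℕ) (y : List A), FF T hlf lam n y ≤ FF T hlf lam' n y := by
  have hlam' : 0 < lam' := lt_of_lt_of_le hlam hll
  intro n
  induction n with
  | zero => intro y; rw [FF_zero, FF_zero]
  | succ n ih =>
      intro y
      rw [FF_succ, FF_succ]
      set S := ∑ c ∈ T.childF hlf y, FF T hlf lam n c with hS
      set S' := ∑ c ∈ T.childF hlf y, FF T hlf lam' n c with hS'
      have hS0 : 0 ≤ S := Finset.sum_nonneg fun c _ => FF_nonneg T hlf hlam n c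
      have hSS : S ≤ S' := Finset.sum_le_sum fun c _ => ih c
      have h1 : lam * S ≤ lam' * S' := by nlinarith
      have h2 : 0 ≤ lam * S := mul_nonneg hlam.le hS0
      exact aux_div_mono h2 h1

lemma FF_contOn (n : ℕ) (y : List A) :
    ContinuousOn (fun l => FF T hlf l n y) (Set.Ioi (0:ℝ)) := by
  induction n generalizing y with
  | zero =>
      simp only [FF_zero]
      exact continuousOn_const
  | succ n ih =>
      simp only [FF_succ]
      have hSc : ContinuousOn (fun l => ∑ c ∈ T.childF hlf y, FF T hlf l n c)
          (Set.Ioi (0:ℝ)) := continuousOn_finset_sum _ fun c _ => ih c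
      refine ContinuousOn.div (continuousOn_id.mul hSc)
        (continuousOn_const.add (continuousOn_id.mul hSc)) ?_
      intro l hl
      have hS0 : 0 ≤ ∑ c ∈ T.childF hlf y, FF T hlf l n c :=
        Finset.sum_nonneg fun c _ => FF_nonneg T hlf hl n c
      have h1 : 0 ≤ l * ∑ c ∈ T.childF hlf y, FF T hlf l n c :=
        mul_nonneg (le_of_lt hl) hS0
      intro hzero
      linarith [hzero.symm.le]

set_option maxHeartbeats 2000000 in
/-- Identification of the ball hitting probabilities with the explicit recursion. -/
lemma FF_eq_hit {lam : ℝ} (hlam : 0 < lam) (hroot : T.numChildren ([] : List A) ≠ 0)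
    (hnl : ∀ v ∈ T.mem, 1 ≤ T.numChildren v) {L : ℕ} (hL : 1 ≤ L) :
    ∀ (n : ℕ) (y : List A), y ∈ T.mem → y ≠ [] → y.length + n = L →
      PHitSup T hlf lam {z : List A | L ≤ z.length} {y.dropLast} y
        = FF T hlf lam n y := by
  intro n
  induction n with
  | zero =>
      intro y hy hyne hlen
      rw [PHitSup_tgt T hlf (show y ∈ {z : List A | L ≤ z.length} from by
        simp only [Set.mem_setOf_eq]; omega)]
      rw [FF_zero]
  | succ n ih =>
      intro y hy hyne hlen
      have hylen : y.length < L := by omega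
      have hylen0 : y.length ≠ 0 := fun h => hyne (List.length_eq_zero_iff.1 h)
      have hyT : y ∉ {z : List A | L ≤ z.length} := by
        simp only [Set.mem_setOf_eq]; omega
      have hypy : y ∉ ({y.dropLast} : Set (List A)) := by
        rw [Set.mem_singleton_iff]
        intro hc
        have := congrArg List.length hc
        rw [List.length_dropLast] at this
        omega
      have hpyT : y.dropLast ∉ {z : List A | L ≤ z.length} := by
        simp only [Set.mem_setOf_eq, List.length_dropLast]
        omega
      set g : ℝ := PHitSup T hlf lam {z : List A | L ≤ z.length} {y.dropLast} y with hgdef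
      have hg0 : 0 ≤ g := PHitSup_nonneg T hlf hlam y
      -- the two-sided strong Markov bound
      have hble : ∀ (t : ℕ) (z : List A), y <+: z → z.length ≤ L →
          PHit T hlf lam {z' : List A | L ≤ z'.length} {y.dropLast} t z
            ≤ PHitSup T hlf lam {z' : List A | L ≤ z'.length} {y} z
              + PHitSup T hlf lam {y} {z' : List A | L ≤ z'.length} z * g := by
        intro t
        induction t with
        | zero =>
            intro z hpre hzlen
            by_cases hzy : z = y
            · subst hzy
              rw [PHitSup_kill T hlf hyT (Set.mem_singleton _),
                PHitSup_tgt T hlf (Set.mem_singleton _), one_mul, zero_add]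
              exact PHit_le_PHitSup T hlf hlam 0 z
            · by_cases hzT : z ∈ {z' : List A | L ≤ z'.length}
              · rw [PHit_tgt T hlf hzT, PHitSup_tgt T hlf hzT]
                have h2 : 0 ≤ PHitSup T hlf lam {y} {z' : List A | L ≤ z'.length} z * g :=
                  mul_nonneg (PHitSup_nonneg T hlf hlam z) hg0
                linarith
              · have hzpy : z ∉ ({y.dropLast} : Set (List A)) := by
                  rw [Set.mem_singleton_iff]
                  intro hc
                  have h3 := hpre.length_le
                  have := congrArg List.length hc
                  rw [List.length_dropLast] at this
                  have : z ≠ y := hzy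
                  have h4 : y.length ≤ z.length := h3
                  omega
                rw [PHit_zero_live T hlf hzT hzpy]
                have h2 : 0 ≤ PHitSup T hlf lam {y} {z' : List A | L ≤ z'.length} z * g :=
                  mul_nonneg (PHitSup_nonneg T hlf hlam z) hg0
                have h1 : 0 ≤ PHitSup T hlf lam {z' : List A | L ≤ z'.length} {y} z :=
                  PHitSup_nonneg T hlf hlam z
                linarith
        | succ t iht =>
            intro z hpre hzlen
            by_cases hzy : z = y
            · subst hzy
              rw [PHitSup_kill T hlf hyT (Set.mem_singleton _),
                PHitSup_tgt T hlf (Set.mem_singleton _), one_mul, zero_add]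
              exact PHit_le_PHitSup T hlf hlam (t+1) z
            · by_cases hzT : z ∈ {z' : List A | L ≤ z'.length}
              · rw [PHit_tgt T hlf hzT, PHitSup_tgt T hlf hzT]
                have h2 : 0 ≤ PHitSup T hlf lam {y} {z' : List A | L ≤ z'.length} z * g :=
                  mul_nonneg (PHitSup_nonneg T hlf hlam z) hg0
                linarith
              · have hzpy : z ∉ ({y.dropLast} : Set (List A)) := by
                  rw [Set.mem_singleton_iff]
                  intro hc
                  have h3 := hpre.length_le
                  have := congrArg List.length hc
                  rw [List.length_dropLast] at this
                  omega
                have hzy' : z ∉ ({y} : Set (List A)) := by simpa using hzy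
                rw [PHit_succ_live T hlf hzT hzpy]
                have hstep : ∀ w ∈ T.nbrF hlf z,
                    T.step lam z w *
                      PHit T hlf lam {z' : List A | L ≤ z'.length} {y.dropLast} t w
                    ≤ T.step lam z w *
                        (PHitSup T hlf lam {z' : List A | L ≤ z'.length} {y} w
                          + PHitSup T hlf lam {y} {z' : List A | L ≤ z'.length} w * g) := by
                  intro w hw
                  refine mul_le_mul_of_nonneg_left ?_ (T.step_nonneg hlam.le z w)
                  have hwpre : y <+: w := prefix_of_mem_nbrF T hlf hpre (Ne.symm hzy) hw
                  have hwlen : w.length ≤ L := by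
                    rw [nbrF, Finset.mem_union] at hw
                    rcases hw with hw | hw
                    · have := T.length_of_mem_childF hlf hw
                      have hzl : z.length < L := by
                        by_contra hcon
                        exact hzT (by simpa using hcon)
                      omega
                    · by_cases hznil : z = []
                      · subst hznil; simp at hw
                      · rw [if_neg hznil, Finset.mem_singleton] at hw
                        subst hw
                        rw [List.length_dropLast]
                        omega
                  exact iht w hwpre hwlen
                calc (∑ w ∈ T.nbrF hlf z, T.step lam z w *
                        PHit T hlf lam {z' : List A | L ≤ z'.length} {y.dropLast} t w)
                    ≤ ∑ w ∈ T.nbrF hlf z, T.step lam z w *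
                        (PHitSup T hlf lam {z' : List A | L ≤ z'.length} {y} w
                          + PHitSup T hlf lam {y} {z' : List A | L ≤ z'.length} w * g) :=
                      Finset.sum_le_sum hstep
                  _ = (∑ w ∈ T.nbrF hlf z, T.step lam z w *
                        PHitSup T hlf lam {z' : List A | L ≤ z'.length} {y} w)
                      + (∑ w ∈ T.nbrF hlf z, T.step lam z w *
                        PHitSup T hlf lam {y} {z' : List A | L ≤ z'.length} w) * g := by
                      rw [Finset.sum_mul, ← Finset.sum_add_distrib]
                      exact Finset.sum_congr rfl fun w _ => by ring
                  _ = PHitSup T hlf lam {z' : List A | L ≤ z'.length} {y} z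
                      + PHitSup T hlf lam {y} {z' : List A | L ≤ z'.length} z * g := by
                      rw [← PHitSup_live T hlf hlam hzT hzy',
                        ← PHitSup_live T hlf hlam hzy' hzT]
      have hbge : ∀ (s : ℕ) (z : List A), y <+: z → z.length ≤ L →
          PHit T hlf lam {z' : List A | L ≤ z'.length} {y} s z
            + PHit T hlf lam {y} {z' : List A | L ≤ z'.length} s z * g
            ≤ PHitSup T hlf lam {z' : List A | L ≤ z'.length} {y.dropLast} z := by
        intro s
        induction s with
        | zero =>
            intro z hpre hzlen
            by_cases hzy : z = y
            · subst hzy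
              rw [PHit_kill T hlf hyT (Set.mem_singleton _),
                PHit_tgt T hlf (Set.mem_singleton _), one_mul, zero_add]
            · by_cases hzT : z ∈ {z' : List A | L ≤ z'.length}
              · rw [PHit_tgt T hlf hzT,
                  PHit_kill T hlf (show z ∉ ({y} : Set (List A)) by simpa using hzy) hzT,
                  zero_mul, add_zero]
                rw [PHitSup_tgt T hlf hzT]
              · have hzy' : z ∉ ({y} : Set (List A)) := by simpa using hzy
                rw [PHit_zero_live T hlf hzT hzy', PHit_zero_live T hlf hzy' hzT,
                  zero_mul, add_zero]
                exact PHitSup_nonneg T hlf hlam z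
        | succ s ihs =>
            intro z hpre hzlen
            by_cases hzy : z = y
            · subst hzy
              rw [PHit_kill T hlf hyT (Set.mem_singleton _),
                PHit_tgt T hlf (Set.mem_singleton _), one_mul, zero_add]
            · by_cases hzT : z ∈ {z' : List A | L ≤ z'.length}
              · rw [PHit_tgt T hlf hzT,
                  PHit_kill T hlf (show z ∉ ({y} : Set (List A)) by simpa using hzy) hzT,
                  zero_mul, add_zero]
                rw [PHitSup_tgt T hlf hzT]
              · have hzy' : z ∉ ({y} : Set (List A)) := by simpa using hzy
                have hzpy : z ∉ ({y.dropLast} : Set (List A)) := by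
                  rw [Set.mem_singleton_iff]
                  intro hc
                  have h3 := hpre.length_le
                  have := congrArg List.length hc
                  rw [List.length_dropLast] at this
                  omega
                rw [PHit_succ_live T hlf hzT hzy', PHit_succ_live T hlf hzy' hzT]
                calc (∑ w ∈ T.nbrF hlf z, T.step lam z w *
                        PHit T hlf lam {z' : List A | L ≤ z'.length} {y} s w)
                      + (∑ w ∈ T.nbrF hlf z, T.step lam z w *
                        PHit T hlf lam {y} {z' : List A | L ≤ z'.length} s w) * g
                    = ∑ w ∈ T.nbrF hlf z, T.step lam z w *
                        (PHit T hlf lam {z' : List A | L ≤ z'.length} {y} s w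
                          + PHit T hlf lam {y} {z' : List A | L ≤ z'.length} s w * g) := by
                      rw [Finset.sum_mul, ← Finset.sum_add_distrib]
                      exact Finset.sum_congr rfl fun w _ => by ring
                  _ ≤ ∑ w ∈ T.nbrF hlf z, T.step lam z w *
                        PHitSup T hlf lam {z' : List A | L ≤ z'.length} {y.dropLast} w := by
                      refine Finset.sum_le_sum fun w hw => ?_
                      refine mul_le_mul_of_nonneg_left ?_ (T.step_nonneg hlam.le z w)
                      have hwpre : y <+: w := prefix_of_mem_nbrF T hlf hpre (Ne.symm hzy) hw
                      have hwlen : w.length ≤ L := by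
                        rw [nbrF, Finset.mem_union] at hw
                        rcases hw with hw | hw
                        · have := T.length_of_mem_childF hlf hw
                          have hzl : z.length < L := by
                            by_contra hcon
                            exact hzT (by simpa using hcon)
                          omega
                        · by_cases hznil : z = []
                          · subst hznil; simp at hw
                          · rw [if_neg hznil, Finset.mem_singleton] at hw
                            subst hw
                            rw [List.length_dropLast]
                            omega
                      exact ihs w hwpre hwlen
                  _ = PHitSup T hlf lam {z' : List A | L ≤ z'.length} {y.dropLast} z := by
                      rw [← PHitSup_live T hlf hlam hzT hzpy]
      -- the (β) equality for children
      have hcomb : ∀ c ∈ T.childF hlf y,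
          PHitSup T hlf lam {z' : List A | L ≤ z'.length} {y.dropLast} c
            = FF T hlf lam n c + (1 - FF T hlf lam n c) * g := by
        intro c hc
        have hcm : c ∈ T.mem := ((T.mem_childF hlf).1 hc).2
        have hcne : c ≠ [] := ne_nil_of_mem_childF T hlf hc
        have hclen : c.length = y.length + 1 := T.length_of_mem_childF hlf hc
        have hcd : c.dropLast = y := dropLast_of_mem_childF T hlf hc
        have hpre : y <+: c := by
          obtain ⟨⟨a, rfl⟩, _⟩ := (T.mem_childF hlf).1 hc
          exact y.prefix_append [a]
        have hcL : c.length ≤ L := by omega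
        have hih : PHitSup T hlf lam {z' : List A | L ≤ z'.length} {y} c
            = FF T hlf lam n c := by
          have := ih c hcm hcne (by omega)
          rwa [hcd] at this
        have hGH : PHitSup T hlf lam {z' : List A | L ≤ z'.length} {y} c
            + PHitSup T hlf lam {y} {z' : List A | L ≤ z'.length} c = 1 :=
          ball_Gs_Hs T hlf hlam hroot hnl hL (by omega) hcm
        have hHy : PHitSup T hlf lam {y} {z' : List A | L ≤ z'.length} c
            = 1 - FF T hlf lam n c := by
          rw [← hih]
          linarith [hGH]
        apply le_antisymm
        · have h1 := ciSup_le (fun t => hble t c hpre hcL)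
          rw [hih, hHy] at h1
          exact h1
        · have htt : Filter.Tendsto (fun s =>
              PHit T hlf lam {z' : List A | L ≤ z'.length} {y} s c
                + PHit T hlf lam {y} {z' : List A | L ≤ z'.length} s c * g)
              Filter.atTop
              (nhds (PHitSup T hlf lam {z' : List A | L ≤ z'.length} {y} c
                + PHitSup T hlf lam {y} {z' : List A | L ≤ z'.length} c * g)) :=
            (PHitSup_tendsto T hlf hlam c).add
              ((PHitSup_tendsto T hlf hlam c).mul_const g)
          have h2 := le_of_tendsto htt
            (Filter.Eventually.of_forall fun s => hbge s c hpre hcL)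
          rw [hih, hHy] at h2
          exact h2
      -- the harmonic identity at y and the algebra
      set k : ℕ := T.numChildren y with hkdef
      set S : ℝ := ∑ c ∈ T.childF hlf y, FF T hlf lam n c with hSdef
      have hS0 : 0 ≤ S := Finset.sum_nonneg fun c _ => FF_nonneg T hlf hlam n c
      have hpos : (0:ℝ) < 1 + (k:ℝ) * lam := one_add_mul_pos hlam.le
      have halpha : g = lam / (1 + (k:ℝ)*lam) * (S + ((k:ℝ) - S) * g) := by
        have hnbr : T.nbrF hlf y = T.childF hlf y ∪ {y.dropLast} := by
          rw [nbrF, if_neg hyne]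
        have hdisj : Disjoint (T.childF hlf y) ({y.dropLast} : Finset (List A)) := by
          simp [Finset.disjoint_singleton_right, T.dropLast_not_mem_childF hlf y]
        calc g = ∑ z ∈ T.nbrF hlf y, T.step lam y z *
                PHitSup T hlf lam {z' : List A | L ≤ z'.length} {y.dropLast} z :=
              PHitSup_live T hlf hlam hyT hypy
          _ = (∑ c ∈ T.childF hlf y, T.step lam y c *
                PHitSup T hlf lam {z' : List A | L ≤ z'.length} {y.dropLast} c)
              + T.step lam y y.dropLast *
                PHitSup T hlf lam {z' : List A | L ≤ z'.length} {y.dropLast} y.dropLast := by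
              rw [hnbr, Finset.sum_union hdisj, Finset.sum_singleton]
          _ = ∑ c ∈ T.childF hlf y, (lam / (1 + (k:ℝ)*lam)) *
                (FF T hlf lam n c + (1 - FF T hlf lam n c) * g) := by
              rw [PHitSup_kill T hlf hpyT (Set.mem_singleton _), mul_zero, add_zero]
              refine Finset.sum_congr rfl fun c hc => ?_
              rw [T.step_child hlf lam hyne hc, hcomb c hc]
          _ = (lam / (1 + (k:ℝ)*lam)) *
                (S + ((k:ℝ) - S) * g) := by
              rw [← Finset.mul_sum]
              congr 1
              rw [Finset.sum_add_distrib]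
              congr 1
              rw [← Finset.sum_mul]
              congr 1
              rw [Finset.sum_sub_distrib, Finset.sum_const, card_childF, ← hkdef]
              simp [hSdef]
      have hkey : g * (1 + lam * S) = lam * S := by
        have h1 : g * (1 + (k:ℝ)*lam)
            = (lam / (1 + (k:ℝ)*lam) * (S + ((k:ℝ) - S) * g)) * (1 + (k:ℝ)*lam) := by
          rw [← halpha]
        have h2 : (lam / (1 + (k:ℝ)*lam) * (S + ((k:ℝ) - S) * g)) * (1 + (k:ℝ)*lam)
            = lam * (S + ((k:ℝ) - S) * g) := by
          field_simp
        rw [h2] at h1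
        linear_combination h1
      rw [FF_succ, ← hSdef]
      have hden : (0:ℝ) < 1 + lam * S := by
        have : 0 ≤ lam * S := mul_nonneg hlam.le hS0
        linarith
      rw [eq_div_iff hden.ne']
      exact hkey

end RTree

end AuxFF

section AuxSandwich

variable {A : Type*}

namespace RTree

variable (T : RTree A) (hlf : T.LocFin)

lemma sur_le_G_add_mass {lam : ℝ} (hlam : 0 < lam) {L : ℕ} (hL : 1 ≤ L) :
    ∀ (t : ℕ), ∀ z ∈ T.mem,
      PSur T hlf lam {([] : List A)} t z
        ≤ PHit T hlf lam {z' : List A | L ≤ z'.length} {([] : List A)} t z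
          + PSur T hlf lam ({([] : List A)} ∪ {z' : List A | L ≤ z'.length}) t z := by
  have hnilT : ([] : List A) ∉ {z' : List A | L ≤ z'.length} := by
    simp only [Set.mem_setOf_eq, List.length_nil]
    omega
  intro t
  induction t with
  | zero =>
      intro z hz
      by_cases hznil : z = []
      · subst hznil
        rw [PSur_kill T hlf (Set.mem_singleton _),
          PHit_kill T hlf hnilT (Set.mem_singleton _),
          PSur_kill T hlf (Set.mem_union_left _ (Set.mem_singleton _))]
        norm_num
      · by_cases hzT : z ∈ {z' : List A | L ≤ z'.length}
        · rw [PHit_tgt T hlf hzT]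
          have h1 := PSur_le_one T hlf hlam (K := {([] : List A)}) 0 z
          have h2 := PSur_nonneg T hlf hlam.le
            (K := {([] : List A)} ∪ {z' : List A | L ≤ z'.length}) 0 z
          linarith
        · have hz1 : z ∉ ({([] : List A)} : Set (List A)) := by simpa using hznil
          rw [PSur_zero_live T hlf hz1, PHit_zero_live T hlf hzT hz1,
            PSur_zero_live T hlf (by
              rw [Set.mem_union]
              push_neg
              exact ⟨hz1, hzT⟩)]
          norm_num
  | succ t ih =>
      intro z hz
      by_cases hznil : z = []
      · subst hznil
        rw [PSur_kill T hlf (Set.mem_singleton _),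
          PHit_kill T hlf hnilT (Set.mem_singleton _),
          PSur_kill T hlf (Set.mem_union_left _ (Set.mem_singleton _))]
        norm_num
      · by_cases hzT : z ∈ {z' : List A | L ≤ z'.length}
        · rw [PHit_tgt T hlf hzT]
          have h1 := PSur_le_one T hlf hlam (K := {([] : List A)}) (t+1) z
          have h2 := PSur_nonneg T hlf hlam.le
            (K := {([] : List A)} ∪ {z' : List A | L ≤ z'.length}) (t+1) z
          linarith
        · have hz1 : z ∉ ({([] : List A)} : Set (List A)) := by simpa using hznil
          rw [PSur_succ_live T hlf hz1, PHit_succ_live T hlf hzT hz1,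
            PSur_succ_live T hlf (by
              rw [Set.mem_union]
              push_neg
              exact ⟨hz1, hzT⟩)]
          rw [← Finset.sum_add_distrib]
          refine Finset.sum_le_sum fun w _ => ?_
          by_cases hw : T.step lam z w = 0
          · rw [hw]
            norm_num
          · obtain ⟨_, hwm, _⟩ := T.step_ne_zero hlf hw
            have := ih w hwm
            nlinarith [this, T.step_nonneg hlam.le z w]

lemma hitRoot_le_H_add {lam : ℝ} (hlam : 0 < lam)
    (hroot : T.numChildren ([] : List A) ≠ 0) {α : ℝ} (hα0 : 0 < α)
    (hα : ∀ v ∈ T.mem, α ≤ (T.subtree v).escProb lam) {L : ℕ} (hL : 1 ≤ L) :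
    ∀ (t : ℕ), ∀ z ∈ T.mem, z.length ≤ L →
      PHit T hlf lam {([] : List A)} ∅ t z
        ≤ PHitSup T hlf lam {([] : List A)} {z' : List A | L ≤ z'.length} z
          + PHitSup T hlf lam {z' : List A | L ≤ z'.length} {([] : List A)} z
            * (1 - (lam / (1 + lam)) * α) ^ L := by
  set Bo : ℝ := (1 - (lam / (1 + lam)) * α) ^ L with hBo
  have hb0 : 0 ≤ 1 - (lam / (1 + lam)) * α := by
    have h1 : lam / (1 + lam) ≤ 1 := by
      rw [div_le_one (by linarith)]
      linarith
    have hα1 : α ≤ 1 := by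
      refine le_trans (hα [] T.root_mem) ?_
      refine escProb_subtree_le_one T hlf hlam T.root_mem ?_
      omega
    nlinarith [hα0.le, div_nonneg hlam.le (by linarith : (0:ℝ) ≤ 1 + lam)]
  have hBo0 : 0 ≤ Bo := pow_nonneg hb0 L
  intro t
  induction t with
  | zero =>
      intro z hz hzlen
      by_cases hznil : z = []
      · subst hznil
        rw [PHitSup_tgt T hlf (Set.mem_singleton _)]
        have h1 := PHit_le_one T hlf hlam (Tgt := {([] : List A)}) (K := (∅ : Set (List A)))
          0 ([] : List A)
        have h2 : 0 ≤ PHitSup T hlf lam {z' : List A | L ≤ z'.length}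
            {([] : List A)} ([] : List A) * Bo :=
          mul_nonneg (PHitSup_nonneg T hlf hlam _) hBo0
        linarith
      · have hz1 : z ∉ ({([] : List A)} : Set (List A)) := by simpa using hznil
        rw [PHit_zero_live T hlf hz1 (Set.notMem_empty _)]
        have h1 := PHitSup_nonneg T hlf hlam
          (Tgt := {([] : List A)}) (K := {z' : List A | L ≤ z'.length}) z
        have h2 : 0 ≤ PHitSup T hlf lam {z' : List A | L ≤ z'.length} {([] : List A)} z
            * Bo := mul_nonneg (PHitSup_nonneg T hlf hlam _) hBo0
        linarith
  | succ t ih =>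
      intro z hz hzlen
      by_cases hznil : z = []
      · subst hznil
        rw [PHitSup_tgt T hlf (Set.mem_singleton _)]
        have h1 := PHit_le_one T hlf hlam (Tgt := {([] : List A)}) (K := (∅ : Set (List A)))
          (t+1) ([] : List A)
        have h2 : 0 ≤ PHitSup T hlf lam {z' : List A | L ≤ z'.length}
            {([] : List A)} ([] : List A) * Bo :=
          mul_nonneg (PHitSup_nonneg T hlf hlam _) hBo0
        linarith
      · have hz1 : z ∉ ({([] : List A)} : Set (List A)) := by simpa using hznil
        by_cases hzT : L ≤ z.length
        · have hzL : z.length = L := by omega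
          have h1 : PHit T hlf lam {([] : List A)} ∅ (t+1) z
              ≤ (1 - (lam / (1 + lam)) * α) ^ z.length := by
            refine le_trans (PHit_le_PHitSup T hlf hlam (t+1) z) ?_
            exact hitRoot_le_pow T hlf hlam hroot hα0 hα z hz
          rw [hzL] at h1
          have h2 : PHitSup T hlf lam {([] : List A)} {z' : List A | L ≤ z'.length} z
              = 0 := PHitSup_kill T hlf (by simpa using hznil) (by simpa using hzT)
          have h3 : PHitSup T hlf lam {z' : List A | L ≤ z'.length} {([] : List A)} z
              = 1 := PHitSup_tgt T hlf (by simpa using hzT)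
          rw [h2, h3, one_mul, zero_add]
          exact h1
        · have hzT' : z ∉ {z' : List A | L ≤ z'.length} := by simpa using hzT
          rw [PHit_succ_live T hlf hz1 (Set.notMem_empty _)]
          have hterm : ∀ w ∈ T.nbrF hlf z,
              T.step lam z w * PHit T hlf lam {([] : List A)} ∅ t w
                ≤ T.step lam z w *
                    (PHitSup T hlf lam {([] : List A)} {z' : List A | L ≤ z'.length} w
                      + PHitSup T hlf lam {z' : List A | L ≤ z'.length} {([] : List A)} w
                        * Bo) := by
            intro w hw
            by_cases hws : T.step lam z w = 0
            · rw [hws, zero_mul, zero_mul]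
            · obtain ⟨_, hwm, _⟩ := T.step_ne_zero hlf hws
              refine mul_le_mul_of_nonneg_left ?_ (T.step_nonneg hlam.le z w)
              have hwlen : w.length ≤ L := by
                rw [nbrF, Finset.mem_union] at hw
                rcases hw with hw | hw
                · have := T.length_of_mem_childF hlf hw
                  omega
                · by_cases hznil2 : z = []
                  · subst hznil2; simp at hw
                  · rw [if_neg hznil2, Finset.mem_singleton] at hw
                    subst hw
                    rw [List.length_dropLast]
                    omega
              exact ih w hwm hwlen
          calc (∑ w ∈ T.nbrF hlf z, T.step lam z w *
                  PHit T hlf lam {([] : List A)} ∅ t w)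
              ≤ ∑ w ∈ T.nbrF hlf z, T.step lam z w *
                  (PHitSup T hlf lam {([] : List A)} {z' : List A | L ≤ z'.length} w
                    + PHitSup T hlf lam {z' : List A | L ≤ z'.length} {([] : List A)} w
                      * Bo) := Finset.sum_le_sum hterm
            _ = (∑ w ∈ T.nbrF hlf z, T.step lam z w *
                  PHitSup T hlf lam {([] : List A)} {z' : List A | L ≤ z'.length} w)
                + (∑ w ∈ T.nbrF hlf z, T.step lam z w *
                  PHitSup T hlf lam {z' : List A | L ≤ z'.length} {([] : List A)} w)
                  * Bo := by
                rw [Finset.sum_mul, ← Finset.sum_add_distrib]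
                exact Finset.sum_congr rfl fun w _ => by ring
            _ = PHitSup T hlf lam {([] : List A)} {z' : List A | L ≤ z'.length} z
                + PHitSup T hlf lam {z' : List A | L ≤ z'.length} {([] : List A)} z
                  * Bo := by
                rw [← PHitSup_live T hlf hlam hz1 hzT',
                  ← PHitSup_live T hlf hlam hzT' hz1]

/-- The sandwich for the survival probability of each child of the root. -/
lemma nu_sandwich {lam : ℝ} (hlam : 0 < lam)
    (hroot : T.numChildren ([] : List A) ≠ 0)
    (hnl : ∀ v ∈ T.mem, 1 ≤ T.numChildren v) {α : ℝ} (hα0 : 0 < α)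
    (hα : ∀ v ∈ T.mem, α ≤ (T.subtree v).escProb lam) {L : ℕ} (hL : 1 ≤ L)
    {c : List A} (hc : c ∈ T.childF hlf []) :
    |PSurInf T hlf lam {([] : List A)} c - FF T hlf lam (L-1) c|
      ≤ (1 - (lam / (1 + lam)) * α) ^ L := by
  set Bo : ℝ := (1 - (lam / (1 + lam)) * α) ^ L with hBo
  have hcm : c ∈ T.mem := ((T.mem_childF hlf).1 hc).2
  have hcne : c ≠ [] := ne_nil_of_mem_childF T hlf hc
  have hclen : c.length = 1 := by
    have := T.length_of_mem_childF hlf hc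
    simpa using this
  have hcd : c.dropLast = [] := by
    have := dropLast_of_mem_childF T hlf hc
    simpa using this
  have hGFF : PHitSup T hlf lam {z : List A | L ≤ z.length} {([] : List A)} c
      = FF T hlf lam (L-1) c := by
    have := FF_eq_hit T hlf hlam hroot hnl hL (L-1) c hcm hcne (by omega)
    rwa [hcd] at this
  set G : ℝ := PHitSup T hlf lam {z : List A | L ≤ z.length} {([] : List A)} c with hG
  set nu : ℝ := PSurInf T hlf lam {([] : List A)} c with hnu
  -- upper bound
  have hupper : nu ≤ G := by
    have htt : Filter.Tendsto (fun t =>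
        PHit T hlf lam {z' : List A | L ≤ z'.length} {([] : List A)} t c
          + PSur T hlf lam ({([] : List A)} ∪ {z' : List A | L ≤ z'.length}) t c)
        Filter.atTop (nhds (G + 0)) := by
      have h2 := PSurInf_tendsto T hlf
        (K := {([] : List A)} ∪ {z' : List A | L ≤ z'.length}) hlam c
      rw [massInf_eq_zero T hlf hlam hroot hnl hL c] at h2
      exact (PHitSup_tendsto T hlf hlam c).add h2
    have h3 : G + 0 = G := by ring
    rw [h3] at htt
    refine ge_of_tendsto htt (Filter.Eventually.of_forall fun t => ?_)
    calc nu ≤ PSur T hlf lam {([] : List A)} t c := PSurInf_le_PSur T hlf hlam.le t c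
      _ ≤ _ := sur_le_G_add_mass T hlf hlam hL t c hcm
  -- lower bound
  have hb0 : 0 ≤ 1 - (lam / (1 + lam)) * α := by
    have h1 : lam / (1 + lam) ≤ 1 := by
      rw [div_le_one (by linarith)]
      linarith
    have hα1 : α ≤ 1 := by
      refine le_trans (hα [] T.root_mem) ?_
      refine escProb_subtree_le_one T hlf hlam T.root_mem ?_
      omega
    nlinarith [hα0.le, div_nonneg hlam.le (by linarith : (0:ℝ) ≤ 1 + lam)]
  have hBo0 : 0 ≤ Bo := pow_nonneg hb0 L
  have hlower : G - Bo ≤ nu := by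
    have hcomp : PHitSup T hlf lam {([] : List A)} ∅ c = 1 - nu :=
      PHitSup_eq_one_sub_PSurInf T hlf hlam hroot hcm
    have hH : PHitSup T hlf lam {([] : List A)} {z' : List A | L ≤ z'.length} c = 1 - G := by
      have := ball_Gs_Hs T hlf hlam hroot hnl hL
        (u := ([] : List A)) (by simp only [List.length_nil]; omega) hcm
      rw [← hG] at this
      linarith
    have hbound : PHitSup T hlf lam {([] : List A)} ∅ c ≤ (1 - G) + G * Bo := by
      rw [← hH]
      refine ciSup_le fun t => ?_
      have := hitRoot_le_H_add T hlf hlam hroot hα0 hα hL t c hcm (by omega)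
      rw [← hG] at this
      exact this
    have hG1 : G ≤ 1 := PHitSup_le_one T hlf hlam c
    have hG0 : 0 ≤ G := PHitSup_nonneg T hlf hlam c
    have h4 : G * Bo ≤ Bo := by nlinarith
    rw [hcomp] at hbound
    linarith
  rw [abs_le]
  constructor
  · linarith [hGFF, hlower]
  · linarith [hGFF, hupper, hBo0]

/-- The finite-depth explicit approximation of the escape probability. -/
noncomputable def EL (T : RTree A) (hlf : T.LocFin) (lam : ℝ) (L : ℕ) : ℝ :=
  ∑ y ∈ T.childF hlf [], (1 / (T.numChildren ([] : List A) : ℝ)) * FF T hlf lam (L-1) y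

lemma EL_mono_lam {lam lam' : ℝ} (hlam : 0 < lam) (hll : lam ≤ lam') (L : ℕ) :
    EL T hlf lam L ≤ EL T hlf lam' L := by
  refine Finset.sum_le_sum fun y _ => ?_
  refine mul_le_mul_of_nonneg_left ?_ (by positivity)
  exact FF_mono_lam T hlf hlam hll (L-1) y

lemma EL_contOn (L : ℕ) : ContinuousOn (fun l => EL T hlf l L) (Set.Ioi (0:ℝ)) :=
  continuousOn_finset_sum _ fun y _ => continuousOn_const.mul (FF_contOn T hlf (L-1) y)

/-- The main sandwich: the escape probability is within `(1-α₁)^L` of the explicit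
continuous monotone approximation. -/
lemma escProb_sandwich {lam : ℝ} (hlam : 0 < lam)
    (hroot : T.numChildren ([] : List A) ≠ 0)
    (hnl : ∀ v ∈ T.mem, 1 ≤ T.numChildren v) {α : ℝ} (hα0 : 0 < α)
    (hα : ∀ v ∈ T.mem, α ≤ (T.subtree v).escProb lam) {L : ℕ} (hL : 1 ≤ L) :
    |T.escProb lam - EL T hlf lam L| ≤ (1 - (lam / (1 + lam)) * α) ^ L := by
  set Bo : ℝ := (1 - (lam / (1 + lam)) * α) ^ L with hBo
  rw [escProb_eq T hlf hlam, nbrF_nil, EL]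
  have hstep : ∀ y ∈ T.childF hlf [], T.step lam [] y
      = 1 / (T.numChildren ([] : List A) : ℝ) :=
    fun y hy => T.step_child_root hlf lam hy
  have hdiff : (∑ y ∈ T.childF hlf [], T.step lam [] y * PSurInf T hlf lam {([] : List A)} y)
      - (∑ y ∈ T.childF hlf [], (1 / (T.numChildren ([] : List A) : ℝ))
          * FF T hlf lam (L-1) y)
      = ∑ y ∈ T.childF hlf [], (1 / (T.numChildren ([] : List A) : ℝ))
          * (PSurInf T hlf lam {([] : List A)} y - FF T hlf lam (L-1) y) := by
    rw [← Finset.sum_sub_distrib]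
    refine Finset.sum_congr rfl fun y hy => ?_
    rw [hstep y hy]
    ring
  rw [hdiff]
  have hkR : (0:ℝ) < (T.numChildren ([] : List A) : ℝ) := by
    have : 0 < T.numChildren ([] : List A) := Nat.pos_of_ne_zero hroot
    exact_mod_cast this
  calc |∑ y ∈ T.childF hlf [], (1 / (T.numChildren ([] : List A) : ℝ))
        * (PSurInf T hlf lam {([] : List A)} y - FF T hlf lam (L-1) y)|
      ≤ ∑ y ∈ T.childF hlf [], |(1 / (T.numChildren ([] : List A) : ℝ))
        * (PSurInf T hlf lam {([] : List A)} y - FF T hlf lam (L-1) y)| :=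
        Finset.abs_sum_le_sum_abs _ _
    _ ≤ ∑ y ∈ T.childF hlf [], (1 / (T.numChildren ([] : List A) : ℝ)) * Bo := by
        refine Finset.sum_le_sum fun y hy => ?_
        rw [abs_mul, abs_of_nonneg (by positivity :
          (0:ℝ) ≤ 1 / (T.numChildren ([] : List A) : ℝ))]
        refine mul_le_mul_of_nonneg_left ?_ (by positivity)
        exact nu_sandwich T hlf hlam hroot hnl hα0 hα hL hy
    _ = Bo := by
        rw [Finset.sum_const, card_childF, nsmul_eq_mul]
        field_simp

end RTree

end AuxSandwich

section AuxFinal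

variable {A : Type*}

namespace RTree

lemma eq_of_mem_eq {S1 S2 : RTree A} (h : S1.mem = S2.mem) : S1 = S2 := by
  cases S1
  cases S2
  simp only at h
  subst h
  rfl

lemma subtree_subtree (T : RTree A) (v w : List A) :
    (T.subtree v).subtree w = T.subtree (v ++ w) := by
  refine eq_of_mem_eq ?_
  ext l
  show l ∈ insert [] {l' : List A | w ++ l' ∈ (T.subtree v).mem}
    ↔ l ∈ insert [] {l' : List A | (v ++ w) ++ l' ∈ T.mem}
  simp only [Set.mem_insert_iff, Set.mem_setOf_eq, subtree, List.append_assoc]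
  constructor
  · rintro (rfl | h)
    · left; rfl
    · rcases h with h | h
      · left
        exact (List.append_eq_nil_iff.mp h).2
      · right; exact h
  · rintro (rfl | h)
    · left; rfl
    · right; right; exact h

lemma lambdaC_nonneg (T : RTree A) : 0 ≤ T.lambdaC := by
  have hbr : 0 ≤ T.br := by
    apply Real.sSup_nonneg
    intro x hx
    exact le_trans zero_le_one hx.1
  rw [lambdaC]
  exact div_nonneg zero_le_one hbr

variable (T : RTree A) (hlf : T.LocFin)

include hlf in
/-- Monotonicity of the escape probability in the bias parameter, given uniform
subtree escape bounds at both parameters. -/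
lemma escProb_mono (hroot : T.numChildren ([] : List A) ≠ 0)
    {lam lam' : ℝ} (h0' : 0 < lam') (hll : lam' ≤ lam)
    {α α' : ℝ} (hα0 : 0 < α) (hα'0 : 0 < α')
    (hα : ∀ v ∈ T.mem, α ≤ (T.subtree v).escProb lam)
    (hα' : ∀ v ∈ T.mem, α' ≤ (T.subtree v).escProb lam') :
    T.escProb lam' ≤ T.escProb lam := by
  have h0 : 0 < lam := lt_of_lt_of_le h0' hll
  have hnl : ∀ v ∈ T.mem, 1 ≤ T.numChildren v := fun v hv =>
    one_le_numChildren_of_escPos T hlf h0' hv (lt_of_lt_of_le hα'0 (hα' v hv))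
  have hα1 : α ≤ 1 := le_trans (hα [] T.root_mem)
    (escProb_subtree_le_one T hlf h0 T.root_mem (hnl [] T.root_mem))
  have hα'1 : α' ≤ 1 := le_trans (hα' [] T.root_mem)
    (escProb_subtree_le_one T hlf h0' T.root_mem (hnl [] T.root_mem))
  set b1 : ℝ := 1 - (lam / (1+lam)) * α with hb1def
  set b2 : ℝ := 1 - (lam' / (1+lam')) * α' with hb2def
  have hq1 : 0 < lam / (1+lam) := by positivity
  have hq1' : lam / (1+lam) ≤ 1 := by
    rw [div_le_one (by linarith)]; linarith
  have hq2 : 0 < lam' / (1+lam') := by positivity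
  have hq2' : lam' / (1+lam') ≤ 1 := by
    rw [div_le_one (by linarith)]; linarith
  have hb10 : 0 ≤ b1 := by
    simp only [hb1def]
    nlinarith
  have hb11 : b1 < 1 := by
    simp only [hb1def]
    nlinarith
  have hb20 : 0 ≤ b2 := by
    simp only [hb2def]
    nlinarith
  have hb21 : b2 < 1 := by
    simp only [hb2def]
    nlinarith
  have key : ∀ L : ℕ, 1 ≤ L →
      T.escProb lam' ≤ T.escProb lam + (b1 ^ L + b2 ^ L) := by
    intro L hL
    have s1 := escProb_sandwich T hlf h0 hroot hnl hα0 hα hL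
    have s2 := escProb_sandwich T hlf h0' hroot hnl hα'0 hα' hL
    have hELm := EL_mono_lam T hlf h0' hll L
    have a1 := abs_le.1 s1
    have a2 := abs_le.1 s2
    have e1 : T.escProb lam - EL T hlf lam L ≥ -(b1 ^ L) := by linarith [a1.1]
    have e2 : T.escProb lam' - EL T hlf lam' L ≤ b2 ^ L := a2.2
    linarith
  have htend : Filter.Tendsto (fun L : ℕ => T.escProb lam + (b1 ^ L + b2 ^ L))
      Filter.atTop (nhds (T.escProb lam + (0 + 0))) :=
    tendsto_const_nhds.add ((tendsto_pow_atTop_nhds_zero_of_lt_one hb10 hb11).add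
      (tendsto_pow_atTop_nhds_zero_of_lt_one hb20 hb21))
  have h5 : T.escProb lam' ≤ T.escProb lam + (0 + 0) := by
    refine ge_of_tendsto htend ?_
    rw [Filter.eventually_atTop]
    exact ⟨1, fun L hL => key L hL⟩
  linarith [h5]

end RTree

end AuxFinal

/-- For any infinite, locally finite rooted tree `T` that is uniformly
transient, the function `λ ↦ C(λ,T)` is left continuous on `(λ_c(T), +∞)`. -/
theorem conductance_left_continuous_of_uniformly_transient (A : Type) (T : RTree A)
    (hinf : T.mem.Infinite) (hlf : T.LocFin)
    (hut : T.UniformlyTransient)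
    (lam : ℝ) (hlam : T.lambdaC < lam) :
    ContinuousWithinAt (fun x => T.conductance x) (Set.Iic lam) lam := by
  classical
  have hlc0 : 0 ≤ T.lambdaC := T.lambdaC_nonneg
  have hlam0 : 0 < lam := lt_of_le_of_lt hlc0 hlam
  set lam0 : ℝ := (T.lambdaC + lam) / 2 with hlam0def
  have h1 : T.lambdaC < lam0 := by simp only [hlam0def]; linarith
  have h2 : lam0 < lam := by simp only [hlam0def]; linarith
  have h3 : 0 < lam0 := lt_of_le_of_lt hlc0 h1
  obtain ⟨αb, hαb0, hαb⟩ := hut lam0 h1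
  have hroot : T.numChildren ([] : List A) ≠ 0 := RTree.root_child_ne_zero T hlf hinf
  -- transport of subtree bounds to subtrees of subtrees
  have hsubt : ∀ (v : List A), v ∈ T.mem → ∀ (μ : ℝ) (β : ℝ),
      (∀ u ∈ T.mem, β ≤ (T.subtree u).escProb μ) →
      ∀ w ∈ (T.subtree v).mem, β ≤ ((T.subtree v).subtree w).escProb μ := by
    intro v hv μ β hβ w hw
    rw [RTree.subtree_subtree]
    refine hβ (v ++ w) ?_
    by_cases hwn : w = []
    · subst hwn; simpa using hv
    · exact (RTree.mem_subtree_iff T v hwn).1 hw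
  -- uniform subtree escape bound on [lam0, lam]
  have huni : ∀ μ : ℝ, lam0 ≤ μ → μ ≤ lam →
      ∀ v ∈ T.mem, αb ≤ (T.subtree v).escProb μ := by
    intro μ hμ1 hμ2 v hv
    have hμlc : T.lambdaC < μ := lt_of_lt_of_le h1 hμ1
    obtain ⟨αm, hαm0, hαm⟩ := hut μ hμlc
    have hSroot : (T.subtree v).numChildren ([] : List A) ≠ 0 := by
      have h6 : (T.subtree v).numChildren ([] : List A) = T.numChildren (v ++ []) :=
        RTree.subtree_numChildren T v []
      rw [List.append_nil] at h6
      rw [h6]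
      have h5 : 1 ≤ T.numChildren v :=
        RTree.one_le_numChildren_of_escPos T hlf h3 hv
          (lt_of_lt_of_le hαb0 (hαb v hv))
      omega
    have hSlf := RTree.subtree_locFin T hlf v
    have hmono := RTree.escProb_mono (T.subtree v) hSlf hSroot h3 hμ1
      hαm0 hαb0 (hsubt v hv μ αm hαm) (hsubt v hv lam0 αb hαb)
    exact le_trans (hαb v hv) hmono
  -- uniform base of the geometric error bound
  have hnlroot : 1 ≤ T.numChildren ([] : List A) := by omega
  have hαb1 : αb ≤ 1 := le_trans (hαb [] T.root_mem)
    (RTree.escProb_subtree_le_one T hlf h3 T.root_mem hnlroot)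
  set a1 : ℝ := (lam0 / (1 + lam0)) * αb with ha1
  have ha10 : 0 < a1 := by positivity
  have hbase : ∀ μ : ℝ, lam0 ≤ μ → 1 - (μ / (1 + μ)) * αb ≤ 1 - a1 := by
    intro μ hμ1
    have hμ0 : 0 < μ := lt_of_lt_of_le h3 hμ1
    have hmono : lam0 / (1 + lam0) ≤ μ / (1 + μ) := by
      rw [div_le_div_iff₀ (by linarith) (by linarith)]
      nlinarith
    simp only [ha1]
    nlinarith [hαb0.le]
  have hbase0 : ∀ μ : ℝ, lam0 ≤ μ → 0 ≤ 1 - (μ / (1 + μ)) * αb := by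
    intro μ hμ1
    have hμ0 : 0 < μ := lt_of_lt_of_le h3 hμ1
    have hq : μ / (1 + μ) ≤ 1 := by
      rw [div_le_one (by linarith)]
      linarith
    have hq0 : 0 < μ / (1 + μ) := by positivity
    nlinarith
  have ha1le : 0 ≤ 1 - a1 := by
    have := hbase0 lam0 le_rfl
    have := hbase lam0 le_rfl
    linarith
  have ha11 : 1 - a1 < 1 := by linarith
  -- the uniform sandwich on [lam0, lam]
  have hsand : ∀ μ : ℝ, lam0 ≤ μ → μ ≤ lam → ∀ L : ℕ, 1 ≤ L →
      |T.escProb μ - RTree.EL T hlf μ L| ≤ (1 - a1) ^ L := by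
    intro μ hμ1 hμ2 L hL
    have hμ0 : 0 < μ := lt_of_lt_of_le h3 hμ1
    have hnl : ∀ v ∈ T.mem, 1 ≤ T.numChildren v := fun v hv =>
      RTree.one_le_numChildren_of_escPos T hlf hμ0 hv
        (lt_of_lt_of_le hαb0 (huni μ hμ1 hμ2 v hv))
    have hS := RTree.escProb_sandwich T hlf hμ0 hroot hnl hαb0 (huni μ hμ1 hμ2) hL
    refine le_trans hS ?_
    exact pow_le_pow_left₀ (hbase0 μ hμ1) (hbase μ hμ1) L
  -- left continuity of the escape probability
  have hesc : ContinuousWithinAt (fun x => T.escProb x) (Set.Iic lam) lam := by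
    rw [Metric.continuousWithinAt_iff]
    intro ε hε
    obtain ⟨L0, hL0⟩ := exists_pow_lt_of_lt_one (show (0:ℝ) < ε/4 by linarith) ha11
    set L := max L0 1 with hLdef
    have hL1 : 1 ≤ L := le_max_right _ _
    have hLbound : (1 - a1) ^ L < ε/4 := lt_of_le_of_lt
      (pow_le_pow_of_le_one ha1le (by linarith) (le_max_left _ _)) hL0
    have hELc : ContinuousAt (fun l => RTree.EL T hlf l L) lam :=
      (RTree.EL_contOn T hlf L).continuousAt (Ioi_mem_nhds hlam0)
    rw [Metric.continuousAt_iff] at hELc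
    obtain ⟨δ1, hδ1, hδ1c⟩ := hELc (ε/4) (by linarith)
    refine ⟨min δ1 (lam - lam0), lt_min hδ1 (by linarith), ?_⟩
    intro x hx hdist
    have hd2 : |x - lam| < lam - lam0 := by
      have := lt_of_lt_of_le hdist (min_le_right _ _)
      rwa [Real.dist_eq] at this
    have hx1 : lam0 ≤ x := by
      have := (abs_lt.1 hd2).1
      linarith
    have hx2 : x ≤ lam := hx
    have hdel1 : dist x lam < δ1 := lt_of_lt_of_le hdist (min_le_left _ _)
    have hEL := hδ1c hdel1
    rw [Real.dist_eq] at hEL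
    have s1 := hsand x hx1 hx2 L hL1
    have s2 := hsand lam h2.le le_rfl L hL1
    rw [Real.dist_eq]
    have tri : |T.escProb x - T.escProb lam|
        ≤ |T.escProb x - RTree.EL T hlf x L|
          + |RTree.EL T hlf x L - RTree.EL T hlf lam L|
          + |RTree.EL T hlf lam L - T.escProb lam| := by
      have t1 := abs_sub_le (T.escProb x) (RTree.EL T hlf x L) (T.escProb lam)
      have t2 := abs_sub_le (RTree.EL T hlf x L) (RTree.EL T hlf lam L) (T.escProb lam)
      linarith
    have s2' : |RTree.EL T hlf lam L - T.escProb lam| ≤ (1 - a1) ^ L := by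
      rw [abs_sub_comm]
      exact s2
    calc |T.escProb x - T.escProb lam|
        ≤ |T.escProb x - RTree.EL T hlf x L|
          + |RTree.EL T hlf x L - RTree.EL T hlf lam L|
          + |RTree.EL T hlf lam L - T.escProb lam| := tri
      _ < ε/4 + ε/4 + ε/4 := by
          refine add_lt_add (add_lt_add_of_le_of_lt ?_ hEL) ?_
          · exact le_trans s1 hLbound.le
          · exact lt_of_le_of_lt s2' hLbound
      _ < ε := by linarith
  have hfun : (fun x => T.conductance x)
      = fun x => x * (T.numChildren ([] : List A) : ℝ) * T.escProb x := rfl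
  rw [hfun]
  exact (continuousWithinAt_id.mul continuousWithinAt_const).mul hesc
end
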